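/- arXiv:math/0612807 — 5 statements merged into one kernel-verified Lean document; each statement's English description precedes it below -/
import Mathlib

section
/- Let τ ∈ ℂ with Im τ > 0 and let u, v ∈ ℝ be not both integers. Then there exist constants C > 0 and w₀ > 0 such that for all s ∈ [1,2] and all real numbers p > w ≥ w₀, the partial lattice sum h(w,s) := Σ_{(m,n)∈ℤ², w < |mτ+n|² < p} e^{2πi(mu+nv)} / |mτ+n|^{2s} satisfies |h(w,s)| ≤ C · w^{1/2 − s}; in particular the bound is uniform in s ∈ [1,2] and in p. -/
open Finset

noncomputable def cabs : AbsoluteValue ℂ ℝ := NormedField.toAbsoluteValue ℂ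

lemma norm_eq_cabs (z : ℂ) : ‖z‖ = cabs z := rfl



lemma one_sub_pos_abs (z : ℂ) (hz1 : z ≠ 1) : 0 < cabs (1 - z) := by
  rw [AbsoluteValue.pos_iff]
  intro h
  exact hz1 (by rw [sub_eq_zero] at h; exact h.symm)

lemma geom_bound (z : ℂ) (hz : cabs z = 1) (hz1 : z ≠ 1) (k : ℕ) :
    cabs (∑ i ∈ Finset.range k, z ^ i) ≤ 2 / cabs (1 - z) := by
  have h1z := one_sub_pos_abs z hz1
  have heq : cabs (z - 1) = cabs (1 - z) := by
    rw [← cabs.map_neg, neg_sub]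
  rw [geom_sum_eq hz1, map_div₀, heq]
  rw [div_le_div_iff₀ h1z h1z]
  have h2 : cabs (z ^ k - 1) ≤ 2 := by
    calc cabs (z ^ k - 1) ≤ cabs (z ^ k) + cabs 1 :=
      cabs.sub_le_add _ _
    _ = 2 := by rw [map_pow, hz, one_pow, map_one]; norm_num
  nlinarith [h1z.le, cabs.nonneg (z ^ k - 1)]

lemma abel_nat (z : ℂ) (hz : cabs z = 1) (hz1 : z ≠ 1) (B : ℝ) (hB : 0 ≤ B)
    (f : ℕ → ℝ) (k : ℕ)
    (hmono : ∀ i, i + 1 < k → f i ≤ f (i + 1))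
    (hrange : ∀ i, i < k → 0 ≤ f i ∧ f i ≤ B) :
    cabs (∑ i ∈ Finset.range k, f i • z ^ i) ≤ 4 * B / cabs (1 - z) := by
  have h1z := one_sub_pos_abs z hz1
  rcases Nat.eq_zero_or_pos k with hk | hk
  · subst hk; simp only [Finset.range_zero, Finset.sum_empty, map_zero]; positivity
  rw [Finset.sum_range_by_parts]
  have habs : ∀ j : ℕ, cabs (∑ i ∈ Finset.range j, z ^ i) ≤ 2 / cabs (1 - z) :=
    geom_bound z hz hz1
  have key : ∀ i ∈ Finset.range (k - 1), f i ≤ f (i + 1) := fun i hi =>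
    hmono i (by simp at hi; omega)
  have hsmul : ∀ (r : ℝ) (x : ℂ), cabs (r • x) = |r| * cabs x := by
    intro r x
    rw [← norm_eq_cabs, ← norm_eq_cabs, norm_smul, Real.norm_eq_abs]
  calc cabs (f (k - 1) • ∑ i ∈ Finset.range k, z ^ i -
        ∑ i ∈ Finset.range (k - 1), (f (i + 1) - f i) • ∑ j ∈ Finset.range (i + 1), z ^ j)
      ≤ cabs (f (k - 1) • ∑ i ∈ Finset.range k, z ^ i) +
        cabs (∑ i ∈ Finset.range (k - 1), (f (i + 1) - f i) • ∑ j ∈ Finset.range (i + 1), z ^ j) :=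
        cabs.sub_le_add _ _
    _ ≤ B * (2 / cabs (1 - z)) +
        ∑ i ∈ Finset.range (k - 1), (f (i + 1) - f i) * (2 / cabs (1 - z)) := by
        refine add_le_add ?_ ?_
        · rw [hsmul]
          have h1 : |f (k - 1)| ≤ B := by
            rcases hrange (k - 1) (by omega) with ⟨h0, h1⟩
            rw [abs_of_nonneg h0]; exact h1
          exact mul_le_mul h1 (habs k) (cabs.nonneg _) hB
        · refine le_trans (cabs.sum_le _ _) (Finset.sum_le_sum ?_)
          intro i hi
          rw [hsmul, abs_of_nonneg (by linarith [key i hi])]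
          exact mul_le_mul_of_nonneg_left (habs (i + 1)) (by linarith [key i hi])
    _ ≤ 4 * B / cabs (1 - z) := by
        rw [← Finset.sum_mul, Finset.sum_range_sub (fun i => f i)]
        have h0 : 0 ≤ f 0 := (hrange 0 hk).1
        have hk1 : f (k - 1) ≤ B := (hrange (k - 1) (by omega)).2
        rw [div_eq_mul_inv, div_eq_mul_inv]
        have hpos : (0:ℝ) < (cabs (1 - z))⁻¹ := by positivity
        nlinarith



lemma sum_Ico_int {M : Type*} [AddCommMonoid M] (F : ℤ → M) (a b : ℤ) :
    ∑ n ∈ Finset.Ico a b, F n = ∑ i ∈ Finset.range (b - a).toNat, F (a + i) := by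
  refine Finset.sum_nbij' (fun n => (n - a).toNat) (fun i => a + (i : ℤ)) ?_ ?_ ?_ ?_ ?_ <;>
    intros <;> simp_all [Finset.mem_Ico, Finset.mem_range] <;> omega

lemma abel_int (z : ℂ) (hz : cabs z = 1) (hz1 : z ≠ 1) (B : ℝ) (hB : 0 ≤ B)
    (g : ℤ → ℝ) (a b : ℤ)
    (hmono : ∀ n, a ≤ n → n + 1 < b → g n ≤ g (n + 1))
    (hrange : ∀ n, a ≤ n → n < b → 0 ≤ g n ∧ g n ≤ B) :
    cabs (∑ n ∈ Finset.Ico a b, g n • z ^ n) ≤ 4 * B / cabs (1 - z) := by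
  have hz0 : z ≠ 0 := by
    intro h; rw [h] at hz; simp at hz
  rw [sum_Ico_int (fun n => g n • z ^ n) a b]
  have : ∀ i : ℕ, g (a + (i:ℤ)) • z ^ (a + (i:ℤ)) = z ^ a * (g (a + (i:ℤ)) • z ^ i) := by
    intro i
    rw [zpow_add₀ hz0, zpow_natCast, mul_smul_comm]
  rw [Finset.sum_congr rfl (fun i _ => this i), ← Finset.mul_sum, map_mul, map_zpow₀, hz,
    one_zpow, one_mul]
  exact abel_nat z hz hz1 B hB (fun i => g (a + i)) _
    (fun i hi => by
      have := hmono (a + i) (by omega) (by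
        have : ((b - a).toNat : ℤ) = b - a ∨ ((b-a).toNat : ℤ) = 0 := by omega
        omega)
      push_cast
      convert this using 2
      ring)
    (fun i hi => hrange (a + i) (by omega) (by omega))

lemma geom_bound_int (z : ℂ) (hz : cabs z = 1) (hz1 : z ≠ 1) (a b : ℤ) :
    cabs (∑ n ∈ Finset.Ico a b, z ^ n) ≤ 2 / cabs (1 - z) := by
  have hz0 : z ≠ 0 := by intro h; rw [h] at hz; simp at hz
  rw [sum_Ico_int (fun n => z ^ n) a b]
  have : ∀ i : ℕ, z ^ (a + (i:ℤ)) = z ^ a * z ^ i := by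
    intro i; rw [zpow_add₀ hz0, zpow_natCast]
  rw [Finset.sum_congr rfl (fun i _ => this i), ← Finset.mul_sum, map_mul, map_zpow₀, hz,
    one_zpow, one_mul]
  exact geom_bound z hz hz1 _

lemma abel_int_anti (z : ℂ) (hz : cabs z = 1) (hz1 : z ≠ 1) (B : ℝ) (hB : 0 ≤ B)
    (g : ℤ → ℝ) (a b : ℤ)
    (hanti : ∀ n, a ≤ n → n + 1 < b → g (n + 1) ≤ g n)
    (hrange : ∀ n, a ≤ n → n < b → 0 ≤ g n ∧ g n ≤ B) :
    cabs (∑ n ∈ Finset.Ico a b, g n • z ^ n) ≤ 6 * B / cabs (1 - z) := by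
  have h1z := one_sub_pos_abs z hz1
  have key : ∀ n ∈ Finset.Ico a b, g n • z ^ n = B • z ^ n - (B - g n) • z ^ n := by
    intro n _
    rw [← sub_smul]
    ring_nf
  rw [Finset.sum_congr rfl key, Finset.sum_sub_distrib]
  calc cabs (∑ n ∈ Finset.Ico a b, B • z ^ n - ∑ n ∈ Finset.Ico a b, (B - g n) • z ^ n)
      ≤ cabs (∑ n ∈ Finset.Ico a b, B • z ^ n) +
        cabs (∑ n ∈ Finset.Ico a b, (B - g n) • z ^ n) := cabs.sub_le_add _ _
    _ ≤ B * (2 / cabs (1 - z)) + 4 * B / cabs (1 - z) := by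
        refine add_le_add ?_ ?_
        · rw [← Finset.smul_sum]
          have : cabs (B • ∑ n ∈ Finset.Ico a b, z ^ n)
              = |B| * cabs (∑ n ∈ Finset.Ico a b, z ^ n) := by
            rw [← norm_eq_cabs, ← norm_eq_cabs, norm_smul, Real.norm_eq_abs]
          rw [this, abs_of_nonneg hB]
          exact mul_le_mul_of_nonneg_left (geom_bound_int z hz hz1 a b) hB
        · refine abel_int z hz hz1 B hB _ a b ?_ ?_
          · intro n hn hnb
            have := hanti n hn hnb
            linarith
          · intro n hn hnb
            rcases hrange n hn hnb with ⟨h0, h1⟩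
            constructor <;> linarith
    _ ≤ 6 * B / cabs (1 - z) := by
        rw [mul_div_assoc'] at *
        rw [← add_div]
        gcongr
        linarith



lemma inner_bound (z : ℂ) (hz : cabs z = 1) (hz1 : z ≠ 1)
    (s w p : ℝ) (hs : 0 ≤ s) (hw : 0 < w)
    (A e q₀ : ℝ) (hA : 0 < A) (hq0 : 0 ≤ q₀)
    (Q : ℤ → ℝ) (hQ : ∀ n : ℤ, Q n = A * ((n : ℝ) + e) ^ 2 + q₀)
    (a b : ℤ) :
    cabs (∑ n ∈ Finset.Ico a b,
      (if w < Q n ∧ Q n < p then (Q n) ^ (-s) else 0) • z ^ n)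
      ≤ 20 * (max w q₀) ^ (-s) / cabs (1 - z) := by
  have h1z := one_sub_pos_abs z hz1
  set B : ℝ := (max w q₀) ^ (-s) with hBdef
  have hmaxpos : 0 < max w q₀ := lt_of_lt_of_le hw (le_max_left _ _)
  have hBpos : 0 < B := Real.rpow_pos_of_pos hmaxpos _
  set f : ℤ → ℝ := fun n => if w < Q n ∧ Q n < p then (Q n) ^ (-s) else 0 with hfdef
  set α : ℤ → ℝ := fun n => if w < Q n then B else 0 with hadef
  set β : ℤ → ℝ := fun n => α n - f n with hbdef
  have hQge : ∀ n : ℤ, q₀ ≤ Q n := by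
    intro n; rw [hQ]; nlinarith [sq_nonneg ((n:ℝ) + e)]
  have hfle : ∀ n : ℤ, w < Q n → (Q n) ^ (-s) ≤ B := by
    intro n hn
    exact Real.rpow_le_rpow_of_nonpos hmaxpos (max_le hn.le (hQge n)) (by linarith)
  have hf : ∀ n, 0 ≤ f n ∧ f n ≤ B := by
    intro n
    simp only [hfdef]
    split_ifs with h
    · exact ⟨Real.rpow_nonneg (le_trans hq0 (hQge n)) _, hfle n h.1⟩
    · exact ⟨le_refl 0, hBpos.le⟩
  have hα : ∀ n, 0 ≤ α n ∧ α n ≤ B := by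
    intro n; simp only [hadef]; split_ifs <;> simp [hBpos.le]
  have hβ : ∀ n, 0 ≤ β n ∧ β n ≤ B := by
    intro n
    have h1 := (hf n).1
    have h2 := (hf n).2
    by_cases hc : w < Q n
    · have hab : α n = B := by simp only [hadef]; rw [if_pos hc]
      simp only [hbdef, hab]
      constructor <;> linarith
    · have hα0 : α n = 0 := by simp only [hadef]; rw [if_neg hc]
      have hf0 : f n = 0 := by
        simp only [hfdef]; rw [if_neg (fun hcc => hc hcc.1)]
      simp only [hbdef, hα0, hf0]
      norm_num
      exact hBpos.le
  have hαmono : ∀ n n' : ℤ, Q n ≤ Q n' → α n ≤ α n' := by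
    intro n n' hqq
    simp only [hadef]
    split_ifs with h1 h2
    · exact le_rfl
    · exact absurd (lt_of_lt_of_le h1 hqq) h2
    · exact hBpos.le
    · exact le_rfl
  have hβmono : ∀ n n' : ℤ, Q n ≤ Q n' → β n ≤ β n' := by
    intro n n' hqq
    by_cases h1 : w < Q n
    · have h2 : w < Q n' := lt_of_lt_of_le h1 hqq
      have ha1 : α n = B := by simp only [hadef]; rw [if_pos h1]
      have ha2 : α n' = B := by simp only [hadef]; rw [if_pos h2]
      have key : f n' ≤ f n := by
        simp only [hfdef]
        split_ifs with c1 c2 c2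
        · exact Real.rpow_le_rpow_of_nonpos (by linarith) hqq (by linarith)
        · exact absurd ⟨h1, lt_of_le_of_lt hqq c1.2⟩ c2
        · exact Real.rpow_nonneg (le_trans hq0 (hQge n)) _
        · exact le_rfl
      simp only [hbdef, ha1, ha2]
      linarith
    · have hα0 : α n = 0 := by simp only [hadef]; rw [if_neg h1]
      have hf0 : f n = 0 := by
        simp only [hfdef]; rw [if_neg (fun hcc => h1 hcc.1)]
      have : β n = 0 := by simp only [hbdef, hα0, hf0]; ring
      rw [this]
      exact (hβ n').1
  -- Q step monotonicity
  have hQstep : ∀ n : ℤ, -e ≤ (n:ℝ) → Q n ≤ Q (n + 1) := by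
    intro n hn
    rw [hQ, hQ]
    push_cast
    nlinarith
  have hQstep' : ∀ n : ℤ, ((n:ℝ) + 1) + e ≤ 0 → Q (n + 1) ≤ Q n := by
    intro n hn
    rw [hQ, hQ]
    push_cast
    nlinarith
  rcases le_or_gt b a with hba | hab
  · rw [Finset.Ico_eq_empty (by omega : ¬ a < b), Finset.sum_empty, map_zero]
    positivity
  set n₁ : ℤ := max a (min (Int.ceil (-e)) b) with hn1def
  have ha1 : a ≤ n₁ := le_max_left _ _
  have h1b : n₁ ≤ b := max_le hab.le (min_le_right _ _)
  have hsplit := Finset.sum_union (f := fun n => f n • z ^ n)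
    (Finset.Ico_disjoint_Ico_consecutive a n₁ b)
  rw [Finset.Ico_union_Ico_eq_Ico ha1 h1b] at hsplit
  have hfsum : (∑ n ∈ Finset.Ico a b, (if w < Q n ∧ Q n < p then (Q n) ^ (-s) else 0) • z ^ n)
      = ∑ n ∈ Finset.Ico a n₁, f n • z ^ n + ∑ n ∈ Finset.Ico n₁ b, f n • z ^ n := hsplit
  rw [hfsum]
  -- decompose f = α - β on each piece
  have hdecomp : ∀ (c d : ℤ), ∑ n ∈ Finset.Ico c d, f n • z ^ n
      = ∑ n ∈ Finset.Ico c d, α n • z ^ n - ∑ n ∈ Finset.Ico c d, β n • z ^ n := by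
    intro c d
    rw [← Finset.sum_sub_distrib]
    refine Finset.sum_congr rfl fun n _ => ?_
    rw [← sub_smul]
    simp only [hbdef]
    ring_nf
  -- left piece : antitone
  have hleftQ : ∀ n : ℤ, a ≤ n → n + 1 < n₁ → Q (n + 1) ≤ Q n := by
    intro n hn hn1
    apply hQstep'
    have h1 : n₁ ≤ Int.ceil (-e) := by
      have : a < n₁ := by omega
      have : n₁ = min (Int.ceil (-e)) b := by omega
      omega
    have h2 : (n:ℤ) + 1 ≤ Int.ceil (-e) - 1 := by omega
    have h3 : ((n:ℝ) + 1) ≤ (Int.ceil (-e) : ℝ) - 1 := by exact_mod_cast h2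
    have h4 : (Int.ceil (-e) : ℝ) < -e + 1 := Int.ceil_lt_add_one _
    linarith
  have hrightQ : ∀ n : ℤ, n₁ ≤ n → n + 1 < b → Q n ≤ Q (n + 1) := by
    intro n hn hn1
    apply hQstep
    have h1 : Int.ceil (-e) ≤ n₁ := by
      rcases le_or_gt (Int.ceil (-e)) b with h | h
      · have : min (Int.ceil (-e)) b = Int.ceil (-e) := min_eq_left h
        omega
      · exfalso; omega
    have h2 : -e ≤ (Int.ceil (-e) : ℝ) := Int.le_ceil _
    have h3 : (Int.ceil (-e) : ℝ) ≤ (n : ℝ) := by exact_mod_cast le_trans h1 hn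
    linarith
  have habs2 : ∀ (c d : ℤ) (g : ℤ → ℝ), True := fun _ _ _ => trivial
  have hL : cabs (∑ n ∈ Finset.Ico a n₁, f n • z ^ n)
      ≤ 12 * B / cabs (1 - z) := by
    rw [hdecomp]
    calc cabs (∑ n ∈ Finset.Ico a n₁, α n • z ^ n - ∑ n ∈ Finset.Ico a n₁, β n • z ^ n)
        ≤ cabs (∑ n ∈ Finset.Ico a n₁, α n • z ^ n)
          + cabs (∑ n ∈ Finset.Ico a n₁, β n • z ^ n) := cabs.sub_le_add _ _
      _ ≤ 6 * B / cabs (1 - z) + 6 * B / cabs (1 - z) := by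
          refine add_le_add ?_ ?_
          · exact abel_int_anti z hz hz1 B hBpos.le α a n₁
              (fun n hn hn1 => hαmono _ _ (hleftQ n hn hn1))
              (fun n _ _ => hα n)
          · exact abel_int_anti z hz hz1 B hBpos.le β a n₁
              (fun n hn hn1 => hβmono _ _ (hleftQ n hn hn1))
              (fun n _ _ => hβ n)
      _ = 12 * B / cabs (1 - z) := by ring
  have hR : cabs (∑ n ∈ Finset.Ico n₁ b, f n • z ^ n)
      ≤ 8 * B / cabs (1 - z) := by
    rw [hdecomp]
    calc cabs (∑ n ∈ Finset.Ico n₁ b, α n • z ^ n - ∑ n ∈ Finset.Ico n₁ b, β n • z ^ n)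
        ≤ cabs (∑ n ∈ Finset.Ico n₁ b, α n • z ^ n)
          + cabs (∑ n ∈ Finset.Ico n₁ b, β n • z ^ n) := cabs.sub_le_add _ _
      _ ≤ 4 * B / cabs (1 - z) + 4 * B / cabs (1 - z) := by
          refine add_le_add ?_ ?_
          · exact abel_int z hz hz1 B hBpos.le α n₁ b
              (fun n hn hn1 => hαmono _ _ (hrightQ n hn hn1))
              (fun n _ _ => hα n)
          · exact abel_int z hz hz1 B hBpos.le β n₁ b
              (fun n hn hn1 => hβmono _ _ (hrightQ n hn hn1))
              (fun n _ _ => hβ n)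
      _ = 8 * B / cabs (1 - z) := by ring
  calc cabs (∑ n ∈ Finset.Ico a n₁, f n • z ^ n + ∑ n ∈ Finset.Ico n₁ b, f n • z ^ n)
      ≤ cabs (∑ n ∈ Finset.Ico a n₁, f n • z ^ n)
        + cabs (∑ n ∈ Finset.Ico n₁ b, f n • z ^ n) := cabs.add_le _ _
    _ ≤ 12 * B / cabs (1 - z) + 8 * B / cabs (1 - z) := add_le_add hL hR
    _ = 20 * B / cabs (1 - z) := by ring



lemma sum_Ico_int' {M : Type*} [AddCommMonoid M] (F : ℤ → M) (a b : ℤ) :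
    ∑ n ∈ Finset.Ico a b, F n = ∑ i ∈ Finset.range (b - a).toNat, F (a + i) := by
  refine Finset.sum_nbij' (fun n => (n - a).toNat) (fun i => a + (i : ℤ)) ?_ ?_ ?_ ?_ ?_ <;>
    intros <;> simp_all [Finset.mem_Ico, Finset.mem_range] <;> omega

lemma telescope_sum (a M : ℤ) (ha : 1 ≤ a) :
    ∑ m ∈ Finset.Icc a M, (1/(m:ℝ) - 1/((m:ℝ)+1)) ≤ 1/(a:ℝ) := by
  have : Finset.Icc a M = Finset.Ico a (M+1) := by
    ext x; simp [Finset.mem_Icc, Finset.mem_Ico]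
  rw [this, sum_Ico_int' (fun m => 1/(m:ℝ) - 1/((m:ℝ)+1)) a (M+1)]
  have key : ∀ i : ℕ, (1/((a:ℝ)+(i:ℝ)) - 1/(((a:ℝ)+(i:ℝ))+1))
      = (fun j : ℕ => 1/((a:ℝ)+(j:ℝ))) i - (fun j : ℕ => 1/((a:ℝ)+(j:ℝ))) (i+1) := by
    intro i; push_cast; ring_nf
  have cast1 : ∀ i : ℕ, (1/(((a + (i:ℤ)):ℤ):ℝ) - 1/((((a + (i:ℤ)):ℤ):ℝ)+1))
      = (1/((a:ℝ)+(i:ℝ)) - 1/(((a:ℝ)+(i:ℝ))+1)) := by intro i; push_cast; ring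
  rw [Finset.sum_congr rfl (fun i _ => cast1 i)]
  calc ∑ i ∈ Finset.range (M + 1 - a).toNat, (1/((a:ℝ)+(i:ℝ)) - 1/(((a:ℝ)+(i:ℝ))+1))
      = ∑ i ∈ Finset.range (M + 1 - a).toNat,
          ((fun j : ℕ => 1/((a:ℝ)+(j:ℝ))) i - (fun j : ℕ => 1/((a:ℝ)+(j:ℝ))) (i+1)) :=
        Finset.sum_congr rfl (fun i _ => key i)
    _ = 1/((a:ℝ)+(0:ℕ)) - 1/((a:ℝ)+((M + 1 - a).toNat:ℝ)) := Finset.sum_range_sub' _ _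
    _ ≤ 1/(a:ℝ) := by
        push_cast
        have h1 : (0:ℝ) < (a:ℝ) := by exact_mod_cast ha
        have h2 : (0:ℝ) ≤ ((M + 1 - a).toNat : ℝ) := by positivity
        have h3 : (0:ℝ) ≤ 1/((a:ℝ)+((M + 1 - a).toNat:ℝ)) := by positivity
        simp only [add_zero]
        linarith

lemma inv_sq_sum (a M : ℤ) (ha : 1 ≤ a) :
    ∑ m ∈ Finset.Icc a M, 1/((m:ℝ))^2 ≤ 2/(a:ℝ) := by
  have h1 : ∀ m ∈ Finset.Icc a M, 1/((m:ℝ))^2 ≤ 2 * (1/(m:ℝ) - 1/((m:ℝ)+1)) := by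
    intro m hm
    simp only [Finset.mem_Icc] at hm
    have hm1 : (1:ℝ) ≤ (m:ℝ) := by exact_mod_cast le_trans ha hm.1
    have hpos : (0:ℝ) < (m:ℝ) := by linarith
    rw [div_sub_div _ _ (by linarith : ((m:ℝ)) ≠ 0) (by linarith : ((m:ℝ)+1) ≠ 0)]
    rw [div_le_iff₀ (by positivity), mul_comm, ← sub_nonneg]
    field_simp
    nlinarith
  calc ∑ m ∈ Finset.Icc a M, 1/((m:ℝ))^2
      ≤ ∑ m ∈ Finset.Icc a M, 2 * (1/(m:ℝ) - 1/((m:ℝ)+1)) := Finset.sum_le_sum h1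
    _ = 2 * ∑ m ∈ Finset.Icc a M, (1/(m:ℝ) - 1/((m:ℝ)+1)) := by rw [Finset.mul_sum]
    _ ≤ 2 * (1/(a:ℝ)) := by
        have := telescope_sum a M ha
        linarith
    _ = 2/(a:ℝ) := by ring

lemma outer_sum (d : ℝ) (hd : 0 < d) (s w : ℝ) (hs1 : 1 ≤ s)
    (hw : 1 ≤ w) (hwd : d ≤ w) (M : ℤ) :
    ∑ m ∈ Finset.Icc (-M) M, (max w (d * ((m:ℝ))^2)) ^ (-s)
      ≤ (8 / Real.sqrt d) * w ^ (1/2 - s) := by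
  have hw0 : (0:ℝ) < w := by linarith
  set K : ℤ := Int.floor (Real.sqrt (w/d)) with hKdef
  have hsq1 : (1:ℝ) ≤ Real.sqrt (w/d) := by
    rw [show (1:ℝ) = Real.sqrt 1 by simp]
    exact Real.sqrt_le_sqrt (by rw [le_div_iff₀ hd]; linarith)
  have hK1 : 1 ≤ K := by
    rw [hKdef]
    exact_mod_cast Int.le_floor.mpr (by exact_mod_cast hsq1)
  have hKle : (K:ℝ) ≤ Real.sqrt (w/d) := Int.floor_le _
  have hKge : Real.sqrt (w/d) < (K:ℝ) + 1 := by
    have := Int.lt_floor_add_one (Real.sqrt (w/d)); push_cast at this ⊢; linarith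
  set S := Finset.Icc (-M) M with hSdef
  set t : ℤ → ℝ := fun m => (max w (d * ((m:ℝ))^2)) ^ (-s) with htdef
  set P : ℤ → Prop := fun m => d * ((m:ℝ))^2 ≤ w with hPdef
  have : DecidablePred P := fun m => Real.decidableLE _ _
  rw [← Finset.sum_filter_add_sum_filter_not S P t]
  have part1 : ∑ m ∈ S.filter (P), t m
      ≤ 3 * Real.sqrt (w/d) * w ^ (-s) := by
    have heq : ∀ m ∈ S.filter (P), t m = w ^ (-s) := by
      intro m hm
      simp only [Finset.mem_filter] at hm
      simp only [htdef]
      rw [max_eq_left hm.2]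
    rw [Finset.sum_congr rfl heq, Finset.sum_const, nsmul_eq_mul]
    have hsub : S.filter (P) ⊆ Finset.Icc (-K) K := by
      intro m hm
      simp only [Finset.mem_filter, hSdef, Finset.mem_Icc] at hm ⊢
      have h2 : ((m:ℝ))^2 ≤ w/d := by rw [le_div_iff₀ hd]; linarith [hm.2]
      have h3 : |(m:ℝ)| ≤ Real.sqrt (w/d) := by
        rw [← Real.sqrt_sq_eq_abs]
        exact Real.sqrt_le_sqrt h2
      have h4 : |m| ≤ K := Int.le_floor.mpr (by
        rw [show ((|m|:ℤ):ℝ) = |(m:ℝ)| by push_cast; rfl]; exact h3)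
      rw [abs_le] at h4
      exact h4
    have hcard : ((S.filter (P)).card : ℝ)
        ≤ 2 * (K:ℝ) + 1 := by
      have := Finset.card_le_card hsub
      have hc2 : (Finset.Icc (-K) K).card = (2*K + 1).toNat := by
        rw [Int.card_Icc]; congr 1; omega
      have : (S.filter (P)).card ≤ (2*K+1).toNat := hc2 ▸ this
      have h5 : ((2*K+1).toNat : ℝ) = 2*(K:ℝ)+1 := by
        rw [show ((2*K+1).toNat : ℝ) = (((2*K+1).toNat : ℤ) : ℝ) by push_cast; rfl]
        rw [Int.toNat_of_nonneg (by omega)]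
        push_cast; ring
      calc ((S.filter (P)).card : ℝ)
          ≤ ((2*K+1).toNat : ℝ) := by exact_mod_cast this
        _ = 2*(K:ℝ)+1 := h5
    have hws : (0:ℝ) ≤ w ^ (-s) := Real.rpow_nonneg hw0.le _
    calc ((S.filter (P)).card : ℝ) * w ^ (-s)
        ≤ (2 * (K:ℝ) + 1) * w ^ (-s) := mul_le_mul_of_nonneg_right hcard hws
      _ ≤ 3 * Real.sqrt (w/d) * w ^ (-s) := by
          apply mul_le_mul_of_nonneg_right _ hws
          linarith
  have hsqd : 0 < Real.sqrt d := Real.sqrt_pos.mpr hd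
  have hsqwd : 0 < Real.sqrt (w/d) := by linarith
  have part2 : ∑ m ∈ S.filter (fun m => ¬ P m), t m
      ≤ w ^ (1-s) / d * (4 / ((K:ℝ)+1)) := by
    have point : ∀ m ∈ S.filter (fun m => ¬ P m),
        t m ≤ w ^ (1-s) / d * (1/((m:ℝ))^2) := by
      intro m hm
      simp only [Finset.mem_filter, hPdef] at hm
      have hdm : w < d*(m:ℝ)^2 := lt_of_not_ge hm.2
      have hdm0 : (0:ℝ) < d*(m:ℝ)^2 := lt_trans hw0 hdm
      have hm0 : ((m:ℝ))^2 ≠ 0 := by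
        intro h
        rw [h, mul_zero] at hdm0
        exact lt_irrefl 0 hdm0
      have h1 : t m = (d*(m:ℝ)^2) ^ (-s) := by
        simp only [htdef]; rw [max_eq_right hdm.le]
      have h2 : (d*(m:ℝ)^2) ^ (-s) = (d*(m:ℝ)^2) ^ (1-s) * (d*(m:ℝ)^2) ^ (-(1:ℝ)) := by
        rw [← Real.rpow_add hdm0]; ring_nf
      have h3 : (d*(m:ℝ)^2) ^ (1-s) ≤ w ^ (1-s) :=
        Real.rpow_le_rpow_of_nonpos hw0 hdm.le (by linarith)
      have h4 : (d*(m:ℝ)^2) ^ (-(1:ℝ)) = 1/(d*(m:ℝ)^2) := by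
        rw [Real.rpow_neg_one]; rw [inv_eq_one_div]
      have h5 : (0:ℝ) ≤ (d*(m:ℝ)^2) ^ (-(1:ℝ)) := Real.rpow_nonneg hdm0.le _
      calc t m = (d*(m:ℝ)^2) ^ (1-s) * (d*(m:ℝ)^2) ^ (-(1:ℝ)) := by rw [h1, h2]
        _ ≤ w ^ (1-s) * (d*(m:ℝ)^2) ^ (-(1:ℝ)) := mul_le_mul_of_nonneg_right h3 h5
        _ = w ^ (1-s) / d * (1/((m:ℝ))^2) := by rw [h4]; field_simp
    have hwsd : (0:ℝ) ≤ w ^ (1-s) / d := by positivity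
    have sumsq : ∑ m ∈ S.filter (fun m => ¬ P m), 1/((m:ℝ))^2 ≤ 4 / ((K:ℝ)+1) := by
      set T := S.filter (fun m => ¬ P m) with hTdef
      have hmemT : ∀ m ∈ T, w < d*(m:ℝ)^2 ∧ -M ≤ m ∧ m ≤ M := by
        intro m hm
        simp only [hTdef, Finset.mem_filter, hPdef, hSdef, Finset.mem_Icc] at hm
        exact ⟨lt_of_not_ge hm.2, hm.1.1, hm.1.2⟩
      have habs : ∀ m ∈ T, K + 1 ≤ |m| := by
        intro m hm
        rcases hmemT m hm with ⟨h1, _, _⟩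
        have h2 : w/d < (m:ℝ)^2 := by rw [div_lt_iff₀ hd]; linarith
        have h3 : Real.sqrt (w/d) < |(m:ℝ)| := by
          rw [← Real.sqrt_sq_eq_abs]
          exact Real.sqrt_lt_sqrt (by positivity) h2
        have h4 : (K:ℝ) < |(m:ℝ)| := lt_of_le_of_lt hKle h3
        have h5 : (K:ℤ) < |m| := by exact_mod_cast (by push_cast; exact h4 : ((K:ℤ):ℝ) < ((|m|:ℤ):ℝ))
        omega
      have hKK : (1:ℤ) ≤ K + 1 := by omega
      have hsum1 : ∀ (U : Finset ℤ), U ⊆ Finset.Icc (K+1) M →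
          ∑ m ∈ U, 1/((m:ℝ))^2 ≤ 2/((K:ℝ)+1) := by
        intro U hU
        calc ∑ m ∈ U, 1/((m:ℝ))^2 ≤ ∑ m ∈ Finset.Icc (K+1) M, 1/((m:ℝ))^2 :=
            Finset.sum_le_sum_of_subset_of_nonneg hU (fun m _ _ => by positivity)
          _ ≤ 2/(((K+1:ℤ)):ℝ) := inv_sq_sum (K+1) M hKK
          _ = 2/((K:ℝ)+1) := by push_cast; ring_nf
      set Tpos := T.filter (fun m => 0 < m) with hTposdef
      set Tneg := T.filter (fun m => ¬ (0 < m)) with hTnegdef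
      have hTsplit : ∑ m ∈ T, 1/((m:ℝ))^2
          = ∑ m ∈ Tpos, 1/((m:ℝ))^2 + ∑ m ∈ Tneg, 1/((m:ℝ))^2 :=
        (Finset.sum_filter_add_sum_filter_not T _ _).symm
      have hpos : ∑ m ∈ Tpos, 1/((m:ℝ))^2 ≤ 2/((K:ℝ)+1) := by
        apply hsum1
        intro m hm
        simp only [hTposdef, Finset.mem_filter] at hm
        have := habs m hm.1
        have := (hmemT m hm.1).2.2
        simp only [Finset.mem_Icc]
        have : |m| = m := abs_of_pos hm.2
        omega
      have hneg : ∑ m ∈ Tneg, 1/((m:ℝ))^2 ≤ 2/((K:ℝ)+1) := by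
        have himg : ∑ m ∈ Tneg.image (fun m => -m), 1/((m:ℝ))^2
            = ∑ m ∈ Tneg, 1/((m:ℝ))^2 := by
          rw [Finset.sum_image (by intro x _ y _ h; simp only at h; omega)]
          refine Finset.sum_congr rfl fun m _ => ?_
          push_cast; ring_nf
        rw [← himg]
        apply hsum1
        intro m hm
        simp only [Finset.mem_image] at hm
        rcases hm with ⟨x, hx, rfl⟩
        simp only [hTnegdef, Finset.mem_filter] at hx
        have h1 := habs x hx.1
        have h2 := (hmemT x hx.1).2.1
        have h3 : ¬ (0 < x) := hx.2
        have : |x| = -x := abs_of_nonpos (by omega)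
        simp only [Finset.mem_Icc]
        omega
      rw [hTsplit]
      have : 2/((K:ℝ)+1) + 2/((K:ℝ)+1) = 4/((K:ℝ)+1) := by ring
      linarith
    calc ∑ m ∈ S.filter (fun m => ¬ P m), t m
        ≤ ∑ m ∈ S.filter (fun m => ¬ P m), w ^ (1-s) / d * (1/((m:ℝ))^2) :=
          Finset.sum_le_sum point
      _ = w ^ (1-s) / d * ∑ m ∈ S.filter (fun m => ¬ P m), 1/((m:ℝ))^2 := by
          rw [Finset.mul_sum]
      _ ≤ w ^ (1-s) / d * (4 / ((K:ℝ)+1)) := mul_le_mul_of_nonneg_left sumsq hwsd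
  -- combine
  have e1 : w ^ ((1:ℝ)/2 - s) = w ^ ((1:ℝ)/2) * w ^ (-s) := by
    rw [← Real.rpow_add hw0]; ring_nf
  have e2 : w ^ (1 - s) = w ^ ((1:ℝ)/2 - s) * w ^ ((1:ℝ)/2) := by
    rw [← Real.rpow_add hw0]; ring_nf
  have e3 : Real.sqrt (w/d) = w ^ ((1:ℝ)/2) / Real.sqrt d := by
    rw [Real.sqrt_div hw0.le, Real.sqrt_eq_rpow]
  have e4 : Real.sqrt d * Real.sqrt d = d := Real.mul_self_sqrt hd.le
  have hw12 : (0:ℝ) < w ^ ((1:ℝ)/2) := Real.rpow_pos_of_pos hw0 _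
  have hfin1 : 3 * Real.sqrt (w/d) * w ^ (-s) = 3 / Real.sqrt d * w ^ ((1:ℝ)/2 - s) := by
    rw [e3, e1]; ring
  have hfin2 : w ^ (1-s) / d * (4 / ((K:ℝ)+1)) ≤ 4 / Real.sqrt d * w ^ ((1:ℝ)/2 - s) := by
    have h1 : 4 / ((K:ℝ)+1) ≤ 4 / Real.sqrt (w/d) := by
      apply div_le_div_of_nonneg_left (by norm_num) hsqwd
      linarith
    have h2 : (0:ℝ) ≤ w ^ (1-s) / d := by positivity
    calc w ^ (1-s) / d * (4 / ((K:ℝ)+1)) ≤ w ^ (1-s) / d * (4 / Real.sqrt (w/d)) :=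
        mul_le_mul_of_nonneg_left h1 h2
      _ = 4 / Real.sqrt d * w ^ ((1:ℝ)/2 - s) := by
          have gen : ∀ a b c dd : ℝ, 0 < b → 0 < c → c*c = dd →
              a*b/dd * (4/(b/c)) = 4/c*a := by
            intro a b c dd hb hc hcd
            subst hcd
            field_simp
          rw [e3, e2]
          exact gen _ _ _ _ hw12 hsqd e4
  have hw12s : (0:ℝ) ≤ w ^ ((1:ℝ)/2 - s) := Real.rpow_nonneg hw0.le _
  have hfinal := add_le_add part1 part2
  have hlast : 3 / Real.sqrt d * w ^ ((1:ℝ)/2 - s) + 4 / Real.sqrt d * w ^ ((1:ℝ)/2 - s)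
      ≤ 8 / Real.sqrt d * w ^ ((1:ℝ)/2 - s) := by
    have h8 : (3:ℝ) / Real.sqrt d + 4 / Real.sqrt d ≤ 8 / Real.sqrt d := by
      rw [← add_div]
      gcongr
      norm_num
    nlinarith
  have goal_eq : (1:ℝ)/2 - s = 1/2 - s := rfl
  calc ∑ m ∈ S.filter P, t m + ∑ m ∈ S.filter (fun m => ¬ P m), t m
      ≤ 3 * Real.sqrt (w/d) * w ^ (-s) + w ^ (1-s) / d * (4 / ((K:ℝ)+1)) := hfinal
    _ ≤ 3 / Real.sqrt d * w ^ ((1:ℝ)/2 - s) + 4 / Real.sqrt d * w ^ ((1:ℝ)/2 - s) := by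
        rw [← hfin1]; exact add_le_add le_rfl hfin2
    _ ≤ 8 / Real.sqrt d * w ^ ((1:ℝ)/2 - s) := hlast



lemma key_bound (z ζ : ℂ) (hz : cabs z = 1) (hz1 : z ≠ 1) (hζ : cabs ζ = 1)
    (A c d : ℝ) (hA : 0 < A) (hd : 0 < d)
    (Q : ℤ → ℤ → ℝ) (hQ : ∀ m n : ℤ, Q m n = A * ((n:ℝ) + c*(m:ℝ))^2 + d*(m:ℝ)^2) :
    ∃ C > (0:ℝ), ∃ w₀ > (0:ℝ), ∀ s : ℝ, s ∈ Set.Icc (1:ℝ) 2 →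
      ∀ w p : ℝ, w₀ ≤ w → w < p →
        cabs (∑' mn : ℤ × ℤ,
          if w < Q mn.1 mn.2 ∧ Q mn.1 mn.2 < p then
            ζ ^ mn.1 * z ^ mn.2 * (((Q mn.1 mn.2) ^ (-s) : ℝ) : ℂ)
          else 0)
        ≤ C * w ^ ((1:ℝ)/2 - s) := by
  classical
  have h1z := one_sub_pos_abs z hz1
  have hsd : 0 < Real.sqrt d := Real.sqrt_pos.mpr hd
  refine ⟨160 / (Real.sqrt d * cabs (1 - z)), by positivity, max 1 d, by positivity,
    ?_⟩
  rintro s ⟨hs1, hs2⟩ w p hw hwp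
  have hw1 : 1 ≤ w := le_trans (le_max_left _ _) hw
  have hwd : d ≤ w := le_trans (le_max_right _ _) hw
  have hw0 : (0:ℝ) < w := by linarith
  have hp0 : (0:ℝ) < p := by linarith
  set Mb : ℤ := Int.floor (Real.sqrt (p/d)) with hMbdef
  set Nb : ℤ := Int.floor (Real.sqrt (p/A) + |c| * Real.sqrt (p/d)) with hNbdef
  set F : ℤ × ℤ → ℂ := fun mn =>
    if w < Q mn.1 mn.2 ∧ Q mn.1 mn.2 < p then
      ζ ^ mn.1 * z ^ mn.2 * (((Q mn.1 mn.2) ^ (-s) : ℝ) : ℂ)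
    else 0 with hFdef
  set box : Finset (ℤ × ℤ) := Finset.Icc (-Mb) Mb ×ˢ Finset.Icc (-Nb) Nb with hboxdef
  have hmem : ∀ mn : ℤ × ℤ, (w < Q mn.1 mn.2 ∧ Q mn.1 mn.2 < p) → mn ∈ box := by
    rintro ⟨m, n⟩ ⟨hw', hp'⟩
    simp only [hboxdef, Finset.mem_product, Finset.mem_Icc]
    have hQval := hQ m n
    have hterm1 : A * ((n:ℝ) + c*(m:ℝ))^2 < p := by nlinarith [sq_nonneg ((m:ℝ))]
    have hterm2 : d * ((m:ℝ))^2 < p := by nlinarith [sq_nonneg ((n:ℝ) + c*(m:ℝ))]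
    have hm : |(m:ℝ)| ≤ Real.sqrt (p/d) := by
      rw [← Real.sqrt_sq_eq_abs]
      apply Real.sqrt_le_sqrt
      rw [le_div_iff₀ hd]
      nlinarith
    have hn' : |(n:ℝ) + c*(m:ℝ)| ≤ Real.sqrt (p/A) := by
      rw [← Real.sqrt_sq_eq_abs]
      apply Real.sqrt_le_sqrt
      rw [le_div_iff₀ hA]
      nlinarith
    have hn : |(n:ℝ)| ≤ Real.sqrt (p/A) + |c| * Real.sqrt (p/d) := by
      have h1 : |(n:ℝ)| ≤ |(n:ℝ) + c*(m:ℝ)| + |c*(m:ℝ)| := by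
        have := abs_add_le ((n:ℝ) + c*(m:ℝ)) (-(c*(m:ℝ)))
        simp only [add_neg_cancel_right, abs_neg] at this
        exact this
      have h2 : |c*(m:ℝ)| = |c| * |(m:ℝ)| := abs_mul _ _
      have h3 : |c| * |(m:ℝ)| ≤ |c| * Real.sqrt (p/d) :=
        mul_le_mul_of_nonneg_left hm (abs_nonneg _)
      linarith
    have hmZ : |m| ≤ Mb := Int.le_floor.mpr (by push_cast; exact hm)
    have hnZ : |n| ≤ Nb := Int.le_floor.mpr (by push_cast; exact hn)
    rw [abs_le] at hmZ hnZ
    exact ⟨hmZ, hnZ⟩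
  have hzero : ∀ mn : ℤ × ℤ, mn ∉ box → F mn = 0 := by
    intro mn hmn
    simp only [hFdef]
    rw [if_neg (fun hc => hmn (hmem mn hc))]
  rw [tsum_eq_sum hzero, hboxdef, Finset.sum_product]
  have hIcoIcc : ∀ g : ℤ → ℂ, ∑ n ∈ Finset.Icc (-Nb) Nb, g n = ∑ n ∈ Finset.Ico (-Nb) (Nb+1), g n := by
    intro g
    have : Finset.Icc (-Nb) Nb = Finset.Ico (-Nb) (Nb+1) := by
      ext x
      simp only [Finset.mem_Icc, Finset.mem_Ico]
      omega
    rw [this]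
  have hinner : ∀ m : ℤ, cabs (∑ n ∈ Finset.Icc (-Nb) Nb, F (m, n))
      ≤ 20 * (max w (d * ((m:ℝ))^2)) ^ (-s) / cabs (1 - z) := by
    intro m
    have hpull : ∀ n : ℤ, F (m, n)
        = ζ ^ m * ((if w < Q m n ∧ Q m n < p then (Q m n) ^ (-s) else 0) • z ^ n) := by
      intro n
      simp only [hFdef]
      split_ifs with hc
      · rw [Complex.real_smul]; ring
      · rw [zero_smul, mul_zero]
    rw [Finset.sum_congr rfl (fun n _ => hpull n), ← Finset.mul_sum, map_mul, map_zpow₀, hζ,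
      one_zpow, one_mul, hIcoIcc]
    exact inner_bound z hz hz1 s w p (by linarith) hw0 A (c*(m:ℝ)) (d*((m:ℝ))^2) hA
      (by positivity) (fun n => Q m n) (fun n => hQ m n) (-Nb) (Nb+1)
  calc cabs (∑ m ∈ Finset.Icc (-Mb) Mb, ∑ n ∈ Finset.Icc (-Nb) Nb, F (m, n))
      ≤ ∑ m ∈ Finset.Icc (-Mb) Mb, cabs (∑ n ∈ Finset.Icc (-Nb) Nb, F (m, n)) :=
        cabs.sum_le _ _
    _ ≤ ∑ m ∈ Finset.Icc (-Mb) Mb, 20 * (max w (d * ((m:ℝ))^2)) ^ (-s) / cabs (1 - z) :=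
        Finset.sum_le_sum (fun m _ => hinner m)
    _ = 20 / cabs (1 - z) * ∑ m ∈ Finset.Icc (-Mb) Mb, (max w (d * ((m:ℝ))^2)) ^ (-s) := by
        rw [Finset.mul_sum]
        refine Finset.sum_congr rfl fun m _ => ?_
        ring
    _ ≤ 20 / cabs (1 - z) * ((8 / Real.sqrt d) * w ^ (1/2 - s)) := by
        apply mul_le_mul_of_nonneg_left (outer_sum d hd s w hs1 hw1 hwd Mb)
        positivity
    _ = 160 / (Real.sqrt d * cabs (1 - z)) * w ^ ((1:ℝ)/2 - s) := by
        field_simp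
        ring



lemma abs_char (t : ℝ) : cabs (Complex.exp (2*(Real.pi:ℂ)*Complex.I*t)) = 1 := by
  rw [← norm_eq_cabs, Complex.norm_exp]
  have : (2*(Real.pi:ℂ)*Complex.I*t).re = 0 := by
    simp [Complex.mul_re, Complex.mul_im]
  rw [this, Real.exp_zero]

lemma char_ne_one (t : ℝ) (ht : ¬∃ a : ℤ, (a:ℝ) = t) :
    Complex.exp (2*(Real.pi:ℂ)*Complex.I*t) ≠ 1 := by
  intro h
  rw [Complex.exp_eq_one_iff] at h
  obtain ⟨k, hk⟩ := h
  apply ht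
  refine ⟨k, ?_⟩
  have h2 : (2*(Real.pi:ℂ)*Complex.I) ≠ 0 := by
    simp [Real.pi_ne_zero, Complex.I_ne_zero]
  have : (2*(Real.pi:ℂ)*Complex.I) * t = (2*(Real.pi:ℂ)*Complex.I) * k := by
    rw [hk]; ring
  have := mul_left_cancel₀ h2 this
  exact_mod_cast this.symm

lemma char_zpow (t : ℝ) (k : ℤ) :
    Complex.exp (2*(Real.pi:ℂ)*Complex.I*((k:ℝ)*t)) =
      (Complex.exp (2*(Real.pi:ℂ)*Complex.I*t)) ^ k := by
  rw [← Complex.exp_int_mul]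
  congr 1
  push_cast
  ring

lemma char_split (t t' : ℝ) (k l : ℤ) :
    Complex.exp (2*(Real.pi:ℂ)*Complex.I*(((k:ℝ)*t + (l:ℝ)*t' : ℝ) : ℂ)) =
      (Complex.exp (2*(Real.pi:ℂ)*Complex.I*t)) ^ k *
      (Complex.exp (2*(Real.pi:ℂ)*Complex.I*t')) ^ l := by
  rw [← char_zpow, ← char_zpow, ← Complex.exp_add]
  congr 1
  push_cast
  ring


lemma denom_eq (r s : ℝ) (hr : 0 ≤ r) (hr2 : 0 < r^2) :
    ((r^2 : ℝ)) ^ (-s) = (r ^ (2*s))⁻¹ := by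
  have h1 : r ^ 2 = r ^ ((2:ℕ):ℝ) := (Real.rpow_natCast r 2).symm
  have h2 : ((2:ℕ):ℝ) = (2:ℝ) := by norm_num
  rw [h1, h2, ← Real.rpow_mul hr]
  rw [show (2:ℝ) * (-s) = -(2*s) by ring, Real.rpow_neg hr]

/-- uniform bound for tail pieces of the twisted lattice sum
`h(w,s) = ∑_{w < |mτ+n|² < p} e^{2πi(mu+nv)}/|mτ+n|^{2s}`:
there are `C > 0` and `w₀ > 0` with `|h(w,s)| ≤ C · w^{1/2 - s}`
for all `s ∈ [1,2]` and all `p > w ≥ w₀`. -/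
theorem lattice_tail_bound (τ : ℂ) (hτ : 0 < τ.im) (u v : ℝ)
    (huv : ¬((∃ a : ℤ, (a : ℝ) = u) ∧ (∃ b : ℤ, (b : ℝ) = v))) :
    ∃ C > (0 : ℝ), ∃ w₀ > (0 : ℝ), ∀ s : ℝ, s ∈ Set.Icc (1 : ℝ) 2 →
      ∀ w p : ℝ, w₀ ≤ w → w < p →
        ‖(∑' mn : ℤ × ℤ,
            if w < ‖(mn.1 : ℂ) * τ + (mn.2 : ℂ)‖ ^ 2 ∧
                ‖(mn.1 : ℂ) * τ + (mn.2 : ℂ)‖ ^ 2 < p then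
              Complex.exp (2 * (Real.pi : ℂ) * Complex.I *
                  (((mn.1 : ℝ) * u + (mn.2 : ℝ) * v : ℝ) : ℂ)) /
                ((‖(mn.1 : ℂ) * τ + (mn.2 : ℂ)‖ ^ (2 * s) : ℝ) : ℂ)
            else 0)‖
          ≤ C * w ^ ((1 : ℝ) / 2 - s) := by
  simp only [norm_eq_cabs]
  classical
  set x := τ.re with hxdef
  set y := τ.im with hydef
  have hy : 0 < y := hτ
  by_cases hv : ∃ b : ℤ, (b:ℝ) = v
  · -- v is an integer, so u is not
    have hu : ¬∃ a : ℤ, (a:ℝ) = u := fun ha => huv ⟨ha, hv⟩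
    obtain ⟨b, hb⟩ := hv
    set nsq : ℝ := x^2 + y^2 with hnsqdef
    have hnsq : 0 < nsq := by nlinarith [sq_nonneg x]
    set Q : ℤ → ℤ → ℝ := fun a b' => cabs ((b' : ℂ) * τ + (a : ℂ)) ^ 2 with hQdef
    have hQform : ∀ a b' : ℤ, Q a b'
        = nsq * ((b':ℝ) + (x/nsq)*(a:ℝ))^2 + (y^2/nsq)*(a:ℝ)^2 := by
      intro a b'
      simp only [hQdef]
      rw [← norm_eq_cabs, Complex.sq_norm, Complex.normSq_apply]
      simp only [Complex.add_re, Complex.add_im, Complex.mul_re, Complex.mul_im,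
        Complex.intCast_re, Complex.intCast_im, ← hxdef, ← hydef]
      field_simp
      ring
    obtain ⟨C, hC, w₀, hw₀, hbound⟩ := key_bound
      (Complex.exp (2*(Real.pi:ℂ)*Complex.I*u)) 1
      (abs_char u) (char_ne_one u hu) (by simp)
      nsq (x/nsq) (y^2/nsq) hnsq (by positivity) Q hQform
    refine ⟨C, hC, w₀, hw₀, ?_⟩
    intro s hs w p hww hwp
    have hbd := hbound s hs w p hww hwp
    set G : ℤ × ℤ → ℂ := fun mn' : ℤ × ℤ =>
        if w < Q mn'.1 mn'.2 ∧ Q mn'.1 mn'.2 < p then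
          (1:ℂ) ^ mn'.1 * (Complex.exp (2*(Real.pi:ℂ)*Complex.I*u)) ^ mn'.2 *
            (((Q mn'.1 mn'.2) ^ (-s) : ℝ) : ℂ)
        else 0 with hGdef
    have hweq : ∀ mn : ℤ × ℤ,
        (if w < cabs ((mn.1 : ℂ) * τ + (mn.2 : ℂ)) ^ 2 ∧
            cabs ((mn.1 : ℂ) * τ + (mn.2 : ℂ)) ^ 2 < p then
          Complex.exp (2 * (Real.pi : ℂ) * Complex.I *
              (((mn.1 : ℝ) * u + (mn.2 : ℝ) * v : ℝ) : ℂ)) /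
            ((cabs ((mn.1 : ℂ) * τ + (mn.2 : ℂ)) ^ (2 * s) : ℝ) : ℂ)
        else 0)
        = G ((Equiv.prodComm ℤ ℤ) mn) := by
      rintro ⟨m, n⟩
      simp only [hGdef, Equiv.prodComm_apply, Prod.swap_prod_mk, hQdef]
      by_cases hc : w < cabs ((m : ℂ) * τ + (n : ℂ)) ^ 2 ∧
          cabs ((m : ℂ) * τ + (n : ℂ)) ^ 2 < p
      · rw [if_pos hc, if_pos hc]
        set r := cabs ((m : ℂ) * τ + (n : ℂ)) with hrdef
        have hr2 : 0 < r^2 := lt_trans (by linarith) hc.1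
        have hchar : Complex.exp (2 * (Real.pi : ℂ) * Complex.I *
              (((m : ℝ) * u + (n : ℝ) * v : ℝ) : ℂ))
            = (1:ℂ) ^ n * (Complex.exp (2*(Real.pi:ℂ)*Complex.I*u)) ^ m := by
          rw [char_split u v m n]
          have hev1 : Complex.exp (2*(Real.pi:ℂ)*Complex.I*v) = 1 := by
            rw [← hb]
            have := Complex.exp_int_mul_two_pi_mul_I b
            rw [← this]
            congr 1
            push_cast
            ring
          rw [hev1]
          simp
        rw [hchar, denom_eq r s (cabs.nonneg _) hr2, Complex.ofReal_inv,
          div_eq_mul_inv]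
      · rw [if_neg hc, if_neg hc]
    exact (congrArg cabs ((tsum_congr hweq).trans (Equiv.tsum_eq (Equiv.prodComm ℤ ℤ) G))).trans_le hbd
  · -- v is not an integer
    set Q : ℤ → ℤ → ℝ := fun m n => cabs ((m : ℂ) * τ + (n : ℂ)) ^ 2 with hQdef
    have hQform : ∀ m n : ℤ, Q m n = 1 * ((n:ℝ) + x*(m:ℝ))^2 + y^2*(m:ℝ)^2 := by
      intro m n
      simp only [hQdef]
      rw [← norm_eq_cabs, Complex.sq_norm, Complex.normSq_apply]
      simp only [Complex.add_re, Complex.add_im, Complex.mul_re, Complex.mul_im,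
        Complex.intCast_re, Complex.intCast_im, ← hxdef, ← hydef]
      ring
    obtain ⟨C, hC, w₀, hw₀, hbound⟩ := key_bound
      (Complex.exp (2*(Real.pi:ℂ)*Complex.I*v))
      (Complex.exp (2*(Real.pi:ℂ)*Complex.I*u))
      (abs_char v) (char_ne_one v hv) (abs_char u)
      1 x (y^2) one_pos (by positivity) Q hQform
    refine ⟨C, hC, w₀, hw₀, ?_⟩
    intro s hs w p hww hwp
    have hbd := hbound s hs w p hww hwp
    have hweq : ∀ mn : ℤ × ℤ,
        (if w < cabs ((mn.1 : ℂ) * τ + (mn.2 : ℂ)) ^ 2 ∧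
            cabs ((mn.1 : ℂ) * τ + (mn.2 : ℂ)) ^ 2 < p then
          Complex.exp (2 * (Real.pi : ℂ) * Complex.I *
              (((mn.1 : ℝ) * u + (mn.2 : ℝ) * v : ℝ) : ℂ)) /
            ((cabs ((mn.1 : ℂ) * τ + (mn.2 : ℂ)) ^ (2 * s) : ℝ) : ℂ)
        else 0)
        = (if w < Q mn.1 mn.2 ∧ Q mn.1 mn.2 < p then
            (Complex.exp (2*(Real.pi:ℂ)*Complex.I*u)) ^ mn.1 *
              (Complex.exp (2*(Real.pi:ℂ)*Complex.I*v)) ^ mn.2 *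
              (((Q mn.1 mn.2) ^ (-s) : ℝ) : ℂ)
          else 0) := by
      rintro ⟨m, n⟩
      simp only [hQdef]
      by_cases hc : w < cabs ((m : ℂ) * τ + (n : ℂ)) ^ 2 ∧
          cabs ((m : ℂ) * τ + (n : ℂ)) ^ 2 < p
      · rw [if_pos hc, if_pos hc]
        set r := cabs ((m : ℂ) * τ + (n : ℂ)) with hrdef
        have hr2 : 0 < r^2 := lt_trans (by linarith) hc.1
        rw [char_split u v m n, denom_eq r s (cabs.nonneg _) hr2,
          Complex.ofReal_inv, div_eq_mul_inv]
      · rw [if_neg hc, if_neg hc]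
    exact (congrArg cabs (tsum_congr hweq)).trans_le hbd
end

section
/- Let Λ = ℤ ⊕ ℤτ ⊂ ℂ be a lattice with Im τ > 0. Then there exist a real constant η_Λ and a constant C > 0 such that for all x ≥ 1, | Σ_{μ∈Λ, μ≠0, |μ|²≤x} 1/|μ|² − (π / Im τ)·(log x + η_Λ) | ≤ C · x^{−1/2}. -/
open MeasureTheory Set intervalIntegral Real

namespace LatticeLog

noncomputable def Q (a b : ℝ) (p : ℤ × ℤ) : ℝ :=
  ((p.2 : ℝ) + (p.1 : ℝ) * a) ^ 2 + ((p.1 : ℝ) * b) ^ 2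

lemma Q_nonneg (a b : ℝ) (p : ℤ × ℤ) : 0 ≤ Q a b p := by unfold Q; positivity

lemma Q_pos (a : ℝ) {b : ℝ} (hb : 0 < b) {p : ℤ × ℤ} (hp : p ≠ 0) : 0 < Q a b p := by
  rcases (Q_nonneg a b p).lt_or_eq with h | h
  · exact h
  exfalso
  unfold Q at h
  have h1 : ((p.1 : ℝ) * b) ^ 2 = 0 := by
    nlinarith [sq_nonneg ((p.2 : ℝ) + (p.1 : ℝ) * a), sq_nonneg ((p.1 : ℝ) * b)]
  have h2 : (p.1 : ℝ) = 0 := by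
    rcases mul_eq_zero.mp (pow_eq_zero_iff (n := 2) (by norm_num) |>.mp h1) with h | h
    · exact h
    · exact absurd h hb.ne'
  have h3 : (p.2 : ℝ) = 0 := by
    have hsq : ((p.2 : ℝ)) ^ 2 = 0 := by rw [h2] at h; nlinarith
    exact pow_eq_zero_iff (n := 2) (by norm_num) |>.mp hsq
  apply hp
  have e1 : p.1 = 0 := by exact_mod_cast h2
  have e2 : p.2 = 0 := by exact_mod_cast h3
  exact Prod.ext e1 e2

lemma finite_Qle (a : ℝ) {b : ℝ} (hb : 0 < b) (x : ℝ) :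
    {p : ℤ × ℤ | Q a b p ≤ x}.Finite := by
  rcases le_or_gt x 0 with hx | hx
  · rcases eq_or_lt_of_le hx with rfl | hx'
    · apply Set.Finite.subset (Set.finite_singleton (0 : ℤ × ℤ))
      intro p hp
      simp only [Set.mem_setOf_eq] at hp
      by_contra h
      exact absurd hp (not_le.mpr (Q_pos a hb h))
    · convert Set.finite_empty
      ext p
      simp only [Set.mem_setOf_eq, Set.mem_empty_iff_false, iff_false, not_le]
      exact lt_of_lt_of_le hx' (Q_nonneg a b p)
  · set K1 : ℤ := ⌈Real.sqrt x / b⌉ with hK1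
    set K2 : ℤ := ⌈Real.sqrt x + (K1 : ℝ) * |a|⌉ with hK2
    apply Set.Finite.subset (Set.finite_Icc ((-K1, -K2) : ℤ × ℤ) (K1, K2))
    intro p hp
    simp only [Set.mem_setOf_eq] at hp
    unfold Q at hp
    have hQ1 : ((p.1 : ℝ) * b) ^ 2 ≤ x := by nlinarith [sq_nonneg ((p.2 : ℝ) + (p.1 : ℝ) * a)]
    have hp1 : |(p.1 : ℝ)| ≤ Real.sqrt x / b := by
      rw [le_div_iff₀ hb]
      have := Real.sqrt_le_sqrt hQ1
      rwa [Real.sqrt_sq_eq_abs, abs_mul, abs_of_pos hb] at this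
    have hp1' : |(p.1 : ℝ)| ≤ (K1 : ℝ) := hp1.trans (Int.le_ceil _)
    have hQ2 : ((p.2 : ℝ) + (p.1 : ℝ) * a) ^ 2 ≤ x := by
      nlinarith [sq_nonneg ((p.1 : ℝ) * b)]
    have hp2 : |(p.2 : ℝ) + (p.1 : ℝ) * a| ≤ Real.sqrt x := by
      have := Real.sqrt_le_sqrt hQ2
      rwa [Real.sqrt_sq_eq_abs] at this
    have hp2'' : |(p.2 : ℝ)| ≤ (K2 : ℝ) := by
      have h : |(p.2 : ℝ)| ≤ |(p.2 : ℝ) + (p.1 : ℝ) * a| + |(p.1 : ℝ) * a| := by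
        have := abs_sub ((p.2 : ℝ) + (p.1 : ℝ) * a) ((p.1 : ℝ) * a)
        simpa using this
      have hma : |(p.1 : ℝ) * a| ≤ (K1 : ℝ) * |a| := by
        rw [abs_mul]
        exact mul_le_mul_of_nonneg_right hp1' (abs_nonneg a)
      have := Int.le_ceil (Real.sqrt x + (K1 : ℝ) * |a|)
      rw [← hK2] at this
      linarith
    have h1 : |p.1| ≤ K1 := by
      have : ((|p.1| : ℤ) : ℝ) ≤ (K1 : ℝ) := by rw [Int.cast_abs]; exact hp1'
      exact_mod_cast this
    have h2 : |p.2| ≤ K2 := by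
      have : ((|p.2| : ℤ) : ℝ) ≤ (K2 : ℝ) := by rw [Int.cast_abs]; exact hp2''
      exact_mod_cast this
    rw [Set.mem_Icc]
    rw [abs_le] at h1 h2
    exact ⟨⟨h1.1, h2.1⟩, ⟨h1.2, h2.2⟩⟩

lemma Icc_card_near {l u : ℝ} (h : l ≤ u) :
    |((Finset.Icc ⌈l⌉ ⌊u⌋).card : ℝ) - (u - l)| ≤ 1 := by
  rw [Int.card_Icc]
  have hfl : (⌊u⌋ : ℝ) ≤ u := Int.floor_le u
  have hfl' : u - 1 < (⌊u⌋ : ℝ) := Int.sub_one_lt_floor u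
  have hcl : l ≤ (⌈l⌉ : ℝ) := Int.le_ceil l
  have hcl' : (⌈l⌉ : ℝ) < l + 1 := Int.ceil_lt_add_one l
  set k : ℤ := ⌊u⌋ + 1 - ⌈l⌉ with hk
  have hkr : (k : ℝ) = (⌊u⌋ : ℝ) + 1 - (⌈l⌉ : ℝ) := by push_cast [hk]; ring
  have hlow : (k : ℝ) ≤ ((k.toNat : ℤ) : ℝ) := by exact_mod_cast Int.self_le_toNat k
  rw [abs_le]
  constructor
  · have : u - l - 1 < (k : ℝ) := by rw [hkr]; linarith
    have : u - l - 1 < ((k.toNat : ℤ) : ℝ) := lt_of_lt_of_le this hlow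
    push_cast at this ⊢
    linarith
  · rcases le_or_gt k 0 with hk0 | hk0
    · have : k.toNat = 0 := Int.toNat_of_nonpos hk0
      rw [this]
      push_cast
      linarith
    · have : (k.toNat : ℤ) = k := Int.toNat_of_nonneg hk0.le
      have hcast : ((k.toNat : ℤ) : ℝ) = (k : ℝ) := by exact_mod_cast this
      push_cast at hcast ⊢
      rw [hcast, hkr]
      linarith

lemma sum_Icc_sym {M : ℤ} (hM : 0 ≤ M) (f : ℤ → ℝ) (hf : ∀ m, f (-m) = f m) :
    ∑ m ∈ Finset.Icc (-M) M, f m = f 0 + 2 * ∑ m ∈ Finset.Icc 1 M, f m := by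
  have h1 : Finset.Icc (-M) M = Finset.Icc (-M) (-1) ∪ Finset.Icc 0 M := by
    ext m; simp only [Finset.mem_Icc, Finset.mem_union]; omega
  have hdisj : Disjoint (Finset.Icc (-M) (-1)) (Finset.Icc 0 M) := by
    rw [Finset.disjoint_left]
    intro m hm hm'
    simp only [Finset.mem_Icc] at hm hm'
    omega
  rw [h1, Finset.sum_union hdisj]
  have h2 : ∑ m ∈ Finset.Icc (-M) (-1), f m = ∑ m ∈ Finset.Icc 1 M, f m := by
    apply Finset.sum_nbij' (i := fun m => -m) (j := fun m => -m)
    · intro m hm; simp only [Finset.mem_Icc] at hm ⊢; omega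
    · intro m hm; simp only [Finset.mem_Icc] at hm ⊢; omega
    · intro m _; ring
    · intro m _; ring
    · intro m _; rw [hf]
  have h3 : Finset.Icc (0 : ℤ) M = insert 0 (Finset.Icc 1 M) := by
    ext m; simp only [Finset.mem_Icc, Finset.mem_insert]; omega
  rw [h2, h3, Finset.sum_insert (by simp)]
  ring

lemma integral_quarter_circle : ∫ s in (0:ℝ)..1, Real.sqrt (1 - s ^ 2) = π / 4 := by
  have hcont : Continuous fun s : ℝ => Real.sqrt (1 - s ^ 2) := by
    exact Real.continuous_sqrt.comp (by continuity)
  have hsym : ∫ s in (-1:ℝ)..0, Real.sqrt (1 - s ^ 2) =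
      ∫ s in (0:ℝ)..1, Real.sqrt (1 - s ^ 2) := by
    have := intervalIntegral.integral_comp_neg (a := (0:ℝ)) (b := 1)
      (fun s : ℝ => Real.sqrt (1 - s ^ 2))
    simp only [neg_zero, neg_neg, neg_sq] at this ⊢
    rw [← this]
  have hsplit : (∫ s in (-1:ℝ)..0, Real.sqrt (1 - s ^ 2)) +
      (∫ s in (0:ℝ)..1, Real.sqrt (1 - s ^ 2)) =
      ∫ s in (-1:ℝ)..1, Real.sqrt (1 - s ^ 2) :=
    intervalIntegral.integral_add_adjacent_intervals
      (hcont.intervalIntegrable _ _) (hcont.intervalIntegrable _ _)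
  have := integral_sqrt_one_sub_sq
  rw [hsym] at hsplit
  linarith [hsplit.symm ▸ this]

lemma integral_g {b : ℝ} (hb : 0 < b) {x : ℝ} (hx : 0 < x) :
    ∫ t in (0:ℝ)..(Real.sqrt x / b), 2 * Real.sqrt (x - (t * b) ^ 2) = π * x / (2 * b) := by
  set R := Real.sqrt x / b with hR
  have hR0 : 0 < R := div_pos (Real.sqrt_pos.mpr hx) hb
  have hRb : R * b = Real.sqrt x := div_mul_cancel₀ _ hb.ne'
  have hRbx : (R * b) ^ 2 = x := by rw [hRb]; exact Real.sq_sqrt hx.le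
  have hint : ∀ t : ℝ, 2 * Real.sqrt (x - (t * b) ^ 2) = 2 * b * Real.sqrt (R ^ 2 - t ^ 2) := by
    intro t
    have : x - (t * b) ^ 2 = b ^ 2 * (R ^ 2 - t ^ 2) := by rw [← hRbx]; ring
    rw [this, Real.sqrt_mul (sq_nonneg b), Real.sqrt_sq hb.le]
    ring
  simp_rw [hint]
  rw [intervalIntegral.integral_const_mul]
  have hval : ∀ s : ℝ, Real.sqrt (R ^ 2 - (R * s) ^ 2) = R * Real.sqrt (1 - s ^ 2) := by
    intro s
    have : R ^ 2 - (R * s) ^ 2 = R ^ 2 * (1 - s ^ 2) := by ring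
    rw [this, Real.sqrt_mul (sq_nonneg R), Real.sqrt_sq hR0.le]
  have hsub : R * ∫ s in (0:ℝ)..1, Real.sqrt (R ^ 2 - (R * s) ^ 2) =
      ∫ t in (0:ℝ)..R, Real.sqrt (R ^ 2 - t ^ 2) := by
    have := mul_integral_comp_mul_left (c := R)
      (f := fun t => Real.sqrt (R ^ 2 - t ^ 2)) (a := 0) (b := 1)
    simpa using this
  rw [← hsub]
  simp_rw [hval]
  rw [intervalIntegral.integral_const_mul, integral_quarter_circle]
  rw [eq_div_iff (by positivity : (2:ℝ) * b ≠ 0)]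
  rw [← hRbx]; ring

noncomputable def fset (a : ℝ) {b : ℝ} (hb : 0 < b) (x : ℝ) : Finset (ℤ × ℤ) :=
  (finite_Qle a hb x).toFinset

lemma mem_fset {a b : ℝ} (hb : 0 < b) {x : ℝ} {p : ℤ × ℤ} :
    p ∈ fset a hb x ↔ Q a b p ≤ x := Set.Finite.mem_toFinset _

lemma fiber_eq (a : ℝ) {b : ℝ} (hb : 0 < b) {x : ℝ} {m : ℤ}
    (hmb : ((m : ℝ) * b) ^ 2 ≤ x) :
    ((fset a hb x).filter (fun p => p.1 = m)) =
      (Finset.Icc ⌈-Real.sqrt (x - ((m : ℝ) * b) ^ 2) - m * a⌉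
        ⌊Real.sqrt (x - ((m : ℝ) * b) ^ 2) - m * a⌋).map
        ⟨fun n => (m, n), fun n n' h => by simpa using h⟩ := by
  set c := Real.sqrt (x - ((m : ℝ) * b) ^ 2) with hc
  have hc0 : 0 ≤ c := Real.sqrt_nonneg _
  have hc2 : c ^ 2 = x - ((m : ℝ) * b) ^ 2 := Real.sq_sqrt (by linarith)
  ext ⟨p1, p2⟩
  simp only [Finset.mem_filter, Finset.mem_map, Function.Embedding.coeFn_mk, Finset.mem_Icc,
    mem_fset hb, Prod.mk.injEq]
  show _ ↔ ∃ n, _ ∧ (m, n) = (p1, p2)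
  simp only [Prod.mk.injEq]
  constructor
  · rintro ⟨hQ, rfl⟩
    unfold Q at hQ
    simp only at hQ
    have hsq : ((p2 : ℝ) + (p1 : ℝ) * a) ^ 2 ≤ c ^ 2 := by rw [hc2]; linarith
    have habs : |(p2 : ℝ) + (p1 : ℝ) * a| ≤ c := by
      have := Real.sqrt_le_sqrt hsq
      rwa [Real.sqrt_sq_eq_abs, Real.sqrt_sq hc0] at this
    rw [abs_le] at habs
    exact ⟨p2, ⟨Int.ceil_le.mpr (by push_cast; linarith [habs.1]),
      Int.le_floor.mpr (by push_cast; linarith [habs.2])⟩, rfl, rfl⟩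
  · rintro ⟨n, ⟨hn1, hn2⟩, rfl, rfl⟩
    refine ⟨?_, rfl⟩
    unfold Q
    simp only
    have h1 : -c - (m : ℝ) * a ≤ (n : ℝ) := by
      have := Int.ceil_le.mp hn1; push_cast at this ⊢; linarith
    have h2 : (n : ℝ) ≤ c - (m : ℝ) * a := by
      have := Int.le_floor.mp hn2; push_cast at this ⊢; linarith
    have : ((n : ℝ) + (m : ℝ) * a) ^ 2 ≤ c ^ 2 := by nlinarith
    rw [hc2] at this
    linarith

lemma card_fset_bound (a : ℝ) {b : ℝ} (hb : 0 < b) {x : ℝ} (hx : 1 ≤ x) :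
    |((fset a hb x).card : ℝ) - π * x / b| ≤ (11 + 2 / b) * Real.sqrt x := by
  have hx0 : (0 : ℝ) < x := by linarith
  have hsx1 : 1 ≤ Real.sqrt x := by
    rw [show (1:ℝ) = Real.sqrt 1 by simp]; exact Real.sqrt_le_sqrt hx
  set R := Real.sqrt x / b with hR
  have hR0 : 0 < R := div_pos (Real.sqrt_pos.mpr hx0) hb
  have hRb : R * b = Real.sqrt x := div_mul_cancel₀ _ hb.ne'
  have hRbx : (R * b) ^ 2 = x := by rw [hRb]; exact Real.sq_sqrt hx0.le
  set Mz : ℤ := ⌊R⌋ with hMz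
  have hMz0 : 0 ≤ Mz := Int.floor_nonneg.mpr hR0.le
  have hMzR : (Mz : ℝ) ≤ R := Int.floor_le R
  have hRMz : R < (Mz : ℝ) + 1 := Int.lt_floor_add_one R
  set g : ℝ → ℝ := fun t => 2 * Real.sqrt (x - (t * b) ^ 2) with hg
  have hg_nonneg : ∀ t, 0 ≤ g t := fun t => by positivity
  have hg_le : ∀ t, g t ≤ 2 * Real.sqrt x := by
    intro t
    have : x - (t * b) ^ 2 ≤ x := by nlinarith [sq_nonneg (t * b)]
    have := Real.sqrt_le_sqrt this
    simp only [hg]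
    linarith
  have hg_even : ∀ m : ℤ, g (-m : ℤ) = g (m : ℤ) := by
    intro m; simp only [hg, Int.cast_neg]; ring_nf
  have hg_cont : Continuous g := by
    apply Continuous.mul continuous_const
    exact Real.continuous_sqrt.comp (by continuity)
  have hg_anti : AntitoneOn g (Set.Ici (0:ℝ)) := by
    intro t1 h1 t2 h2 h12
    simp only [Set.mem_Ici] at h1 h2
    apply mul_le_mul_of_nonneg_left _ (by norm_num : (0:ℝ) ≤ 2)
    apply Real.sqrt_le_sqrt
    nlinarith [mul_self_le_mul_self h1 h12, sq_nonneg b]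
  -- fiberwise decomposition
  have hmem_fst : ∀ p ∈ fset a hb x, p.1 ∈ Finset.Icc (-Mz) Mz := by
    intro p hp
    rw [mem_fset hb] at hp
    unfold Q at hp
    have h1 : ((p.1 : ℝ) * b) ^ 2 ≤ x := by nlinarith [sq_nonneg ((p.2 : ℝ) + (p.1 : ℝ) * a)]
    have habs : |(p.1 : ℝ)| ≤ R := by
      rw [hR, le_div_iff₀ hb]
      have := Real.sqrt_le_sqrt h1
      rwa [Real.sqrt_sq_eq_abs, abs_mul, abs_of_pos hb] at this
    rw [abs_le] at habs
    rw [Finset.mem_Icc]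
    constructor
    · rw [hMz, neg_le]
      exact Int.le_floor.mpr (by push_cast; linarith [habs.1])
    · rw [hMz]; exact Int.le_floor.mpr habs.2
  have hcard : ((fset a hb x).card : ℝ) =
      ∑ m ∈ Finset.Icc (-Mz) Mz, (((fset a hb x).filter (fun p => p.1 = m)).card : ℝ) := by
    rw [Finset.card_eq_sum_card_fiberwise hmem_fst]
    push_cast
    rfl
  have hmb : ∀ m ∈ Finset.Icc (-Mz) Mz, ((m : ℝ) * b) ^ 2 ≤ x := by
    intro m hm
    rw [Finset.mem_Icc] at hm
    have h1 : |(m : ℝ)| ≤ R := by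
      rw [abs_le]
      constructor
      · have : (-Mz : ℤ) ≤ m := hm.1
        have : ((-Mz : ℤ) : ℝ) ≤ (m : ℝ) := by exact_mod_cast this
        push_cast at this
        linarith
      · have : ((m : ℤ) : ℝ) ≤ (Mz : ℝ) := by exact_mod_cast hm.2
        linarith
    have h2 : (m : ℝ) ^ 2 ≤ R ^ 2 := by
      nlinarith [sq_abs (m : ℝ), mul_self_le_mul_self (abs_nonneg (m : ℝ)) h1]
    nlinarith [hRbx, sq_nonneg b, mul_le_mul_of_nonneg_left h2 (sq_nonneg b)]
  -- per-fiber bound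
  have hfiber : ∀ m ∈ Finset.Icc (-Mz) Mz,
      |(((fset a hb x).filter (fun p => p.1 = m)).card : ℝ) - g (m : ℤ)| ≤ 1 := by
    intro m hm
    rw [fiber_eq a hb (hmb m hm), Finset.card_map]
    set c := Real.sqrt (x - ((m : ℝ) * b) ^ 2) with hc
    have hc0 : 0 ≤ c := Real.sqrt_nonneg _
    have key := Icc_card_near (l := -c - m * a) (u := c - m * a) (by linarith)
    have : (c - (m:ℝ) * a) - (-c - (m:ℝ) * a) = g (m : ℤ) := by
      simp only [hg, hc]
      ring
    rwa [this] at key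
  have hstep1 : |((fset a hb x).card : ℝ) - ∑ m ∈ Finset.Icc (-Mz) Mz, g (m : ℤ)| ≤
      2 * R + 1 := by
    rw [hcard, ← Finset.sum_sub_distrib]
    calc |∑ m ∈ Finset.Icc (-Mz) Mz, ((((fset a hb x).filter (fun p => p.1 = m)).card : ℝ) - g (m:ℤ))|
        ≤ ∑ m ∈ Finset.Icc (-Mz) Mz, |(((fset a hb x).filter (fun p => p.1 = m)).card : ℝ) - g (m:ℤ)| :=
          Finset.abs_sum_le_sum_abs _ _
      _ ≤ ∑ m ∈ Finset.Icc (-Mz) Mz, 1 := Finset.sum_le_sum hfiber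
      _ = ((Finset.Icc (-Mz) Mz).card : ℝ) := by simp
      _ ≤ 2 * R + 1 := by
          rw [Int.card_Icc]
          have : (Mz + 1 - (-Mz)).toNat = (2 * Mz + 1).toNat := by ring_nf
          rw [this]
          have h2 : ((2 * Mz + 1).toNat : ℝ) = ((2 * Mz + 1 : ℤ) : ℝ) := by
            exact_mod_cast Int.toNat_of_nonneg (by omega)
          rw [h2]
          push_cast
          linarith
  -- symmetric sum
  set Sg := ∑ m ∈ Finset.Icc (1:ℤ) Mz, g (m : ℤ) with hSg
  have hsym : ∑ m ∈ Finset.Icc (-Mz) Mz, g (m : ℤ) = g 0 + 2 * Sg := by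
    have := sum_Icc_sym hMz0 (fun m => g (m : ℤ)) (fun m => hg_even m)
    simpa using this
  set Mn := Mz.toNat with hMn
  have hMnz : ((Mn : ℤ)) = Mz := Int.toNat_of_nonneg hMz0
  have hMnR : ((Mn : ℕ) : ℝ) = (Mz : ℝ) := by exact_mod_cast hMnz
  have hanti : AntitoneOn g (Set.Icc (0:ℝ) (0 + (Mn : ℕ))) :=
    hg_anti.mono (fun t ht => ht.1)
  have hSg_range : Sg = ∑ i ∈ Finset.range Mn, g (0 + ((i : ℕ) + 1 : ℕ)) := by
    rw [hSg]
    apply Finset.sum_nbij' (i := fun m : ℤ => (m - 1).toNat) (j := fun i : ℕ => (i : ℤ) + 1)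
    · intro m hm
      simp only [Finset.mem_Icc] at hm
      simp only [Finset.mem_range]
      omega
    · intro i hi
      simp only [Finset.mem_range] at hi
      simp only [Finset.mem_Icc]
      omega
    · intro m hm
      simp only [Finset.mem_Icc] at hm
      omega
    · intro i _
      omega
    · intro m hm
      simp only [Finset.mem_Icc] at hm
      have h1 : (((m - 1).toNat : ℤ) : ℝ) = (m : ℝ) - 1 := by
        rw [Int.toNat_of_nonneg (by omega)]; push_cast; ring
      congr 1
      push_cast at h1 ⊢
      linarith
  have h_upper : Sg ≤ ∫ t in (0:ℝ)..(0 + (Mn : ℕ)), g t := by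
    rw [hSg_range]
    exact hanti.sum_le_integral
  have h_lower : (∫ t in (0:ℝ)..(0 + (Mn : ℕ)), g t) ≤ g 0 + Sg := by
    have hle := hanti.integral_le_sum
    have : ∑ i ∈ Finset.range Mn, g (0 + (i : ℕ)) ≤ g 0 + Sg := by
      rw [hSg_range]
      cases Mn with
      | zero => simpa using hg_nonneg 0
      | succ n =>
        rw [Finset.sum_range_succ']
        have hsub : ∑ i ∈ Finset.range n, g (0 + ((i : ℕ) + 1 : ℕ)) ≤
            ∑ i ∈ Finset.range (n + 1), g (0 + ((i : ℕ) + 1 : ℕ)) :=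
          Finset.sum_le_sum_of_subset_of_nonneg
            (Finset.range_subset_range.mpr (Nat.le_succ n)) (fun i _ _ => hg_nonneg _)
        push_cast at hsub ⊢
        simp only [zero_add, add_zero] at hsub ⊢
        linarith
    linarith
  have hI : ∫ t in (0:ℝ)..R, g t = π * x / (2 * b) := integral_g hb hx0
  have hsplit : (∫ t in (0:ℝ)..((Mn : ℕ) : ℝ), g t) + (∫ t in ((Mn : ℕ) : ℝ)..R, g t) =
      ∫ t in (0:ℝ)..R, g t :=
    intervalIntegral.integral_add_adjacent_intervals
      (hg_cont.intervalIntegrable _ _) (hg_cont.intervalIntegrable _ _)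
  have hMnR' : ((Mn : ℕ) : ℝ) ≤ R := by rw [hMnR]; exact hMzR
  have htail_nonneg : 0 ≤ ∫ t in ((Mn : ℕ) : ℝ)..R, g t :=
    intervalIntegral.integral_nonneg hMnR' (fun u _ => hg_nonneg u)
  have htail_le : (∫ t in ((Mn : ℕ) : ℝ)..R, g t) ≤ 2 * Real.sqrt x := by
    have hb1 : ∀ t ∈ Set.uIoc ((Mn : ℕ) : ℝ) R, ‖g t‖ ≤ 2 * Real.sqrt x := by
      intro t _
      rw [Real.norm_eq_abs, abs_of_nonneg (hg_nonneg t)]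
      exact hg_le t
    have := intervalIntegral.norm_integral_le_of_norm_le_const hb1
    have hRmn : |R - ((Mn : ℕ) : ℝ)| ≤ 1 := by
      rw [abs_of_nonneg (by linarith), hMnR]
      linarith
    have h2 : ‖∫ t in ((Mn : ℕ) : ℝ)..R, g t‖ ≤ 2 * Real.sqrt x * 1 := by
      calc ‖∫ t in ((Mn : ℕ) : ℝ)..R, g t‖ ≤ 2 * Real.sqrt x * |R - ((Mn : ℕ) : ℝ)| := this
        _ ≤ 2 * Real.sqrt x * 1 := by
            apply mul_le_mul_of_nonneg_left hRmn (by positivity)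
    rw [Real.norm_eq_abs] at h2
    calc (∫ t in ((Mn : ℕ) : ℝ)..R, g t) ≤ |∫ t in ((Mn : ℕ) : ℝ)..R, g t| := le_abs_self _
      _ ≤ 2 * Real.sqrt x * 1 := h2
      _ = 2 * Real.sqrt x := by ring
  have hg0 : g 0 = 2 * Real.sqrt x := by simp [hg]
  have hint0Mn : ((0:ℝ) + (Mn : ℕ)) = ((Mn : ℕ) : ℝ) := by ring
  rw [hint0Mn] at h_upper h_lower
  have hSg_bound : |Sg - π * x / (2 * b)| ≤ 4 * Real.sqrt x := by
    rw [abs_le]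
    constructor
    · have : (∫ t in (0:ℝ)..((Mn : ℕ) : ℝ), g t) ≥ π * x / (2 * b) - 2 * Real.sqrt x := by
        linarith
      rw [hg0] at h_lower
      linarith
    · have : (∫ t in (0:ℝ)..((Mn : ℕ) : ℝ), g t) ≤ π * x / (2 * b) := by linarith
      linarith
  have hTb := abs_le.mp hstep1
  have hSb := abs_le.mp hSg_bound
  rw [hsym] at hTb
  have hpib : π * x / b = 2 * (π * x / (2 * b)) := by field_simp
  have hexp : (11 + 2 / b) * Real.sqrt x = 11 * Real.sqrt x + 2 * R := by
    rw [hR]; field_simp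
  rw [hg0] at hTb
  rw [abs_le]
  constructor
  · rw [hpib, hexp]
    linarith [hTb.1, hSb.1, hsx1]
  · rw [hpib, hexp]
    linarith [hTb.2, hSb.2, hsx1]

noncomputable def nfset (a : ℝ) {b : ℝ} (hb : 0 < b) (x : ℝ) : Finset (ℤ × ℤ) :=
  (fset a hb x).erase 0

lemma mem_nfset {a b : ℝ} (hb : 0 < b) {x : ℝ} {p : ℤ × ℤ} :
    p ∈ nfset a hb x ↔ p ≠ 0 ∧ Q a b p ≤ x := by
  rw [nfset, Finset.mem_erase, mem_fset hb]

lemma nfset_mono (a : ℝ) {b : ℝ} (hb : 0 < b) {x y : ℝ} (hxy : x ≤ y) :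
    nfset a hb x ⊆ nfset a hb y := by
  intro p hp
  rw [mem_nfset hb] at hp ⊢
  exact ⟨hp.1, hp.2.trans hxy⟩

noncomputable def Ncnt (a : ℝ) {b : ℝ} (hb : 0 < b) (x : ℝ) : ℝ :=
  ((nfset a hb x).card : ℝ)

lemma Ncnt_mono (a : ℝ) {b : ℝ} (hb : 0 < b) : Monotone (Ncnt a hb) := by
  intro x y hxy
  unfold Ncnt
  exact_mod_cast Finset.card_le_card (nfset_mono a hb hxy)

lemma Ncnt_bound (a : ℝ) {b : ℝ} (hb : 0 < b) {x : ℝ} (hx : 1 ≤ x) :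
    |Ncnt a hb x - π * x / b| ≤ (12 + 2 / b) * Real.sqrt x := by
  have hsx1 : 1 ≤ Real.sqrt x := by
    rw [show (1:ℝ) = Real.sqrt 1 by simp]; exact Real.sqrt_le_sqrt hx
  have h0 : (0 : ℤ × ℤ) ∈ fset a hb x := by
    rw [mem_fset hb]
    unfold Q
    norm_num
    linarith
  have hc : ((fset a hb x).card : ℝ) = Ncnt a hb x + 1 := by
    rw [Ncnt, nfset, Finset.card_erase_of_mem h0]
    have : 1 ≤ (fset a hb x).card := Finset.card_pos.mpr ⟨0, h0⟩
    push_cast [Nat.cast_sub this]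
    ring
  have := card_fset_bound a hb hx
  rw [hc] at this
  rw [abs_le] at this ⊢
  constructor <;> nlinarith [this.1, this.2, hsx1, Real.sqrt_nonneg x, div_pos (by norm_num : (0:ℝ) < 2) hb]

noncomputable def Scnt (a : ℝ) {b : ℝ} (hb : 0 < b) (x : ℝ) : ℝ :=
  ∑ p ∈ nfset a hb x, 1 / Q a b p

lemma integral_inv_sq {u v : ℝ} (hu : 0 < u) (huv : u ≤ v) :
    ∫ t in u..v, ((t : ℝ) ^ 2)⁻¹ = u⁻¹ - v⁻¹ := by
  have h0 : (0 : ℝ) ∉ Set.uIcc u v := by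
    rw [Set.uIcc_of_le huv]
    intro h
    exact absurd h.1 (not_le.mpr hu)
  have heq : Set.EqOn (fun t : ℝ => (t ^ 2)⁻¹) (fun t : ℝ => t ^ (-2 : ℤ)) (Set.uIcc u v) := by
    intro t _
    simp [zpow_neg]
  rw [intervalIntegral.integral_congr heq, integral_zpow (Or.inr ⟨by norm_num, h0⟩)]
  norm_num [zpow_neg_one]
  ring

lemma ind_integrable (a : ℝ) {b : ℝ} (hb : 0 < b) (p : ℤ × ℤ) {u v : ℝ}
    (hu : 0 < u) (hv : 0 < v) :
    IntervalIntegrable (Set.indicator (Set.Ici (Q a b p)) (fun t : ℝ => (t ^ 2)⁻¹)) volume u v := by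
  have hf : IntervalIntegrable (fun t : ℝ => (t ^ 2)⁻¹) volume u v := by
    apply ContinuousOn.intervalIntegrable
    apply ContinuousOn.inv₀ (by fun_prop)
    intro t ht
    have ht' : 0 < t := by
      rcases Set.mem_uIcc.mp ht with h | h <;> linarith [h.1]
    positivity
  rw [intervalIntegrable_iff] at hf ⊢
  exact hf.indicator measurableSet_Ici

lemma abel (a : ℝ) {b : ℝ} (hb : 0 < b) {x : ℝ} (hx : 1 ≤ x) :
    Scnt a hb x = Scnt a hb 1 + (Ncnt a hb x - Ncnt a hb 1) / x
      + ∫ t in (1:ℝ)..x, (Ncnt a hb t - Ncnt a hb 1) * ((t : ℝ) ^ 2)⁻¹ := by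
  classical
  set D := nfset a hb x \ nfset a hb 1 with hD
  have hsub : nfset a hb 1 ⊆ nfset a hb x := nfset_mono a hb hx
  have hDmem : ∀ p ∈ D, 1 < Q a b p ∧ Q a b p ≤ x := by
    intro p hp
    rw [hD, Finset.mem_sdiff, mem_nfset hb, mem_nfset hb] at hp
    refine ⟨?_, hp.1.2⟩
    by_contra h
    push_neg at h
    exact hp.2 ⟨hp.1.1, h⟩
  set ind : ℤ × ℤ → ℝ → ℝ :=
    fun p => Set.indicator (Set.Ici (Q a b p)) (fun t : ℝ => (t ^ 2)⁻¹) with hind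
  -- sum splitting
  have hSsum : Scnt a hb x = Scnt a hb 1 + ∑ p ∈ D, 1 / Q a b p := by
    rw [Scnt, Scnt, hD, ← Finset.sum_sdiff hsub]
    ring
  -- each term via integral
  have hint_ind : ∀ p ∈ D, ∫ t in (1:ℝ)..x, ind p t = 1 / Q a b p - 1 / x := by
    intro p hp
    obtain ⟨h1, h2⟩ := hDmem p hp
    have hq0 : (0:ℝ) < Q a b p := by linarith
    have hadj : (∫ t in (1:ℝ)..(Q a b p), ind p t) + (∫ t in (Q a b p)..x, ind p t)
        = ∫ t in (1:ℝ)..x, ind p t :=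
      intervalIntegral.integral_add_adjacent_intervals
        (ind_integrable a hb p one_pos hq0) (ind_integrable a hb p hq0 (by linarith))
    have hz : ∫ t in (1:ℝ)..(Q a b p), ind p t = 0 := by
      rw [intervalIntegral.integral_of_le h1.le]
      have hnull : (volume : Measure ℝ) {Q a b p} = 0 := measure_singleton _
      have hae : ∀ᵐ t ∂(volume : Measure ℝ), t ∉ ({Q a b p} : Set ℝ) :=
        MeasureTheory.measure_eq_zero_iff_ae_notMem.mp hnull
      have : ∀ᵐ t ∂((volume : Measure ℝ).restrict (Set.Ioc 1 (Q a b p))), ind p t = 0 := by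
        filter_upwards [MeasureTheory.ae_restrict_of_ae hae,
          MeasureTheory.ae_restrict_mem measurableSet_Ioc] with t ht1 ht2
        apply Set.indicator_of_notMem
        rw [Set.mem_Ici, not_le]
        rcases lt_or_eq_of_le ht2.2 with h | h
        · exact h
        · exact absurd (h ▸ rfl) ht1
      exact MeasureTheory.integral_eq_zero_of_ae this
    have hs : ∫ t in (Q a b p)..x, ind p t = 1 / Q a b p - 1 / x := by
      have hEq : Set.EqOn (ind p) (fun t : ℝ => (t ^ 2)⁻¹) (Set.uIcc (Q a b p) x) := by
        intro t ht
        rw [Set.uIcc_of_le h2] at ht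
        exact Set.indicator_of_mem ht.1 _
      rw [intervalIntegral.integral_congr hEq, integral_inv_sq hq0 h2]
      rw [one_div, one_div]
    rw [← hadj, hz, hs]
    ring
  -- card of D
  have hcardD : (D.card : ℝ) = Ncnt a hb x - Ncnt a hb 1 := by
    rw [hD, Finset.card_sdiff_of_subset hsub, Ncnt, Ncnt]
    push_cast [Nat.cast_sub (Finset.card_le_card hsub)]
    ring
  -- pointwise count identity
  have hcount : ∀ t ∈ Set.uIcc (1:ℝ) x,
      (∑ p ∈ D, ind p t) = (Ncnt a hb t - Ncnt a hb 1) * ((t : ℝ) ^ 2)⁻¹ := by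
    intro t ht
    rw [Set.uIcc_of_le hx] at ht
    obtain ⟨h1t, htx⟩ := ht
    have heq : ∀ p ∈ D, ind p t = if Q a b p ≤ t then (t ^ 2)⁻¹ else 0 := by
      intro p _
      rw [hind]
      simp [Set.indicator_apply, Set.mem_Ici]
    rw [Finset.sum_congr rfl heq, ← Finset.sum_filter, Finset.sum_const]
    have hfilter : D.filter (fun p => Q a b p ≤ t) = nfset a hb t \ nfset a hb 1 := by
      ext p
      rw [Finset.mem_filter, hD, Finset.mem_sdiff, Finset.mem_sdiff,
        mem_nfset hb, mem_nfset hb, mem_nfset hb]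
      constructor
      · rintro ⟨⟨⟨hp0, _⟩, hn1⟩, hqt⟩
        exact ⟨⟨hp0, hqt⟩, hn1⟩
      · rintro ⟨⟨hp0, hqt⟩, hn1⟩
        exact ⟨⟨⟨hp0, hqt.trans htx⟩, hn1⟩, hqt⟩
    rw [hfilter]
    have hsubt : nfset a hb 1 ⊆ nfset a hb t := nfset_mono a hb h1t
    have : ((nfset a hb t \ nfset a hb 1).card : ℝ) = Ncnt a hb t - Ncnt a hb 1 := by
      rw [Finset.card_sdiff_of_subset hsubt, Ncnt, Ncnt]
      push_cast [Nat.cast_sub (Finset.card_le_card hsubt)]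
      ring
    rw [nsmul_eq_mul, this]
  -- swap sum and integral
  have hswap : ∑ p ∈ D, ∫ t in (1:ℝ)..x, ind p t
      = ∫ t in (1:ℝ)..x, (Ncnt a hb t - Ncnt a hb 1) * ((t : ℝ) ^ 2)⁻¹ := by
    rw [← intervalIntegral.integral_finset_sum
      (fun p _ => ind_integrable a hb p one_pos (by linarith : (0:ℝ) < x))]
    exact intervalIntegral.integral_congr hcount
  -- assemble
  rw [hSsum]
  have : ∑ p ∈ D, 1 / Q a b p = ∑ p ∈ D, (1 / x + ∫ t in (1:ℝ)..x, ind p t) := by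
    apply Finset.sum_congr rfl
    intro p hp
    rw [hint_ind p hp]
    ring
  rw [this, Finset.sum_add_distrib, Finset.sum_const, hswap, nsmul_eq_mul, hcardD]
  ring

lemma absSq_eq (τ : ℂ) (p : ℤ × ℤ) :
    ‖(p.1 : ℂ) * τ + (p.2 : ℂ)‖ ^ 2 = Q τ.re τ.im p := by
  rw [Complex.sq_norm, Complex.normSq_apply]
  simp only [Complex.add_re, Complex.add_im, Complex.mul_re, Complex.mul_im,
    Complex.intCast_re, Complex.intCast_im, Q]
  ring

end LatticeLog

open LatticeLog MeasureTheory

/-- for the lattice `Λ = ℤ ⊕ ℤτ` (`Im τ > 0`) there are a constant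
`η_Λ ∈ ℝ` and `C > 0` with
`|∑_{0 ≠ μ ∈ Λ, |μ|² ≤ x} 1/|μ|² - (π/Im τ)(log x + η)| ≤ C x^{-1/2}` for all
`x ≥ 1`. -/
theorem lattice_log_asymptotic (τ : ℂ) (hτ : 0 < τ.im) :
    ∃ η : ℝ, ∃ C > (0 : ℝ), ∀ x : ℝ, 1 ≤ x →
      |(∑' mn : ℤ × ℤ,
          if mn ≠ 0 ∧ ‖(mn.1 : ℂ) * τ + (mn.2 : ℂ)‖ ^ 2 ≤ x then
            1 / ‖(mn.1 : ℂ) * τ + (mn.2 : ℂ)‖ ^ 2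
          else 0)
        - Real.pi / τ.im * (Real.log x + η)| ≤ C * x ^ (-(1 : ℝ) / 2) := by
  classical
  set a : ℝ := τ.re with ha
  set b : ℝ := τ.im with hbdef
  set C₀ : ℝ := 12 + 2 / b with hC₀
  have hC₀pos : 0 < C₀ := by rw [hC₀]; positivity
  have hNmeas : Measurable (Ncnt a hτ) := (Ncnt_mono a hτ).measurable
  set F : ℝ → ℝ := fun t => (Ncnt a hτ t - π / b * t) / t ^ 2 with hF
  have hFmeas : Measurable F := by
    apply Measurable.div
    · exact hNmeas.sub (by fun_prop)
    · fun_prop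
  have hEb : ∀ t, 1 ≤ t → |Ncnt a hτ t - π / b * t| ≤ C₀ * Real.sqrt t := by
    intro t ht
    have h := Ncnt_bound a hτ ht
    have he : π / b * t = π * t / b := by ring
    rw [he, hC₀]
    exact h
  have hbound : ∀ t ∈ Set.Ioi (1:ℝ), ‖F t‖ ≤ C₀ * t ^ (-(3:ℝ)/2) := by
    intro t ht
    have ht1 : (1:ℝ) < t := ht
    have ht0 : (0:ℝ) < t := by linarith
    rw [hF]
    simp only
    rw [Real.norm_eq_abs, abs_div, abs_of_nonneg (by positivity : (0:ℝ) ≤ t ^ 2)]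
    have h2 : Real.sqrt t / t ^ 2 = t ^ (-(3:ℝ)/2) := by
      rw [Real.sqrt_eq_rpow, ← Real.rpow_natCast t 2, ← Real.rpow_sub ht0]
      norm_num
    have h3 : |Ncnt a hτ t - π / b * t| / t ^ 2 ≤ C₀ * Real.sqrt t / t ^ 2 :=
      div_le_div_of_nonneg_right (hEb t ht1.le) (by positivity) |>.trans_eq rfl
    calc |Ncnt a hτ t - π / b * t| / t ^ 2 ≤ C₀ * Real.sqrt t / t ^ 2 := h3
      _ = C₀ * (Real.sqrt t / t ^ 2) := by ring
      _ = C₀ * t ^ (-(3:ℝ)/2) := by rw [h2]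
  have hgint : IntegrableOn (fun t : ℝ => C₀ * t ^ (-(3:ℝ)/2)) (Set.Ioi (1:ℝ)) :=
    (integrableOn_Ioi_rpow_of_lt (by norm_num) one_pos).const_mul C₀
  have hFint : IntegrableOn F (Set.Ioi (1:ℝ)) := by
    apply MeasureTheory.Integrable.mono' hgint
      (hFmeas.aestronglyMeasurable)
    filter_upwards [ae_restrict_mem measurableSet_Ioi] with t ht
    exact hbound t ht
  set Iinf : ℝ := ∫ t in Set.Ioi (1:ℝ), F t with hIinf
  set η : ℝ := b / π * (Scnt a hτ 1 + Iinf - Ncnt a hτ 1 + π / b) with hη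
  refine ⟨η, 3 * C₀ + 1, by positivity, ?_⟩
  intro x hx
  have hx0 : (0:ℝ) < x := by linarith
  -- tsum equals finite sum
  have htsum : (∑' mn : ℤ × ℤ,
      if mn ≠ 0 ∧ ‖(mn.1 : ℂ) * τ + (mn.2 : ℂ)‖ ^ 2 ≤ x then
        1 / ‖(mn.1 : ℂ) * τ + (mn.2 : ℂ)‖ ^ 2
      else 0) = Scnt a hτ x := by
    rw [Scnt]
    rw [tsum_eq_sum (s := nfset a hτ x) ?_]
    · apply Finset.sum_congr rfl
      intro p hp
      rw [mem_nfset hτ] at hp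
      rw [if_pos (by rw [absSq_eq]; exact hp), absSq_eq]
    · intro p hp
      rw [mem_nfset hτ] at hp
      rw [if_neg]
      rw [absSq_eq]
      exact hp
  rw [htsum]
  -- Abel summation
  have habel := abel a hτ hx
  -- interval integral decomposition
  have hFii : IntervalIntegrable F volume 1 x := by
    rw [intervalIntegrable_iff, Set.uIoc_of_le hx]
    exact hFint.mono_set Set.Ioc_subset_Ioi_self
  have h1t : IntervalIntegrable (fun t : ℝ => π / b * (1 / t)) volume 1 x := by
    apply ContinuousOn.intervalIntegrable
    apply ContinuousOn.mul continuousOn_const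
    apply ContinuousOn.div continuousOn_const continuousOn_id
    intro t ht
    have ht' : 0 < t := by
      rcases Set.mem_uIcc.mp ht with h | h <;> linarith [h.1]
    exact ht'.ne'
  have h2t : IntervalIntegrable (fun t : ℝ => Ncnt a hτ 1 * (t ^ 2)⁻¹) volume 1 x := by
    apply ContinuousOn.intervalIntegrable
    apply ContinuousOn.mul continuousOn_const
    apply ContinuousOn.inv₀ (by fun_prop)
    intro t ht
    have ht' : 0 < t := by
      rcases Set.mem_uIcc.mp ht with h | h <;> linarith [h.1]
    positivity
  have heqint : Set.EqOn (fun t : ℝ => (Ncnt a hτ t - Ncnt a hτ 1) * ((t : ℝ) ^ 2)⁻¹)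
      (fun t : ℝ => (F t + π / b * (1 / t)) - Ncnt a hτ 1 * (t ^ 2)⁻¹) (Set.uIcc 1 x) := by
    intro t ht
    rw [Set.uIcc_of_le hx] at ht
    have ht0 : (0:ℝ) < t := by linarith [ht.1]
    simp only [hF]
    field_simp
    ring
  have hsplit_int : (∫ t in (1:ℝ)..x, (Ncnt a hτ t - Ncnt a hτ 1) * ((t : ℝ) ^ 2)⁻¹)
      = (∫ t in (1:ℝ)..x, F t) + π / b * Real.log x - Ncnt a hτ 1 * (1 - x⁻¹) := by
    rw [intervalIntegral.integral_congr heqint,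
      intervalIntegral.integral_sub (hFii.add h1t) h2t,
      intervalIntegral.integral_add hFii h1t,
      intervalIntegral.integral_const_mul, intervalIntegral.integral_const_mul,
      integral_one_div (by
        rw [Set.uIcc_of_le hx]
        intro h
        exact absurd h.1 (by norm_num) : (0:ℝ) ∉ Set.uIcc 1 x),
      integral_inv_sq one_pos hx]
    norm_num
  -- split the improper integral
  have hFint_x : IntegrableOn F (Set.Ioi x) := hFint.mono_set (Set.Ioi_subset_Ioi hx)
  have hIoi_split : (∫ t in (1:ℝ)..x, F t) = Iinf - ∫ t in Set.Ioi x, F t := by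
    have hu : Set.Ioc 1 x ∪ Set.Ioi x = Set.Ioi 1 := Set.Ioc_union_Ioi_eq_Ioi hx
    have hdisj : Disjoint (Set.Ioc (1:ℝ) x) (Set.Ioi x) := by
      rw [Set.disjoint_left]
      intro t h1 h2
      exact absurd h1.2 (not_le.mpr h2)
    have hun := MeasureTheory.setIntegral_union hdisj measurableSet_Ioi
      (hFint.mono_set (by rw [← hu]; exact Set.subset_union_left))
      hFint_x (f := F) (μ := volume)
    rw [hu] at hun
    rw [intervalIntegral.integral_of_le hx]
    rw [hIinf, hun]
    ring
  -- tail bound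
  have hxhalf : (0:ℝ) < x ^ (-(1:ℝ)/2) := Real.rpow_pos_of_pos hx0 _
  have htail : |∫ t in Set.Ioi x, F t| ≤ 2 * C₀ * x ^ (-(1:ℝ)/2) := by
    have hgx : IntegrableOn (fun t : ℝ => C₀ * t ^ (-(3:ℝ)/2)) (Set.Ioi x) :=
      hgint.mono_set (Set.Ioi_subset_Ioi hx)
    have hb2 : ∀ᵐ t ∂(volume.restrict (Set.Ioi x)), ‖F t‖ ≤ C₀ * t ^ (-(3:ℝ)/2) := by
      filter_upwards [ae_restrict_mem measurableSet_Ioi] with t ht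
      exact hbound t (lt_of_le_of_lt hx ht)
    have hnorm := MeasureTheory.norm_integral_le_of_norm_le hgx hb2
    have hval : (∫ t in Set.Ioi x, C₀ * t ^ (-(3:ℝ)/2)) = 2 * C₀ * x ^ (-(1:ℝ)/2) := by
      rw [MeasureTheory.integral_const_mul, integral_Ioi_rpow_of_lt (by norm_num) hx0]
      have he : (-(3:ℝ)/2 + 1) = -(1:ℝ)/2 := by norm_num
      rw [he]
      field_simp
    rw [← Real.norm_eq_abs]
    calc ‖∫ t in Set.Ioi x, F t‖ ≤ ∫ t in Set.Ioi x, C₀ * t ^ (-(3:ℝ)/2) := hnorm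
      _ = 2 * C₀ * x ^ (-(1:ℝ)/2) := hval
  -- key identity
  have hπb : π / b * η = Scnt a hτ 1 + Iinf - Ncnt a hτ 1 + π / b := by
    rw [hη]
    have hπ : π ≠ 0 := Real.pi_ne_zero
    field_simp
  have hkey : Scnt a hτ x - π / b * (Real.log x + η)
      = (Ncnt a hτ x - π / b * x) / x - ∫ t in Set.Ioi x, F t := by
    rw [habel, hsplit_int, hIoi_split, mul_add, hπb]
    field_simp
    ring
  rw [hkey]
  -- final bounds
  have hmain : |(Ncnt a hτ x - π / b * x) / x| ≤ C₀ * x ^ (-(1:ℝ)/2) := by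
    rw [abs_div, abs_of_pos hx0]
    have hs : Real.sqrt x * Real.sqrt x = x := Real.mul_self_sqrt hx0.le
    have hs0 : Real.sqrt x ≠ 0 := by positivity
    have hsq : Real.sqrt x / x = x ^ (-(1:ℝ)/2) := by
      rw [show (-(1:ℝ)/2) = -((1:ℝ)/2) by ring, Real.rpow_neg hx0.le, ← Real.sqrt_eq_rpow,
        ← hs]
      field_simp
      rw [Real.sqrt_sq (Real.sqrt_nonneg x)]
    calc |Ncnt a hτ x - π / b * x| / x ≤ C₀ * Real.sqrt x / x :=
          div_le_div_of_nonneg_right (hEb x hx) hx0.le |>.trans_eq rfl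
      _ = C₀ * (Real.sqrt x / x) := by ring
      _ = C₀ * x ^ (-(1:ℝ)/2) := by rw [hsq]
  calc |(Ncnt a hτ x - π / b * x) / x - ∫ t in Set.Ioi x, F t|
      ≤ |(Ncnt a hτ x - π / b * x) / x| + |∫ t in Set.Ioi x, F t| := abs_sub _ _
    _ ≤ C₀ * x ^ (-(1:ℝ)/2) + 2 * C₀ * x ^ (-(1:ℝ)/2) := add_le_add hmain htail
    _ ≤ (3 * C₀ + 1) * x ^ (-(1:ℝ)/2) := by nlinarith [hxhalf]
end

section
/- Let τ ∈ ℂ with Im τ > 0 and let u, v ∈ ℝ be not both integers. Then for every s ∈ [1,2] the limit f(s) := lim_{x→∞} Σ_{(m,n)∈ℤ², 0<|mτ+n|²≤x} e^{2πi(mu+nv)} / |mτ+n|^{2s} exists, the function f is continuous on [1,2], and for s ∈ (1,2] it equals the absolutely convergent double sum Σ_{(m,n)∈ℤ², (m,n)≠(0,0)} e^{2πi(mu+nv)} / |mτ+n|^{2s}. -/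
/-- The summand `e^{2πi(mu+nv)}/|mτ+n|^{2s}` of the twisted lattice sum,
indexed by `(m,n) ∈ ℤ × ℤ`. -/
noncomputable def latticeTerm (τ : ℂ) (u v : ℝ) (s : ℝ) (mn : ℤ × ℤ) : ℂ :=
  Complex.exp (2 * (Real.pi : ℂ) * Complex.I *
      (((mn.1 : ℝ) * u + (mn.2 : ℝ) * v : ℝ) : ℂ)) /
    ((‖(mn.1 : ℂ) * τ + (mn.2 : ℂ)‖ ^ (2 * s) : ℝ) : ℂ)

namespace LatticeAux

noncomputable def Q (τ : ℂ) (p : ℤ × ℤ) : ℝ :=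
  ‖(p.1 : ℂ) * τ + (p.2 : ℂ)‖ ^ 2

lemma Q_eq (τ : ℂ) (p : ℤ × ℤ) :
    Q τ p = ((p.1 : ℝ) * τ.re + (p.2 : ℝ)) ^ 2 + ((p.1 : ℝ) * τ.im) ^ 2 := by
  rw [Q, Complex.sq_norm, Complex.normSq_apply]
  simp [Complex.add_re, Complex.add_im, Complex.mul_re, Complex.mul_im]
  ring

lemma Q_nonneg (τ : ℂ) (p : ℤ × ℤ) : 0 ≤ Q τ p := sq_nonneg _

lemma Q_pos {τ : ℂ} (hτ : τ.im ≠ 0) {p : ℤ × ℤ} (hp : p ≠ 0) : 0 < Q τ p := by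
  rcases eq_or_ne p.1 0 with h1 | h1
  · have h2 : p.2 ≠ 0 := by
      intro h2; exact hp (Prod.ext h1 h2)
    rw [Q_eq, h1]
    have : ((p.2 : ℝ)) ^ 2 > 0 := by
      have : (p.2 : ℝ) ≠ 0 := Int.cast_ne_zero.mpr h2
      positivity
    simpa using by positivity
  · rw [Q_eq]
    have h : ((p.1 : ℝ) * τ.im) ^ 2 > 0 := by
      have h1' : (p.1 : ℝ) ≠ 0 := Int.cast_ne_zero.mpr h1
      positivity
    nlinarith [sq_nonneg ((p.1 : ℝ) * τ.re + (p.2 : ℝ))]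

lemma sq_fst_le (τ : ℂ) (p : ℤ × ℤ) : ((p.1 : ℝ) * τ.im) ^ 2 ≤ Q τ p := by
  rw [Q_eq]; nlinarith [sq_nonneg ((p.1 : ℝ) * τ.re + (p.2 : ℝ))]

lemma sq_add_le (τ : ℂ) (p : ℤ × ℤ) : ((p.1 : ℝ) * τ.re + (p.2 : ℝ)) ^ 2 ≤ Q τ p := by
  rw [Q_eq]; nlinarith [sq_nonneg ((p.1 : ℝ) * τ.im)]

/-- The ball: nonzero lattice points with `Q ≤ x`, as a Finset. -/
noncomputable def B (τ : ℂ) (x : ℝ) : Finset (ℤ × ℤ) :=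
  ((Finset.Icc (-(⌈Real.sqrt x / |τ.im|⌉)) ⌈Real.sqrt x / |τ.im|⌉) ×ˢ
    (Finset.Icc (-(⌈Real.sqrt x + Real.sqrt x * |τ.re| / |τ.im|⌉))
      ⌈Real.sqrt x + Real.sqrt x * |τ.re| / |τ.im|⌉)).filter
    (fun p => p ≠ 0 ∧ Q τ p ≤ x)

lemma abs_fst_le {τ : ℂ} (hτ : τ.im ≠ 0) {p : ℤ × ℤ} {x : ℝ} (h : Q τ p ≤ x) :
    |(p.1 : ℝ)| ≤ Real.sqrt x / |τ.im| := by
  have h1 : ((p.1 : ℝ) * τ.im) ^ 2 ≤ x := (sq_fst_le τ p).trans h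
  have h2 : |(p.1 : ℝ) * τ.im| ≤ Real.sqrt x := by
    rw [← Real.sqrt_sq_eq_abs]
    exact Real.sqrt_le_sqrt h1
  rw [abs_mul] at h2
  have him : 0 < |τ.im| := abs_pos.mpr hτ
  rw [le_div_iff₀ him]
  exact h2

lemma abs_snd_le {τ : ℂ} (hτ : τ.im ≠ 0) {p : ℤ × ℤ} {x : ℝ} (h : Q τ p ≤ x) :
    |(p.2 : ℝ)| ≤ Real.sqrt x + Real.sqrt x * |τ.re| / |τ.im| := by
  have h1 : ((p.1 : ℝ) * τ.re + (p.2 : ℝ)) ^ 2 ≤ x := (sq_add_le τ p).trans h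
  have h2 : |(p.1 : ℝ) * τ.re + (p.2 : ℝ)| ≤ Real.sqrt x := by
    rw [← Real.sqrt_sq_eq_abs]; exact Real.sqrt_le_sqrt h1
  have h3 : |(p.1 : ℝ)| ≤ Real.sqrt x / |τ.im| := abs_fst_le hτ h
  have h4 : |(p.2 : ℝ)| ≤ |(p.1 : ℝ) * τ.re + (p.2 : ℝ)| + |(p.1 : ℝ) * τ.re| := by
    have h := abs_sub ((p.1 : ℝ) * τ.re + (p.2 : ℝ)) ((p.1 : ℝ) * τ.re)
    rwa [add_sub_cancel_left] at h
  have h5 : |(p.1 : ℝ) * τ.re| ≤ Real.sqrt x / |τ.im| * |τ.re| := by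
    rw [abs_mul]
    exact mul_le_mul_of_nonneg_right h3 (abs_nonneg _)
  calc |(p.2 : ℝ)| ≤ |(p.1 : ℝ) * τ.re + (p.2 : ℝ)| + |(p.1 : ℝ) * τ.re| := h4
    _ ≤ Real.sqrt x + Real.sqrt x / |τ.im| * |τ.re| := add_le_add h2 h5
    _ = Real.sqrt x + Real.sqrt x * |τ.re| / |τ.im| := by ring

lemma mem_B {τ : ℂ} (hτ : τ.im ≠ 0) {x : ℝ} {p : ℤ × ℤ} :
    p ∈ B τ x ↔ p ≠ 0 ∧ Q τ p ≤ x := by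
  constructor
  · intro h
    exact (Finset.mem_filter.mp h).2
  · intro h
    refine Finset.mem_filter.mpr ⟨Finset.mem_product.mpr ⟨?_, ?_⟩, h⟩
    · have := abs_fst_le hτ h.2
      have h2 : |(p.1 : ℝ)| ≤ (⌈Real.sqrt x / |τ.im|⌉ : ℝ) :=
        this.trans (Int.le_ceil _)
      have h3 : |p.1| ≤ ⌈Real.sqrt x / |τ.im|⌉ := by exact_mod_cast h2
      exact Finset.mem_Icc.mpr (abs_le.mp h3)
    · have := abs_snd_le hτ h.2
      have h2 : |(p.2 : ℝ)| ≤ (⌈Real.sqrt x + Real.sqrt x * |τ.re| / |τ.im|⌉ : ℝ) :=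
        this.trans (Int.le_ceil _)
      have h3 : |p.2| ≤ ⌈Real.sqrt x + Real.sqrt x * |τ.re| / |τ.im|⌉ := by exact_mod_cast h2
      exact Finset.mem_Icc.mpr (abs_le.mp h3)

lemma B_mono {τ : ℂ} (hτ : τ.im ≠ 0) {x y : ℝ} (hxy : x ≤ y) : B τ x ⊆ B τ y := by
  intro p hp
  rw [mem_B hτ] at *
  exact ⟨hp.1, hp.2.trans hxy⟩

lemma zero_not_mem_B {τ : ℂ} (x : ℝ) : (0 : ℤ × ℤ) ∉ B τ x := by
  intro h
  exact ((Finset.mem_filter.mp h).2).1 rfl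

noncomputable def ec (u : ℝ) : ℂ :=
  Complex.exp (2 * (Real.pi : ℂ) * Complex.I * (u : ℂ))

noncomputable def eterm (u v : ℝ) (p : ℤ × ℤ) : ℂ :=
  Complex.exp (2 * (Real.pi : ℂ) * Complex.I *
    (((p.1 : ℝ) * u + (p.2 : ℝ) * v : ℝ) : ℂ))

lemma norm_ec (u : ℝ) : ‖ec u‖ = 1 := by
  rw [ec, Complex.norm_exp]
  have : (2 * (Real.pi : ℂ) * Complex.I * (u : ℂ)).re = 0 := by
    simp [Complex.mul_re, Complex.mul_im]
  rw [this, Real.exp_zero]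

lemma ec_ne_zero (u : ℝ) : ec u ≠ 0 := Complex.exp_ne_zero _

lemma ec_ne_one {u : ℝ} (hu : ¬∃ a : ℤ, (a : ℝ) = u) : ec u ≠ 1 := by
  intro h
  rw [ec, Complex.exp_eq_one_iff] at h
  obtain ⟨n, hn⟩ := h
  refine hu ⟨n, ?_⟩
  have h2 : (2 * (Real.pi : ℂ) * Complex.I) * (u : ℂ) =
      (2 * (Real.pi : ℂ) * Complex.I) * (n : ℂ) := by
    rw [hn]; ring
  have h3 : (2 * (Real.pi : ℂ) * Complex.I) ≠ 0 := by
    simp [Real.pi_ne_zero, Complex.I_ne_zero]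
  have := mul_left_cancel₀ h3 h2
  exact_mod_cast this.symm

lemma eterm_eq (u v : ℝ) (p : ℤ × ℤ) :
    eterm u v p = ec u ^ p.1 * ec v ^ p.2 := by
  simp only [eterm, ec, ← Complex.exp_int_mul, ← Complex.exp_add]
  congr 1
  push_cast
  ring

lemma norm_eterm (u v : ℝ) (p : ℤ × ℤ) : ‖eterm u v p‖ = 1 := by
  rw [eterm_eq, norm_mul, norm_zpow, norm_zpow, norm_ec, norm_ec, one_zpow, one_zpow, one_mul]

lemma norm_sum_zpow_Icc {b : ℂ} (hb : ‖b‖ = 1) (hb1 : b ≠ 1) (l r : ℤ) :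
    ‖∑ n ∈ Finset.Icc l r, b ^ n‖ ≤ 2 / ‖b - 1‖ := by
  have hbne : b ≠ 0 := by
    intro h; rw [h] at hb; simp at hb
  have hb1' : (0:ℝ) < ‖b - 1‖ := norm_pos_iff.mpr (sub_ne_zero.mpr hb1)
  rcases lt_or_ge r l with h | h
  · rw [Finset.Icc_eq_empty (not_le.mpr h), Finset.sum_empty, norm_zero]
    positivity
  · set N : ℕ := (r - l).toNat + 1 with hN
    have key : ∑ n ∈ Finset.Icc l r, b ^ n = b ^ l * ∑ k ∈ Finset.range N, b ^ k := by
      rw [Finset.mul_sum]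
      refine Finset.sum_nbij' (fun n => (n - l).toNat) (fun k => l + (k : ℤ)) ?_ ?_ ?_ ?_ ?_
      · intro n hn
        rw [Finset.mem_Icc] at hn
        rw [Finset.mem_range, hN]
        omega
      · intro k hk
        rw [Finset.mem_range, hN] at hk
        rw [Finset.mem_Icc]
        omega
      · intro n hn
        rw [Finset.mem_Icc] at hn
        omega
      · intro k hk
        rw [Finset.mem_range, hN] at hk
        omega
      · intro n hn
        rw [Finset.mem_Icc] at hn
        rw [← zpow_natCast b ((n - l).toNat), ← zpow_add₀ hbne]
        congr 1
        omega
    rw [key, geom_sum_eq hb1, norm_mul, norm_zpow, hb, one_zpow, one_mul, norm_div]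
    have hnum : ‖b ^ N - 1‖ ≤ 2 := by
      refine (norm_sub_le _ _).trans ?_
      rw [norm_pow, hb, one_pow, norm_one]
      norm_num
    gcongr

/-- The fiber of the ball over a fixed first coordinate, as a set of second coordinates. -/
noncomputable def Nset (τ : ℂ) (x : ℝ) (m : ℤ) : Finset ℤ :=
  ((B τ x).filter (fun p => p.1 = m)).image Prod.snd

lemma mem_Nset {τ : ℂ} {x : ℝ} {m n : ℤ} :
    n ∈ Nset τ x m ↔ (m, n) ∈ B τ x := by
  simp only [Nset, Finset.mem_image, Finset.mem_filter]
  constructor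
  · rintro ⟨p, ⟨hp, h1⟩, h2⟩
    rwa [show (m, n) = p from Prod.ext h1.symm h2.symm]
  · intro h
    exact ⟨(m, n), ⟨h, rfl⟩, rfl⟩

lemma sq_le_iff_mem {α d : ℝ} (hd : 0 ≤ d) (n : ℤ) :
    ((n : ℝ) + α) ^ 2 ≤ d ↔ ⌈-α - Real.sqrt d⌉ ≤ n ∧ n ≤ ⌊Real.sqrt d - α⌋ := by
  rw [Int.ceil_le, Int.le_floor]
  constructor
  · intro h
    have habs : |(n : ℝ) + α| ≤ Real.sqrt d := by
      rw [← Real.sqrt_sq_eq_abs]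
      exact Real.sqrt_le_sqrt h
    rw [abs_le] at habs
    constructor <;> linarith [habs.1, habs.2]
  · rintro ⟨h1, h2⟩
    have habs : |(n : ℝ) + α| ≤ Real.sqrt d := abs_le.mpr ⟨by linarith, by linarith⟩
    calc ((n : ℝ) + α) ^ 2 = |(n : ℝ) + α| ^ 2 := (_root_.sq_abs _).symm
      _ ≤ Real.sqrt d ^ 2 := by
          exact pow_le_pow_left₀ (abs_nonneg _) habs 2
      _ = d := Real.sq_sqrt hd

lemma Q_cond (τ : ℂ) (x : ℝ) (m n : ℤ) :
    Q τ (m, n) ≤ x ↔ ((n : ℝ) + (m : ℝ) * τ.re) ^ 2 ≤ x - ((m : ℝ) * τ.im) ^ 2 := by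
  rw [Q_eq]
  constructor <;> intro h <;> nlinarith [h]

lemma Nset_structure {τ : ℂ} (hτ : τ.im ≠ 0) (x : ℝ) (m : ℤ) :
    ∃ l r : ℤ, Nset τ x m = Finset.Icc l r ∨ Nset τ x m = (Finset.Icc l r).erase 0 := by
  rcases lt_or_ge x (((m : ℝ) * τ.im) ^ 2) with hd | hd
  · refine ⟨1, 0, Or.inl ?_⟩
    rw [Finset.Icc_eq_empty (by omega)]
    rw [Finset.eq_empty_iff_forall_notMem]
    intro n hn
    rw [mem_Nset, mem_B hτ, Q_cond] at hn
    nlinarith [hn.2, sq_nonneg ((n : ℝ) + (m : ℝ) * τ.re)]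
  · have hd0 : (0:ℝ) ≤ x - ((m : ℝ) * τ.im) ^ 2 := by linarith
    refine ⟨⌈-((m : ℝ) * τ.re) - Real.sqrt (x - ((m : ℝ) * τ.im) ^ 2)⌉,
      ⌊Real.sqrt (x - ((m : ℝ) * τ.im) ^ 2) - (m : ℝ) * τ.re⌋, ?_⟩
    have hiff : ∀ n : ℤ, Q τ (m, n) ≤ x ↔
        (⌈-((m : ℝ) * τ.re) - Real.sqrt (x - ((m : ℝ) * τ.im) ^ 2)⌉ ≤ n ∧
          n ≤ ⌊Real.sqrt (x - ((m : ℝ) * τ.im) ^ 2) - (m : ℝ) * τ.re⌋) := by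
      intro n
      rw [Q_cond]
      exact sq_le_iff_mem hd0 n
    rcases eq_or_ne m 0 with hm | hm
    · refine Or.inr ?_
      ext n
      rw [mem_Nset, mem_B hτ, Finset.mem_erase, Finset.mem_Icc, hiff n, Ne,
        Prod.mk_eq_zero, hm]
      tauto
    · refine Or.inl ?_
      ext n
      rw [mem_Nset, mem_B hτ, Finset.mem_Icc, hiff n, Ne, Prod.mk_eq_zero]
      simp [hm]

lemma fiber_bound {τ : ℂ} (hτ : τ.im ≠ 0) (u v : ℝ) (hv : ec v ≠ 1) (x : ℝ) (m : ℤ) :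
    ‖∑ p ∈ (B τ x).filter (fun p => p.1 = m), eterm u v p‖ ≤ 2 / ‖ec v - 1‖ + 1 := by
  have key : ∑ p ∈ (B τ x).filter (fun p => p.1 = m), eterm u v p
      = ec u ^ m * ∑ n ∈ Nset τ x m, ec v ^ n := by
    rw [Finset.mul_sum, Nset, Finset.sum_image ?inj]
    case inj =>
      intro p hp q hq hpq
      rw [Finset.mem_coe, Finset.mem_filter] at hp hq
      exact Prod.ext (hp.2.trans hq.2.symm) hpq
    refine Finset.sum_congr rfl ?_
    intro p hp
    rw [Finset.mem_filter] at hp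
    rw [eterm_eq, hp.2]
  rw [key, norm_mul, norm_zpow, norm_ec, one_zpow, one_mul]
  obtain ⟨l, r, hlr | hlr⟩ := Nset_structure hτ x m
  · rw [hlr]
    exact (norm_sum_zpow_Icc (norm_ec v) hv l r).trans (by linarith)
  · rw [hlr]
    rcases Finset.decidableMem 0 (Finset.Icc l r) with h0 | h0
    · rw [Finset.erase_eq_of_notMem h0]
      exact (norm_sum_zpow_Icc (norm_ec v) hv l r).trans (by linarith)
    · rw [Finset.sum_erase_eq_sub h0]
      refine (norm_sub_le _ _).trans ?_
      have h1 : ‖(ec v) ^ (0 : ℤ)‖ = 1 := by rw [zpow_zero, norm_one]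
      rw [h1]
      linarith [norm_sum_zpow_Icc (norm_ec v) hv l r]

lemma charSum_bound_aux {τ : ℂ} (hτ : τ.im ≠ 0) (u v : ℝ) (hv : ec v ≠ 1) :
    ∃ C : ℝ, 0 < C ∧ ∀ x : ℝ,
      ‖∑ p ∈ B τ x, eterm u v p‖ ≤ C * (1 + Real.sqrt x) := by
  have hb1 : (0:ℝ) < ‖ec v - 1‖ := norm_pos_iff.mpr (sub_ne_zero.mpr hv)
  have him : (0:ℝ) < |τ.im| := abs_pos.mpr hτ
  refine ⟨(3 + 2 / |τ.im|) * (2 / ‖ec v - 1‖ + 1), by positivity, fun x => ?_⟩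
  set M : ℤ := ⌈Real.sqrt x / |τ.im|⌉ with hM
  have hmaps : ∀ p ∈ B τ x, p.1 ∈ Finset.Icc (-M) M := by
    intro p hp
    rw [mem_B hτ] at hp
    have h1 : |(p.1 : ℝ)| ≤ Real.sqrt x / |τ.im| := abs_fst_le hτ hp.2
    have h2 : |(p.1 : ℝ)| ≤ (M : ℝ) := h1.trans (Int.le_ceil _)
    have h3 : |p.1| ≤ M := by exact_mod_cast h2
    exact Finset.mem_Icc.mpr (abs_le.mp h3)
  rw [← Finset.sum_fiberwise_of_maps_to hmaps (eterm u v)]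
  have step1 : ‖∑ m ∈ Finset.Icc (-M) M, ∑ p ∈ (B τ x).filter (fun p => p.1 = m), eterm u v p‖
      ≤ ((Finset.Icc (-M) M).card : ℝ) * (2 / ‖ec v - 1‖ + 1) := by
    refine (norm_sum_le _ _).trans ?_
    have h := Finset.sum_le_card_nsmul (Finset.Icc (-M) M)
      (fun m => ‖∑ p ∈ (B τ x).filter (fun p => p.1 = m), eterm u v p‖)
      (2 / ‖ec v - 1‖ + 1) (fun m _ => fiber_bound hτ u v hv x m)
    rwa [nsmul_eq_mul] at h
  refine step1.trans ?_
  have hsq : (0:ℝ) ≤ Real.sqrt x := Real.sqrt_nonneg x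
  have hM0 : 0 ≤ M := by
    rw [hM]
    exact Int.ceil_nonneg (by positivity)
  have hcard : ((Finset.Icc (-M) M).card : ℝ) = 2 * (M : ℝ) + 1 := by
    rw [Int.card_Icc, show M + 1 - -M = 2 * M + 1 by ring]
    exact_mod_cast Int.toNat_of_nonneg (show (0:ℤ) ≤ 2 * M + 1 by omega)
  have hMle : (M : ℝ) < Real.sqrt x / |τ.im| + 1 := Int.ceil_lt_add_one _
  rw [hcard]
  have hfac : (0:ℝ) ≤ 2 / ‖ec v - 1‖ + 1 := by positivity
  have hC : 2 * (M : ℝ) + 1 ≤ (3 + 2 / |τ.im|) * (1 + Real.sqrt x) := by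
    have h1 : 2 * (M : ℝ) + 1 ≤ 2 * (Real.sqrt x / |τ.im|) + 3 := by linarith
    have h2 : (3 + 2 / |τ.im|) * (1 + Real.sqrt x)
        = 3 + 3 * Real.sqrt x + 2 / |τ.im| + 2 * (Real.sqrt x / |τ.im|) := by ring
    have h3 : (0:ℝ) ≤ 2 / |τ.im| := by positivity
    linarith
  rw [show (3 + 2 / |τ.im|) * (2 / ‖ec v - 1‖ + 1) * (1 + Real.sqrt x)
      = ((3 + 2 / |τ.im|) * (1 + Real.sqrt x)) * (2 / ‖ec v - 1‖ + 1) by ring]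
  exact mul_le_mul_of_nonneg_right hC hfac

lemma eterm_swap (u v : ℝ) (p : ℤ × ℤ) : eterm v u p.swap = eterm u v p := by
  rw [eterm, eterm]
  congr 2
  rw [Prod.fst_swap, Prod.snd_swap]
  push_cast
  ring

lemma Q_swap {τ : ℂ} (hτ0 : τ ≠ 0) (p : ℤ × ℤ) :
    Q τ p = ‖τ‖ ^ 2 * Q τ⁻¹ p.swap := by
  rw [Q, Q, Prod.fst_swap, Prod.snd_swap]
  have h : (p.1 : ℂ) * τ + (p.2 : ℂ) = τ * ((p.2 : ℂ) * τ⁻¹ + (p.1 : ℂ)) := by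
    field_simp
    ring
  rw [h, norm_mul, mul_pow]

lemma im_ne_zero_of_pos {τ : ℂ} (hτ : 0 < τ.im) : τ ≠ 0 := by
  intro h
  rw [h] at hτ
  simp at hτ

lemma inv_im_ne_zero {τ : ℂ} (hτ : τ.im ≠ 0) : (τ⁻¹).im ≠ 0 := by
  have hτ0 : τ ≠ 0 := by
    intro h; rw [h] at hτ; simp at hτ
  rw [Complex.inv_im]
  have h2 : Complex.normSq τ ≠ 0 := (Complex.normSq_pos.mpr hτ0).ne'
  intro h
  rw [div_eq_zero_iff] at h
  rcases h with h | h
  · exact hτ (neg_eq_zero.mp h)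
  · exact h2 h

lemma B_swap {τ : ℂ} (hτ : τ.im ≠ 0) (x : ℝ) :
    (B τ x).image Prod.swap = B τ⁻¹ (x / ‖τ‖ ^ 2) := by
  have hτ0 : τ ≠ 0 := by intro h; rw [h] at hτ; simp at hτ
  have ha : (0:ℝ) < ‖τ‖ ^ 2 := by
    have := norm_pos_iff.mpr hτ0
    positivity
  ext q
  rw [Finset.mem_image, mem_B (inv_im_ne_zero hτ)]
  constructor
  · rintro ⟨p, hp, rfl⟩
    rw [mem_B hτ] at hp
    constructor
    · intro h
      apply hp.1
      rw [Prod.ext_iff] at h ⊢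
      exact ⟨h.2, h.1⟩
    · rw [le_div_iff₀ ha, mul_comm]
      calc ‖τ‖ ^ 2 * Q τ⁻¹ p.swap = Q τ p := (Q_swap hτ0 p).symm
        _ ≤ x := hp.2
  · rintro ⟨hq, hq2⟩
    refine ⟨q.swap, ?_, Prod.swap_swap q⟩
    rw [mem_B hτ]
    constructor
    · intro h
      apply hq
      rw [Prod.ext_iff] at h ⊢
      exact ⟨h.2, h.1⟩
    · rw [Q_swap hτ0 q.swap, Prod.swap_swap]
      rw [le_div_iff₀ ha] at hq2
      linarith [hq2]

lemma S_bound {τ : ℂ} (hτ : 0 < τ.im) {u v : ℝ}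
    (huv : ¬((∃ a : ℤ, (a : ℝ) = u) ∧ (∃ b : ℤ, (b : ℝ) = v))) :
    ∃ C : ℝ, 0 < C ∧ ∀ x : ℝ, ‖∑ p ∈ B τ x, eterm u v p‖ ≤ C * (1 + Real.sqrt x) := by
  by_cases hv : ∃ b : ℤ, (b : ℝ) = v
  · have hu : ¬∃ a : ℤ, (a : ℝ) = u := fun hu => huv ⟨hu, hv⟩
    have hτ0 : τ ≠ 0 := im_ne_zero_of_pos hτ
    have habs : (0:ℝ) < ‖τ‖ := norm_pos_iff.mpr hτ0
    obtain ⟨C, hC, hbd⟩ := charSum_bound_aux (inv_im_ne_zero hτ.ne') v u (ec_ne_one hu)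
    refine ⟨C * (1 + 1 / ‖τ‖), by positivity, fun x => ?_⟩
    have hswap : ∑ p ∈ B τ x, eterm u v p
        = ∑ q ∈ B τ⁻¹ (x / ‖τ‖ ^ 2), eterm v u q := by
      rw [← B_swap hτ.ne' x, Finset.sum_image ?inj]
      case inj =>
        intro p _ q _ h
        have := congrArg Prod.swap h
        rwa [Prod.swap_swap, Prod.swap_swap] at this
      exact (Finset.sum_congr rfl fun p _ => (eterm_swap u v p).symm)
    rw [hswap]
    refine (hbd _).trans ?_
    have hs : Real.sqrt (x / ‖τ‖ ^ 2) ≤ Real.sqrt x / ‖τ‖ := by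
      rcases le_or_gt 0 x with hx | hx
      · rw [Real.sqrt_div hx, Real.sqrt_sq habs.le]
      · rw [Real.sqrt_eq_zero'.mpr (le_of_lt (div_neg_of_neg_of_pos hx (by positivity)))]
        positivity
    have hsx : (0:ℝ) ≤ Real.sqrt x := Real.sqrt_nonneg x
    have key : C * (1 + Real.sqrt (x / ‖τ‖ ^ 2))
        ≤ C * (1 + Real.sqrt x / ‖τ‖) :=
      mul_le_mul_of_nonneg_left (by linarith) hC.le
    refine key.trans ?_
    rw [show C * (1 + 1 / ‖τ‖) * (1 + Real.sqrt x)
        = C * ((1 + 1 / ‖τ‖) * (1 + Real.sqrt x)) by ring]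
    refine mul_le_mul_of_nonneg_left ?_ hC.le
    have hinv : (0:ℝ) ≤ 1 / ‖τ‖ := by positivity
    have hexp : (1 + 1 / ‖τ‖) * (1 + Real.sqrt x)
        = 1 + Real.sqrt x + 1 / ‖τ‖ + Real.sqrt x / ‖τ‖ := by
      field_simp
      ring
    rw [hexp]
    linarith
  · exact charSum_bound_aux hτ.ne' u v (ec_ne_one hv)

/-- partial sums of the twisted lattice sum -/
noncomputable def P (τ : ℂ) (u v s x : ℝ) : ℂ :=
  ∑ p ∈ B τ x, eterm u v p * (((Q τ p ^ s : ℝ) : ℂ))⁻¹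

lemma int_repr {s q x : ℝ} (hs : 1 ≤ s) (hx : 0 < x) (hq : x < q) :
    ∫ t in Set.Ioi x, (if q ≤ t then t ^ (-s - 1) else 0 : ℝ) = q ^ (-s) / s := by
  have h1 : (fun t : ℝ => (if q ≤ t then t ^ (-s - 1) else 0 : ℝ))
      = Set.indicator (Set.Ici q) (fun t => t ^ (-s - 1)) := by
    funext t
    simp [Set.indicator_apply, Set.mem_Ici]
  rw [h1, MeasureTheory.integral_indicator measurableSet_Ici,
    MeasureTheory.Measure.restrict_restrict measurableSet_Ici]
  have h2 : Set.Ici q ∩ Set.Ioi x = Set.Ici q := by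
    apply Set.inter_eq_left.mpr
    intro t ht
    exact lt_of_lt_of_le hq ht
  rw [h2, MeasureTheory.integral_Ici_eq_integral_Ioi,
    integral_Ioi_rpow_of_lt (by linarith) (hx.trans hq)]
  rw [show -s - 1 + 1 = -s by ring]
  field_simp

lemma tail_bound {τ : ℂ} (hτ : 0 < τ.im) {u v : ℝ}
    (huv : ¬((∃ a : ℤ, (a : ℝ) = u) ∧ (∃ b : ℤ, (b : ℝ) = v))) :
    ∃ C1 : ℝ, 0 < C1 ∧ ∀ s ∈ Set.Icc (1:ℝ) 2, ∀ x y : ℝ, 1 ≤ x → x ≤ y →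
      ‖P τ u v s y - P τ u v s x‖ ≤ C1 / Real.sqrt x := by
  obtain ⟨C, hC, hS⟩ := S_bound hτ huv
  refine ⟨12 * C, by positivity, ?_⟩
  rintro s ⟨hs1, hs2⟩ x y hx1 hxy
  have hτ' : τ.im ≠ 0 := hτ.ne'
  have hx0 : (0:ℝ) < x := lt_of_lt_of_le one_pos hx1
  -- the difference as a sum over the shell
  have hsub : B τ x ⊆ B τ y := B_mono hτ' hxy
  have hdiff : P τ u v s y - P τ u v s x
      = ∑ p ∈ B τ y \ B τ x, eterm u v p * (((Q τ p ^ s : ℝ) : ℂ))⁻¹ := by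
    rw [P, P, Finset.sum_sdiff_eq_sub hsub]
  -- each term has Q p > x
  have hQgt : ∀ p ∈ B τ y \ B τ x, x < Q τ p := by
    intro p hp
    rw [Finset.mem_sdiff, mem_B hτ', mem_B hτ'] at hp
    by_contra h
    exact hp.2 ⟨hp.1.1, le_of_not_gt h⟩
  -- integrand
  set F : ℤ × ℤ → ℝ → ℂ := fun p t =>
    eterm u v p * ((if Q τ p ≤ t then t ^ (-s - 1) else 0 : ℝ) : ℂ) with hF
  have hint_h : ∀ p : ℤ × ℤ, MeasureTheory.IntegrableOn
      (fun t : ℝ => (if Q τ p ≤ t then t ^ (-s - 1) else 0 : ℝ)) (Set.Ioi x) := by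
    intro p
    have h1 : (fun t : ℝ => (if Q τ p ≤ t then t ^ (-s - 1) else 0 : ℝ))
        = Set.indicator (Set.Ici (Q τ p)) (fun t => t ^ (-s - 1)) := by
      funext t
      simp [Set.indicator_apply, Set.mem_Ici]
    rw [h1]
    exact (integrableOn_Ioi_rpow_of_lt (by linarith) hx0).indicator measurableSet_Ici
  have hint_F : ∀ p : ℤ × ℤ, MeasureTheory.IntegrableOn (F p) (Set.Ioi x) := by
    intro p
    exact ((hint_h p).ofReal.const_mul _)
  -- term = s * integral
  have hterm : ∀ p ∈ B τ y \ B τ x,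
      eterm u v p * (((Q τ p ^ s : ℝ) : ℂ))⁻¹ = (s:ℂ) * ∫ t in Set.Ioi x, F p t := by
    intro p hp
    have hq : x < Q τ p := hQgt p hp
    have hQpos : 0 < Q τ p := lt_trans hx0 hq
    have hint : ∫ t in Set.Ioi x, F p t
        = eterm u v p * ((∫ t in Set.Ioi x, (if Q τ p ≤ t then t ^ (-s - 1) else 0 : ℝ) : ℝ) : ℂ) := by
      rw [MeasureTheory.integral_const_mul]
      congr 1
      exact integral_ofReal
    rw [hint, int_repr hs1 hx0 hq]
    have hs0 : (s:ℝ) ≠ 0 := by linarith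
    rw [Complex.ofReal_div]
    rw [show ((Q τ p ^ s : ℝ) : ℂ)⁻¹ = ((Q τ p ^ (-s) : ℝ) : ℂ) by
      rw [Real.rpow_neg (Q_nonneg τ p), Complex.ofReal_inv]]
    push_cast
    field_simp
    rw [mul_div_cancel_right₀ _ (show (s:ℂ) ≠ 0 by exact_mod_cast hs0)]
  rw [hdiff, Finset.sum_congr rfl hterm, ← Finset.mul_sum]
  rw [← MeasureTheory.integral_finset_sum _ (fun p _ => hint_F p)]
  -- identify the integrand
  have hptwise : ∀ t ∈ Set.Ioi x,
      (∑ p ∈ B τ y \ B τ x, F p t)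
      = ((t ^ (-s - 1) : ℝ) : ℂ) *
        ((∑ p ∈ B τ (min y t), eterm u v p) - ∑ p ∈ B τ x, eterm u v p) := by
    intro t ht
    rw [Set.mem_Ioi] at ht
    have hxmin : x ≤ min y t := le_min hxy (le_of_lt ht)
    have hset : (B τ y \ B τ x).filter (fun p => Q τ p ≤ t) = B τ (min y t) \ B τ x := by
      ext p
      simp only [Finset.mem_filter, Finset.mem_sdiff, mem_B hτ', le_min_iff]
      tauto
    calc ∑ p ∈ B τ y \ B τ x, F p t
        = ∑ p ∈ (B τ y \ B τ x).filter (fun p => Q τ p ≤ t),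
            eterm u v p * ((t ^ (-s - 1) : ℝ) : ℂ) := by
          rw [Finset.sum_filter]
          refine Finset.sum_congr rfl fun p _ => ?_
          rw [hF]
          by_cases h : Q τ p ≤ t <;> simp [h]
      _ = ((t ^ (-s - 1) : ℝ) : ℂ) * ∑ p ∈ B τ (min y t) \ B τ x, eterm u v p := by
          rw [hset, ← Finset.sum_mul, mul_comm]
      _ = _ := by
          rw [Finset.sum_sdiff_eq_sub (B_mono hτ' hxmin)]
  rw [MeasureTheory.setIntegral_congr_fun measurableSet_Ioi hptwise]
  -- now bound everything
  have hbound : ∀ t ∈ Set.Ioi x,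
      ‖((t ^ (-s - 1) : ℝ) : ℂ) *
        ((∑ p ∈ B τ (min y t), eterm u v p) - ∑ p ∈ B τ x, eterm u v p)‖
      ≤ 2 * C * (t ^ (-2 : ℝ) + t ^ (-3/2 : ℝ)) := by
    intro t ht
    rw [Set.mem_Ioi] at ht
    have ht1 : (1:ℝ) ≤ t := hx1.trans (le_of_lt ht)
    have ht0 : (0:ℝ) < t := lt_of_lt_of_le one_pos ht1
    rw [norm_mul, Complex.norm_real, Real.norm_eq_abs,
      _root_.abs_of_nonneg (Real.rpow_nonneg ht0.le _)]
    have h1 : ‖(∑ p ∈ B τ (min y t), eterm u v p) - ∑ p ∈ B τ x, eterm u v p‖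
        ≤ 2 * C * (1 + Real.sqrt t) := by
      refine (norm_sub_le _ _).trans ?_
      have ha := hS (min y t)
      have hb := hS x
      have hsa : Real.sqrt (min y t) ≤ Real.sqrt t :=
        Real.sqrt_le_sqrt (min_le_right _ _)
      have hsb : Real.sqrt x ≤ Real.sqrt t := Real.sqrt_le_sqrt (le_of_lt ht)
      have h2 : C * (1 + Real.sqrt (min y t)) ≤ C * (1 + Real.sqrt t) :=
        mul_le_mul_of_nonneg_left (by linarith) hC.le
      have h3 : C * (1 + Real.sqrt x) ≤ C * (1 + Real.sqrt t) :=
        mul_le_mul_of_nonneg_left (by linarith) hC.le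
      linarith [ha.trans h2, hb.trans h3]
    have h4 : t ^ (-s - 1) * (2 * C * (1 + Real.sqrt t))
        ≤ 2 * C * (t ^ (-2 : ℝ) + t ^ (-3/2 : ℝ)) := by
      have h5 : t ^ (-s - 1) ≤ t ^ (-2 : ℝ) :=
        Real.rpow_le_rpow_of_exponent_le ht1 (by linarith)
      have h6 : t ^ (-s - 1) * Real.sqrt t ≤ t ^ (-3/2 : ℝ) := by
        rw [Real.sqrt_eq_rpow, ← Real.rpow_add ht0]
        exact Real.rpow_le_rpow_of_exponent_le ht1 (by linarith)
      have h7 : (0:ℝ) ≤ t ^ (-s - 1) := Real.rpow_nonneg ht0.le _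
      have h8 : (0:ℝ) ≤ Real.sqrt t := Real.sqrt_nonneg t
      nlinarith
    calc t ^ (-s - 1) * ‖_ - _‖ ≤ t ^ (-s - 1) * (2 * C * (1 + Real.sqrt t)) := by
          exact mul_le_mul_of_nonneg_left h1 (Real.rpow_nonneg ht0.le _)
      _ ≤ _ := h4
  have hφint : MeasureTheory.IntegrableOn
      (fun t : ℝ => 2 * C * (t ^ (-2 : ℝ) + t ^ (-3/2 : ℝ))) (Set.Ioi x) := by
    exact ((integrableOn_Ioi_rpow_of_lt (by norm_num) hx0).add
      (integrableOn_Ioi_rpow_of_lt (by norm_num) hx0)).const_mul _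
  have hnorm := MeasureTheory.norm_integral_le_of_norm_le hφint
    ((MeasureTheory.ae_restrict_iff' measurableSet_Ioi).mpr
      (MeasureTheory.ae_of_all _ hbound))
  have hI : ∫ t in Set.Ioi x, 2 * C * (t ^ (-2 : ℝ) + t ^ (-3/2 : ℝ))
      = 2 * C * (x ^ (-1 : ℝ) + 2 * x ^ (-1/2 : ℝ)) := by
    rw [MeasureTheory.integral_const_mul,
      MeasureTheory.integral_add (integrableOn_Ioi_rpow_of_lt (by norm_num) hx0)
        (integrableOn_Ioi_rpow_of_lt (by norm_num) hx0),
      integral_Ioi_rpow_of_lt (by norm_num) hx0,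
      integral_Ioi_rpow_of_lt (by norm_num) hx0]
    norm_num
    left
    ring
  have hxhalf : x ^ (-1/2 : ℝ) = (Real.sqrt x)⁻¹ := by
    rw [show (-1/2 : ℝ) = -(1/2) by norm_num, Real.rpow_neg hx0.le,
      ← Real.sqrt_eq_rpow]
  have hfinal : 2 * C * (x ^ (-1 : ℝ) + 2 * x ^ (-1/2 : ℝ)) ≤ 6 * C * x ^ (-1/2 : ℝ) := by
    have h9 : x ^ (-1 : ℝ) ≤ x ^ (-1/2 : ℝ) :=
      Real.rpow_le_rpow_of_exponent_le hx1 (by norm_num)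
    nlinarith [Real.rpow_nonneg hx0.le (-1/2 : ℝ)]
  rw [norm_mul]
  have hs_norm : ‖(s:ℂ)‖ ≤ 2 := by
    rw [Complex.norm_real, Real.norm_eq_abs, abs_of_pos (by linarith)]
    exact hs2
  have hIle : ‖∫ t in Set.Ioi x, ((t ^ (-s - 1) : ℝ) : ℂ) *
      ((∑ p ∈ B τ (min y t), eterm u v p) - ∑ p ∈ B τ x, eterm u v p)‖
      ≤ 6 * C * x ^ (-1/2 : ℝ) := by
    rw [hI] at hnorm
    exact hnorm.trans hfinal
  have heq : 12 * C / Real.sqrt x = 2 * (6 * C * x ^ (-1/2 : ℝ)) := by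
    rw [hxhalf]
    rw [div_eq_mul_inv]
    ring
  rw [heq]
  exact mul_le_mul hs_norm hIle (norm_nonneg _) (by norm_num)

lemma Q_zero (τ : ℂ) : Q τ 0 = 0 := by
  simp [Q]

lemma latticeTerm_eq (τ : ℂ) (u v s : ℝ) (p : ℤ × ℤ) :
    latticeTerm τ u v s p = eterm u v p * (((Q τ p ^ s : ℝ) : ℂ))⁻¹ := by
  rw [latticeTerm, div_eq_mul_inv, eterm]
  congr 2
  rw [Q]
  rw [← Real.rpow_natCast (‖(p.1 : ℂ) * τ + (p.2 : ℂ)‖) 2,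
    ← Real.rpow_mul (norm_nonneg _)]
  norm_num

lemma norm_latticeTerm (τ : ℂ) (u v s : ℝ) (p : ℤ × ℤ) :
    ‖latticeTerm τ u v s p‖ = (Q τ p ^ s)⁻¹ := by
  rw [latticeTerm_eq, norm_mul, norm_eterm, one_mul, norm_inv, Complex.norm_real,
    Real.norm_eq_abs, _root_.abs_of_nonneg (Real.rpow_nonneg (Q_nonneg τ p) s)]

lemma P_continuous {τ : ℂ} (hτ' : τ.im ≠ 0) (u v x : ℝ) :
    Continuous (fun s : ℝ => P τ u v s x) := by
  refine continuous_finset_sum _ (fun p hp => ?_)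
  have hQ : 0 < Q τ p := Q_pos hτ' ((mem_B hτ').mp hp).1
  refine Continuous.mul continuous_const ?_
  have h1 : Continuous fun s : ℝ => (Q τ p) ^ s := by
    have h : (fun s : ℝ => (Q τ p) ^ s) = fun s => Real.exp (Real.log (Q τ p) * s) := by
      funext s; rw [Real.rpow_def_of_pos hQ]
    rw [h]
    exact Real.continuous_exp.comp (continuous_const.mul continuous_id)
  have h2 : Continuous fun s : ℝ => ((Q τ p ^ s : ℝ) : ℂ) :=
    Complex.continuous_ofReal.comp h1
  exact h2.inv₀ (fun s => Complex.ofReal_ne_zero.mpr (Real.rpow_pos_of_pos hQ s).ne')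

lemma Q_lower {τ : ℂ} (hτ' : τ.im ≠ 0) : ∃ c₀ : ℝ, 0 < c₀ ∧
    ∀ p : ℤ × ℤ, (max |(p.1 : ℝ)| |(p.2 : ℝ)|) ^ 2 ≤ c₀ * Q τ p := by
  have hτim : (0:ℝ) < τ.im ^ 2 := by positivity
  refine ⟨(1 + 2 * τ.im ^ 2 + 2 * τ.re ^ 2) / τ.im ^ 2, by positivity, fun p => ?_⟩
  have hm2 : ((p.1 : ℝ))^2 * τ.im^2 ≤ Q τ p := by
    have := sq_fst_le τ p
    nlinarith [this]
  have hn2 : ((p.2 : ℝ))^2 ≤ 2 * Q τ p + 2 * ((p.1:ℝ))^2 * τ.re^2 := by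
    have h1 := sq_add_le τ p
    nlinarith [h1, sq_nonneg (2 * (p.1:ℝ) * τ.re + (p.2:ℝ))]
  have hQ0 : 0 ≤ Q τ p := Q_nonneg τ p
  have hmax : (max |(p.1 : ℝ)| |(p.2 : ℝ)|) ^ 2 ≤ ((p.1:ℝ))^2 + ((p.2:ℝ))^2 := by
    rcases max_cases |(p.1 : ℝ)| |(p.2 : ℝ)| with ⟨h1, _⟩ | ⟨h1, _⟩ <;> rw [h1]
    · nlinarith [_root_.sq_abs ((p.1:ℝ)), sq_nonneg ((p.2:ℝ))]
    · nlinarith [_root_.sq_abs ((p.2:ℝ)), sq_nonneg ((p.1:ℝ))]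
  rw [div_mul_eq_mul_div, le_div_iff₀ hτim]
  nlinarith [hm2, hn2, hmax, sq_nonneg τ.re, mul_nonneg hQ0 (sq_nonneg τ.im), mul_nonneg hQ0 (sq_nonneg τ.re)]

lemma abs_summable {τ : ℂ} (hτ' : τ.im ≠ 0) (u v : ℝ) {s : ℝ} (hs : 1 < s) :
    Summable (fun p : ℤ × ℤ => ‖if p = 0 then 0 else latticeTerm τ u v s p‖) := by
  obtain ⟨c₀, hc₀pos, hc₀⟩ := Q_lower hτ'
  have hks : (2:ℝ) < 2 * s := by linarith
  have hsum0 : Summable fun x : Fin 2 → ℤ => ‖x‖ ^ (-(2 * s)) :=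
    EisensteinSeries.summable_one_div_norm_rpow hks
  have hsum1 : Summable fun p : ℤ × ℤ => ‖(finTwoArrowEquiv ℤ).symm p‖ ^ (-(2 * s)) := by
    exact (Equiv.summable_iff (finTwoArrowEquiv ℤ).symm).mpr hsum0
  have hsum2 : Summable fun p : ℤ × ℤ =>
      c₀ ^ s * ‖(finTwoArrowEquiv ℤ).symm p‖ ^ (-(2 * s)) := hsum1.mul_left _
  refine Summable.of_nonneg_of_le (fun p => norm_nonneg _) (fun p => ?_) hsum2
  have hnorm_eq : ∀ p : ℤ × ℤ,
      ‖(finTwoArrowEquiv ℤ).symm p‖ = max |(p.1 : ℝ)| |(p.2 : ℝ)| := by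
    intro p
    rw [show (finTwoArrowEquiv ℤ).symm p = ![p.1, p.2] from rfl,
      EisensteinSeries.norm_eq_max_natAbs]
    simp [Nat.cast_max, Nat.cast_natAbs]
  rcases eq_or_ne p 0 with hp | hp
  · subst hp
    rw [if_pos rfl, norm_zero, hnorm_eq]
    simp only [Prod.fst_zero, Prod.snd_zero, Int.cast_zero, abs_zero, max_self]
    rw [Real.zero_rpow (by linarith)]
    simp
  · rw [if_neg hp, norm_latticeTerm]
    set N : ℝ := max |(p.1 : ℝ)| |(p.2 : ℝ)| with hN
    have hQ : 0 < Q τ p := Q_pos hτ' hp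
    have hN1 : 1 ≤ N := by
      have hne : p.1 ≠ 0 ∨ p.2 ≠ 0 := by
        by_contra h
        push_neg at h
        exact hp (Prod.ext h.1 h.2)
      rcases hne with h | h
      · have h9 : (1:ℝ) ≤ |(p.1 : ℝ)| := by
          rw [← Int.cast_abs]
          exact_mod_cast Int.one_le_abs h
        exact h9.trans (le_max_left _ _)
      · have h9 : (1:ℝ) ≤ |(p.2 : ℝ)| := by
          rw [← Int.cast_abs]
          exact_mod_cast Int.one_le_abs h
        exact h9.trans (le_max_right _ _)
    have hN0 : 0 < N := lt_of_lt_of_le one_pos hN1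
    have hNsq : N^2 ≤ c₀ * Q τ p := hc₀ p
    -- conclude
    rw [hnorm_eq p, ← hN]
    have hs0 : (0:ℝ) ≤ s := by linarith
    have hkey : N ^ (2*s) ≤ c₀ ^ s * Q τ p ^ s := by
      have h1 : N ^ (2*s) = (N^2) ^ s := by
        rw [← Real.rpow_natCast N 2, ← Real.rpow_mul hN0.le]
        norm_num
      rw [h1, ← Real.mul_rpow hc₀pos.le hQ.le]
      exact Real.rpow_le_rpow (sq_nonneg N) hNsq hs0
    have hNpow_pos : 0 < N ^ (2*s) := Real.rpow_pos_of_pos hN0 _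
    have hQs_pos : 0 < Q τ p ^ s := Real.rpow_pos_of_pos hQ s
    have hc₀s_pos : 0 < c₀ ^ s := Real.rpow_pos_of_pos hc₀pos s
    have h2 : N ^ (2*s) / c₀ ^ s ≤ Q τ p ^ s := by
      rw [div_le_iff₀ hc₀s_pos]
      linarith [hkey]
    have h3 : (Q τ p ^ s)⁻¹ ≤ (N ^ (2*s) / c₀ ^ s)⁻¹ := by
      apply inv_anti₀
      · positivity
      · exact h2
    rw [inv_div] at h3
    refine h3.trans ?_
    rw [Real.rpow_neg hN0.le, div_eq_mul_inv]

end LatticeAux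

open LatticeAux in
/-- for `Im τ > 0` and `u, v` not both integers, the limit
`f(s) = lim_{x→∞} ∑_{0 < |mτ+n|² ≤ x} e^{2πi(mu+nv)}/|mτ+n|^{2s}` exists for
every `s ∈ [1,2]`, `f` is continuous on `[1,2]`, and for `s ∈ (1,2]` the double
sum converges absolutely with sum `f(s)`. -/
theorem lattice_sum_continuous (τ : ℂ) (hτ : 0 < τ.im) (u v : ℝ)
    (huv : ¬((∃ a : ℤ, (a : ℝ) = u) ∧ (∃ b : ℤ, (b : ℝ) = v))) :
    ∃ f : ℝ → ℂ,
      (∀ s ∈ Set.Icc (1 : ℝ) 2,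
        Filter.Tendsto
          (fun x : ℝ => ∑' mn : ℤ × ℤ,
            if 0 < ‖(mn.1 : ℂ) * τ + (mn.2 : ℂ)‖ ^ 2 ∧
                ‖(mn.1 : ℂ) * τ + (mn.2 : ℂ)‖ ^ 2 ≤ x then
              latticeTerm τ u v s mn
            else 0)
          Filter.atTop (nhds (f s))) ∧
      ContinuousOn f (Set.Icc (1 : ℝ) 2) ∧
      ∀ s ∈ Set.Ioc (1 : ℝ) 2,
        Summable (fun mn : ℤ × ℤ =>
          ‖if mn = 0 then 0 else latticeTerm τ u v s mn‖) ∧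
        f s = ∑' mn : ℤ × ℤ, if mn = 0 then 0 else latticeTerm τ u v s mn := by

  classical
  have hτ' : τ.im ≠ 0 := hτ.ne'
  obtain ⟨C1, hC1, htail⟩ := tail_bound hτ huv
  have hPeq : ∀ s x : ℝ,
      (∑' mn : ℤ × ℤ,
        if 0 < ‖(mn.1 : ℂ) * τ + (mn.2 : ℂ)‖ ^ 2 ∧
            ‖(mn.1 : ℂ) * τ + (mn.2 : ℂ)‖ ^ 2 ≤ x then
          latticeTerm τ u v s mn else 0) = P τ u v s x := by
    intro s x
    have hzero : ∀ p : ℤ × ℤ, p ∉ B τ x →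
        (if 0 < ‖(p.1 : ℂ) * τ + (p.2 : ℂ)‖ ^ 2 ∧
            ‖(p.1 : ℂ) * τ + (p.2 : ℂ)‖ ^ 2 ≤ x then
          latticeTerm τ u v s p else 0) = 0 := by
      intro p hp
      rw [if_neg]
      intro hcond
      apply hp
      rw [mem_B hτ']
      refine ⟨fun h0 => ?_, hcond.2⟩
      rw [h0] at hcond
      have h9 := hcond.1
      simp at h9
    rw [tsum_eq_sum hzero]
    refine Finset.sum_congr rfl fun p hp => ?_
    rw [mem_B hτ'] at hp
    rw [if_pos ⟨Q_pos hτ' hp.1, hp.2⟩]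
    exact latticeTerm_eq τ u v s p
  have hsqrt_tendsto : Filter.Tendsto Real.sqrt Filter.atTop Filter.atTop := by
    have h : Real.sqrt = fun x : ℝ => x ^ ((1:ℝ)/2) := funext fun x => Real.sqrt_eq_rpow x
    rw [h]
    exact tendsto_rpow_atTop (by norm_num)
  have hdecay : Filter.Tendsto (fun x : ℝ => C1 / Real.sqrt x) Filter.atTop (nhds 0) :=
    Filter.Tendsto.div_atTop tendsto_const_nhds hsqrt_tendsto
  have hcauchy : ∀ s ∈ Set.Icc (1:ℝ) 2, ∃ L : ℂ,
      Filter.Tendsto (fun x => P τ u v s x) Filter.atTop (nhds L) := by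
    intro s hs
    have hC : Cauchy (Filter.map (fun x => P τ u v s x) Filter.atTop) := by
      rw [Metric.cauchy_iff]
      constructor
      · exact Filter.map_neBot
      · intro ε hε
        obtain ⟨x₀, hx₀⟩ :=
          ((hdecay.eventually (gt_mem_nhds hε)).and (Filter.eventually_ge_atTop 1)).exists
        refine ⟨(fun x => P τ u v s x) '' Set.Ici x₀,
          Filter.image_mem_map (Filter.Ici_mem_atTop x₀), ?_⟩
        have hs0 : 0 < Real.sqrt x₀ := Real.sqrt_pos.mpr (by linarith [hx₀.2])
        have hkey : ∀ x1 x2 : ℝ, x₀ ≤ x1 → x₀ ≤ x2 → x1 ≤ x2 →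
            ‖P τ u v s x2 - P τ u v s x1‖ < ε := by
          intro x1 x2 h1 h2 h12
          refine lt_of_le_of_lt ((htail s hs x1 x2 (hx₀.2.trans h1) h12).trans ?_) hx₀.1
          gcongr
        rintro a ⟨x1, hx1, rfl⟩ b ⟨x2, hx2, rfl⟩
        rw [dist_eq_norm]
        rcases le_total x1 x2 with h | h
        · rw [norm_sub_rev]
          exact hkey x1 x2 hx1 hx2 h
        · exact hkey x2 x1 hx2 hx1 h
    obtain ⟨L, hL⟩ := CompleteSpace.complete hC
    exact ⟨L, hL⟩
  choose! f hf using hcauchy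
  have hunif : ∀ s ∈ Set.Icc (1:ℝ) 2, ∀ x : ℝ, 1 ≤ x →
      ‖f s - P τ u v s x‖ ≤ C1 / Real.sqrt x := by
    intro s hs x hx
    have h1 : Filter.Tendsto (fun y => ‖P τ u v s y - P τ u v s x‖) Filter.atTop
        (nhds ‖f s - P τ u v s x‖) := ((hf s hs).sub tendsto_const_nhds).norm
    refine le_of_tendsto h1 ?_
    filter_upwards [Filter.eventually_ge_atTop x] with y hy
    exact htail s hs x y hx hy
  have huc : TendstoUniformlyOn (fun x s => P τ u v s x) f Filter.atTop (Set.Icc 1 2) := by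
    rw [Metric.tendstoUniformlyOn_iff]
    intro ε hε
    filter_upwards [(hdecay.eventually (gt_mem_nhds hε)).and (Filter.eventually_ge_atTop 1)]
      with x hx s hs
    rw [dist_eq_norm]
    exact lt_of_le_of_lt (hunif s hs x hx.2) hx.1
  have hcont : ContinuousOn f (Set.Icc 1 2) :=
    huc.continuousOn (Filter.Eventually.of_forall (f := Filter.atTop) fun x => (P_continuous hτ' u v x).continuousOn).frequently
  refine ⟨f, ?_, hcont, ?_⟩
  · intro s hs
    have h1 : (fun x : ℝ => ∑' mn : ℤ × ℤ,
        if 0 < ‖(mn.1 : ℂ) * τ + (mn.2 : ℂ)‖ ^ 2 ∧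
            ‖(mn.1 : ℂ) * τ + (mn.2 : ℂ)‖ ^ 2 ≤ x then
          latticeTerm τ u v s mn else 0) = fun x => P τ u v s x := funext (hPeq s)
    rw [h1]
    exact hf s hs
  · intro s hs
    have hsum := abs_summable hτ' u v hs.1
    refine ⟨hsum, ?_⟩
    have hsum' : Summable (fun p : ℤ × ℤ => if p = 0 then 0 else latticeTerm τ u v s p) :=
      Summable.of_norm hsum
    have hhas := hsum'.hasSum
    have hmono : Monotone (fun x : ℝ => insert (0 : ℤ × ℤ) (B τ x)) := by
      intro x y hxy
      exact Finset.insert_subset_insert _ (B_mono hτ' hxy)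
    have hcover : ∀ p : ℤ × ℤ, ∃ x : ℝ, p ∈ insert (0 : ℤ × ℤ) (B τ x) := by
      intro p
      rcases eq_or_ne p 0 with rfl | h
      · exact ⟨0, Finset.mem_insert_self _ _⟩
      · exact ⟨Q τ p, Finset.mem_insert_of_mem ((mem_B hτ').mpr ⟨h, le_refl _⟩)⟩
    have htends : Filter.Tendsto (fun x : ℝ => insert (0 : ℤ × ℤ) (B τ x))
        Filter.atTop Filter.atTop :=
      Filter.tendsto_atTop_finset_of_monotone hmono hcover
    have h2 : Filter.Tendsto (fun x : ℝ => ∑ p ∈ insert (0 : ℤ × ℤ) (B τ x),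
        (if p = 0 then 0 else latticeTerm τ u v s p)) Filter.atTop
        (nhds (∑' p : ℤ × ℤ, if p = 0 then 0 else latticeTerm τ u v s p)) :=
      hhas.comp htends
    have h3 : (fun x : ℝ => ∑ p ∈ insert (0 : ℤ × ℤ) (B τ x),
        (if p = 0 then 0 else latticeTerm τ u v s p)) = fun x => P τ u v s x := by
      funext x
      rw [Finset.sum_insert (zero_not_mem_B x), if_pos rfl, zero_add]
      refine Finset.sum_congr rfl fun p hp => ?_
      rw [if_neg (((mem_B hτ').mp hp).1), latticeTerm_eq]
    rw [h3] at h2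
    exact tendsto_nhds_unique (hf s ⟨hs.1.le, hs.2⟩) h2
end

section
/- Let G be a group, V a finite-dimensional complex inner product space of dimension n, and χ : G → U(V) a unitary representation. Let E, R, S ∈ G be such that RS = SR, E has finite order m (E^m = 1), and E⁻¹R⁻¹ER and E⁻¹S⁻¹ES lie in the subgroup of G generated by R and S. Then there exist an orthonormal basis v₁, …, v_n of V and indices 0 ≤ k ≤ l ≤ n such that: (1) for 1 ≤ i ≤ k, χ(E)v_i = χ(R)v_i = χ(S)v_i = v_i; (2) for k+1 ≤ i ≤ l, χ(R)v_i = χ(S)v_i = v_i and χ(E)v_i = λ_i v_i for some λ_i ∈ ℂ with λ_i ≠ 1 and λ_i^m = 1; (3) for l+1 ≤ i ≤ n, χ(R)v_i = λ_{R,i} v_i and χ(S)v_i = λ_{S,i} v_i for some unimodular complex numbers λ_{R,i}, λ_{S,i} that are not both equal to 1. -/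
open Module FiniteDimensional Submodule

local notation "⟪" x ", " y "⟫" => @inner ℂ _ _ x y


lemma pow_eigen {V : Type*} [NormedAddCommGroup V] [Module ℂ V]
    (A : V →ₗ[ℂ] V) {x : V} {a : ℂ} (h : A x = a • x) (j : ℕ) :
    (A ^ j) x = a ^ j • x := by
  induction j with
  | zero => simp
  | succ j ih =>
    rw [pow_succ, Module.End.mul_apply, h, map_smul, ih, smul_smul, pow_succ, mul_comm]

lemma unimod {V : Type*} [NormedAddCommGroup V] [InnerProductSpace ℂ V] {A : V →ₗ[ℂ] V}
    (hA : ∀ x y : V, ⟪A x, A y⟫ = ⟪x, y⟫) {v : V} {a : ℂ} (hv : v ≠ 0)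
    (h : A v = a • v) : ‖a‖ = 1 := by
  have h1 := hA v v
  rw [h, inner_smul_left, inner_smul_right, ← mul_assoc] at h1
  have hvv : ⟪v, v⟫ ≠ 0 := inner_self_ne_zero.mpr hv
  have h2 : (starRingEnd ℂ) a * a = 1 := by
    have h3 : (starRingEnd ℂ) a * a * ⟪v, v⟫ = 1 * ⟪v, v⟫ := by rw [h1, one_mul]
    exact mul_right_cancel₀ hvv h3
  have h4 := congrArg (‖·‖) h2
  rw [norm_mul, Complex.norm_conj, norm_one] at h4
  nlinarith [norm_nonneg a]

lemma mapsTo_orth_of_eigen {V : Type*} [NormedAddCommGroup V] [InnerProductSpace ℂ V]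
    {A : V →ₗ[ℂ] V} (hA : ∀ x y : V, ⟪A x, A y⟫ = ⟪x, y⟫) {v : V} {a : ℂ}
    (h : A v = a • v) (ha : a ≠ 0) : ∀ x ∈ (ℂ ∙ v)ᗮ, A x ∈ (ℂ ∙ v)ᗮ := by
  intro x hx
  rw [Submodule.mem_orthogonal_singleton_iff_inner_right] at hx ⊢
  have h1 : ⟪A v, A x⟫ = 0 := by rw [hA]; exact hx
  rw [h, inner_smul_left] at h1
  have : (starRingEnd ℂ) a ≠ 0 := by simpa using ha
  exact (mul_eq_zero.mp h1).resolve_left this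

universe u

lemma joint_aux : ∀ (d : ℕ) (V : Type u) [NormedAddCommGroup V] [InnerProductSpace ℂ V]
    [FiniteDimensional ℂ V], finrank ℂ V = d → ∀ (A B : V →ₗ[ℂ] V),
    (∀ x y : V, ⟪A x, A y⟫ = ⟪x, y⟫) → (∀ x y : V, ⟪B x, B y⟫ = ⟪x, y⟫) →
    (A * B = B * A) →
    ∃ v : Fin d → V, Orthonormal ℂ v ∧ ∀ i, ∃ a b : ℂ,
      ‖a‖ = 1 ∧ ‖b‖ = 1 ∧ A (v i) = a • v i ∧ B (v i) = b • v i := by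
  intro d
  induction d with
  | zero =>
    intro V _ _ _ _ A B _ _ _
    exact ⟨fun i => i.elim0, ⟨fun i => i.elim0, fun i => i.elim0⟩, fun i => i.elim0⟩
  | succ d ih =>
    intro V _ _ _ hd A B hA hB hAB
    have hnt : Nontrivial V := Module.nontrivial_of_finrank_pos (R := ℂ) (by omega)
    obtain ⟨μ, hμ⟩ := Module.End.exists_eigenvalue A
    set Eμ := Module.End.eigenspace A μ with hEμ
    have hBE : ∀ x ∈ Eμ, B x ∈ Eμ := by
      intro x hx
      rw [Module.End.mem_eigenspace_iff] at hx ⊢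
      have : A (B x) = B (A x) := by
        rw [← Module.End.mul_apply, ← Module.End.mul_apply, hAB]
      rw [this, hx, map_smul]
    have hEnt : Nontrivial Eμ := Submodule.nontrivial_iff_ne_bot.mpr hμ
    have : FiniteDimensional ℂ Eμ := inferInstance
    obtain ⟨ν, hν⟩ := Module.End.exists_eigenvalue (B.restrict hBE)
    obtain ⟨w0, hw0⟩ := hν.exists_hasEigenvector
    have hx0 : (w0 : V) ≠ 0 := fun h => hw0.2 (Subtype.ext h)
    set x0 : V := (w0 : V) with hx0def
    set v0 : V := (‖x0‖⁻¹ : ℂ) • x0 with hv0def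
    have hv0ne : v0 ≠ 0 := by
      simp only [hv0def, smul_ne_zero_iff]
      constructor
      · simpa using hx0
      · exact hx0
    have hv0norm : ‖v0‖ = 1 := by
      rw [hv0def, norm_smul]
      simp [norm_ne_zero_iff.mpr hx0]
    have hAx0 : A x0 = μ • x0 := Module.End.mem_eigenspace_iff.mp w0.2
    have hBx0 : B x0 = ν • x0 := by
      have h1 : B.restrict hBE w0 = ν • w0 := Module.End.mem_eigenspace_iff.mp hw0.1
      have := congrArg (Subtype.val) h1
      simpa using this
    have hAv0 : A v0 = μ • v0 := by
      rw [hv0def, map_smul, hAx0, smul_comm]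
    have hBv0 : B v0 = ν • v0 := by
      rw [hv0def, map_smul, hBx0, smul_comm]
    have hμ1 : ‖μ‖ = 1 := unimod hA hv0ne hAv0
    have hν1 : ‖ν‖ = 1 := unimod hB hv0ne hBv0
    have hμ0 : μ ≠ 0 := by intro h; rw [h] at hμ1; simp at hμ1
    have hν0 : ν ≠ 0 := by intro h; rw [h] at hν1; simp at hν1
    set U := (ℂ ∙ v0)ᗮ with hUdef
    have hUd : finrank ℂ U = d := by
      rw [hUdef]
      have h1 := Submodule.finrank_add_finrank_orthogonal (K := (ℂ ∙ v0)) (𝕜 := ℂ)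
      rw [finrank_span_singleton hv0ne, hd] at h1
      omega
    have hAU := mapsTo_orth_of_eigen hA hAv0 hμ0
    have hBU := mapsTo_orth_of_eigen hB hBv0 hν0
    have hA' : ∀ x y : U, ⟪(A.restrict hAU) x, (A.restrict hAU) y⟫ = ⟪x, y⟫ := by
      intro x y
      rw [Submodule.coe_inner, Submodule.coe_inner]
      simp only [LinearMap.restrict_coe_apply]
      exact hA x y
    have hB' : ∀ x y : U, ⟪(B.restrict hBU) x, (B.restrict hBU) y⟫ = ⟪x, y⟫ := by
      intro x y
      rw [Submodule.coe_inner, Submodule.coe_inner]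
      simp only [LinearMap.restrict_coe_apply]
      exact hB x y
    have hAB' : A.restrict hAU * B.restrict hBU = B.restrict hBU * A.restrict hAU := by
      ext x
      have : A (B x) = B (A x) := by
        rw [← Module.End.mul_apply, ← Module.End.mul_apply, hAB]
      simpa [LinearMap.restrict_coe_apply] using this
    obtain ⟨v, hon, heig⟩ := ih U hUd (A.restrict hAU) (B.restrict hBU) hA' hB' hAB'
    refine ⟨Fin.cons v0 (fun i => (v i : V)), ⟨?_, ?_⟩, ?_⟩
    · intro i
      induction i using Fin.cases with
      | zero => simpa using hv0norm
      | succ i => simpa using hon.1 i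
    · intro i j hij
      induction i using Fin.cases with
      | zero =>
        induction j using Fin.cases with
        | zero => exact absurd rfl hij
        | succ j =>
          simp only [Fin.cons_zero, Fin.cons_succ]
          exact inner_right_of_mem_orthogonal (Submodule.mem_span_singleton_self v0) (v j).2
      | succ i =>
        induction j using Fin.cases with
        | zero =>
          simp only [Fin.cons_zero, Fin.cons_succ]
          exact inner_left_of_mem_orthogonal (Submodule.mem_span_singleton_self v0) (v i).2
        | succ j =>
          have hij' : i ≠ j := fun h => hij (by rw [h])
          simp only [Fin.cons_succ]
          exact hon.2 hij'
    · intro i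
      induction i using Fin.cases with
      | zero => exact ⟨μ, ν, hμ1, hν1, by simpa using hAv0, by simpa using hBv0⟩
      | succ i =>
        obtain ⟨a, b, ha1, hb1, hva, hvb⟩ := heig i
        refine ⟨a, b, ha1, hb1, ?_, ?_⟩
        · have := congrArg Subtype.val hva
          simpa [Fin.cons_succ] using this
        · have := congrArg Subtype.val hvb
          simpa [Fin.cons_succ] using this



/-- with `χ : G → U(V)` a unitary representation on an
`n`-dimensional complex inner product space, `RS = SR`, `E` of finite order `m`
(`E^m = 1`), and the commutators `E⁻¹R⁻¹ER`, `E⁻¹S⁻¹ES` in the subgroup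
generated by `R` and `S`, there is an orthonormal basis `v₁, …, v_n` of `V` and
indices `0 ≤ k ≤ l ≤ n` splitting it into a singular part (fixed by `χ(E)`,
`χ(R)`, `χ(S)`), an almost-singular part (fixed by `χ(R)`, `χ(S)`, eigenvector
of `χ(E)` with eigenvalue an `m`-th root of unity `≠ 1`), and a regular part
(joint eigenvectors of `χ(R)`, `χ(S)` with unimodular eigenvalues not both 1). -/
theorem adapted_orthonormal_basis {G : Type*} [Group G] {V : Type*}
    [NormedAddCommGroup V] [InnerProductSpace ℂ V] [FiniteDimensional ℂ V]
    (n : ℕ) (hn : Module.finrank ℂ V = n)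
    (χ : G →* (V ≃ₗᵢ[ℂ] V)) (E R S : G)
    (hcomm : R * S = S * R)
    (m : ℕ) (hm : 0 < m) (hEm : E ^ m = 1)
    (hER : E⁻¹ * R⁻¹ * E * R ∈ Subgroup.closure ({R, S} : Set G))
    (hES : E⁻¹ * S⁻¹ * E * S ∈ Subgroup.closure ({R, S} : Set G)) :
    ∃ (b : OrthonormalBasis (Fin n) ℂ V) (k l : ℕ), k ≤ l ∧ l ≤ n ∧
      (∀ i : Fin n, (i : ℕ) < k →
        χ E (b i) = b i ∧ χ R (b i) = b i ∧ χ S (b i) = b i) ∧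
      (∀ i : Fin n, k ≤ (i : ℕ) → (i : ℕ) < l →
        χ R (b i) = b i ∧ χ S (b i) = b i ∧
          ∃ lam : ℂ, lam ≠ 1 ∧ lam ^ m = 1 ∧ χ E (b i) = lam • b i) ∧
      (∀ i : Fin n, l ≤ (i : ℕ) →
        ∃ lamR lamS : ℂ, ‖lamR‖ = 1 ∧ ‖lamS‖ = 1 ∧
          ¬(lamR = 1 ∧ lamS = 1) ∧
          χ R (b i) = lamR • b i ∧ χ S (b i) = lamS • b i) := by
  classical
  set H := Subgroup.closure ({R, S} : Set G) with hH
  set Rop : V →ₗ[ℂ] V := ((χ R).toLinearEquiv : V →ₗ[ℂ] V) with hRop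
  set Sop : V →ₗ[ℂ] V := ((χ S).toLinearEquiv : V →ₗ[ℂ] V) with hSop
  set Eop : V →ₗ[ℂ] V := ((χ E).toLinearEquiv : V →ₗ[ℂ] V) with hEop
  set W : Submodule ℂ V :=
    LinearMap.ker (Rop - LinearMap.id) ⊓ LinearMap.ker (Sop - LinearMap.id) with hW
  have memW : ∀ v : V, v ∈ W ↔ χ R v = v ∧ χ S v = v := by
    intro v
    simp [hW, LinearMap.mem_ker, sub_eq_zero, hRop, hSop]
  have hRinH : R ∈ H := Subgroup.subset_closure (by simp)
  have hSinH : S ∈ H := Subgroup.subset_closure (by simp)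
  have hfix : ∀ g ∈ H, ∀ v ∈ W, χ g v = v := by
    intro g hg
    induction hg using Subgroup.closure_induction with
    | mem x hx =>
      intro v hv
      rcases hx with h | h
      · rw [h]; exact ((memW v).mp hv).1
      · rw [h]; exact ((memW v).mp hv).2
    | one => intro v hv; simp
    | mul x y hx hy ihx ihy =>
      intro v hv
      rw [map_mul]
      have : (χ x * χ y) v = χ x (χ y v) := rfl
      rw [this, ihy v hv, ihx v hv]
    | inv x hx ihx =>
      intro v hv
      have h1 : χ x⁻¹ (χ x v) = v := by
        have : (χ x⁻¹ * χ x) v = v := by rw [← map_mul]; simp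
        exact this
      rw [ihx v hv] at h1
      exact h1
  have hconj : ∀ T : G, T ∈ H → (E⁻¹ * T⁻¹ * E * T ∈ H) → E⁻¹ * T * E ∈ H := by
    intro T hT hcT
    have h3 : E⁻¹ * T⁻¹ * E ∈ H := by
      have h4 : E⁻¹ * T⁻¹ * E = (E⁻¹ * T⁻¹ * E * T) * T⁻¹ := by group
      rw [h4]; exact mul_mem hcT (inv_mem hT)
    have h5 : E⁻¹ * T * E = (E⁻¹ * T⁻¹ * E)⁻¹ := by group
    rw [h5]; exact inv_mem h3
  have hconjR := hconj R hRinH hER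
  have hconjS := hconj S hSinH hES
  have happly : ∀ (g g' : G) (v : V), χ (g * g') v = χ g (χ g' v) := by
    intro g g' v; rw [map_mul]; rfl
  have hEW : ∀ v ∈ W, Eop v ∈ W := by
    intro v hv
    rw [memW]
    constructor
    · have hfix1 : χ (E⁻¹ * R * E) v = v := hfix _ hconjR v hv
      have h2 : R * E = E * (E⁻¹ * R * E) := by group
      have : χ R (χ E v) = χ E v := by
        rw [← happly, h2, happly, hfix1]
      exact this
    · have hfix1 : χ (E⁻¹ * S * E) v = v := hfix _ hconjS v hv
      have h2 : S * E = E * (E⁻¹ * S * E) := by group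
      have : χ S (χ E v) = χ E v := by
        rw [← happly, h2, happly, hfix1]
      exact this
  -- powers
  have hpow : ∀ (j : ℕ) (x : V), (Eop ^ j) x = χ (E ^ j) x := by
    intro j
    induction j with
    | zero => intro x; simp
    | succ j ih =>
      intro x
      rw [pow_succ', Module.End.mul_apply, ih, pow_succ', happly]
      rfl
  have hEmfix : ∀ x : V, (Eop ^ m) x = x := by
    intro x; rw [hpow, hEm]; simp
  -- inner preservation
  have hinner : ∀ (g : G) (x y : V), ⟪χ g x, χ g y⟫ = ⟪x, y⟫ := fun g x y =>
    (χ g).inner_map_map x y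
  -- restriction of Eop to W
  set p := finrank ℂ W with hp
  set Elin : W →ₗ[ℂ] W := Eop.restrict hEW with hElin
  have hE' : ∀ x y : W, ⟪Elin x, Elin y⟫ = ⟪x, y⟫ := by
    intro x y
    rw [Submodule.coe_inner, Submodule.coe_inner]
    simp only [hElin, LinearMap.restrict_coe_apply]
    exact hinner E x y
  obtain ⟨w, hwon, hweig⟩ := joint_aux p W rfl Elin Elin hE' hE' rfl
  choose a a' ha1 ha1' hwa hwa' using hweig
  clear ha1' hwa'
  have hwcoe : ∀ i : Fin p, χ E ((w i : V)) = a i • ((w i : V)) := by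
    intro i
    have := congrArg Subtype.val (hwa i)
    simpa [hElin, hEop, LinearMap.restrict_coe_apply] using this
  have hwne : ∀ i : Fin p, ((w i : V)) ≠ 0 := by
    intro i h
    have h1 := hwon.1 i
    have h2 : w i = 0 := Subtype.ext h
    rw [h2] at h1
    simp at h1
  have ham : ∀ i : Fin p, a i ^ m = 1 := by
    intro i
    have h1 : (Eop ^ m) ((w i : V)) = a i ^ m • ((w i : V)) := pow_eigen Eop (hwcoe i) m
    rw [hEmfix] at h1
    have h2 : a i ^ m • ((w i : V)) = (1 : ℂ) • ((w i : V)) := by rw [← h1, one_smul]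
    exact smul_left_injective ℂ (hwne i) h2
  -- orthogonal complement
  set q := finrank ℂ (Wᗮ) with hq
  have hpq : p + q = n := by
    have := Submodule.finrank_add_finrank_orthogonal (K := W) (𝕜 := ℂ)
    rw [hn] at this
    omega
  have hmapsOrth : ∀ T : G, T ∈ H → ∀ x ∈ Wᗮ, ((χ T).toLinearEquiv : V →ₗ[ℂ] V) x ∈ Wᗮ := by
    intro T hT x hx
    rw [Submodule.mem_orthogonal] at hx ⊢
    intro v hv
    have h1 : χ T v = v := hfix T hT v hv
    calc ⟪v, χ T x⟫ = ⟪χ T v, χ T x⟫ := by rw [h1]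
      _ = ⟪v, x⟫ := hinner T v x
      _ = 0 := hx v hv
  set Rlin : (Wᗮ : Submodule ℂ V) →ₗ[ℂ] (Wᗮ : Submodule ℂ V) := Rop.restrict (hmapsOrth R hRinH) with hRlin
  set Slin : (Wᗮ : Submodule ℂ V) →ₗ[ℂ] (Wᗮ : Submodule ℂ V) := Sop.restrict (hmapsOrth S hSinH) with hSlin
  have hR' : ∀ x y : (Wᗮ : Submodule ℂ V), ⟪Rlin x, Rlin y⟫ = ⟪x, y⟫ := by
    intro x y
    rw [Submodule.coe_inner, Submodule.coe_inner]
    simp only [hRlin, LinearMap.restrict_coe_apply]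
    exact hinner R x y
  have hS' : ∀ x y : (Wᗮ : Submodule ℂ V), ⟪Slin x, Slin y⟫ = ⟪x, y⟫ := by
    intro x y
    rw [Submodule.coe_inner, Submodule.coe_inner]
    simp only [hSlin, LinearMap.restrict_coe_apply]
    exact hinner S x y
  have hRS : Rlin * Slin = Slin * Rlin := by
    ext x
    have h1 : χ R (χ S (x : V)) = χ S (χ R (x : V)) := by
      rw [← happly, ← happly, hcomm]
    simpa [hRlin, hSlin, hRop, hSop, LinearMap.restrict_coe_apply] using h1
  obtain ⟨u, huon, hueig⟩ := joint_aux q (Wᗮ : Submodule ℂ V) rfl Rlin Slin hR' hS' hRS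
  choose lr ls hlr1 hls1 hur hus using hueig
  have hurcoe : ∀ j : Fin q, χ R ((u j : V)) = lr j • ((u j : V)) := by
    intro j
    have := congrArg Subtype.val (hur j)
    simpa [hRlin, hRop, LinearMap.restrict_coe_apply] using this
  have huscoe : ∀ j : Fin q, χ S ((u j : V)) = ls j • ((u j : V)) := by
    intro j
    have := congrArg Subtype.val (hus j)
    simpa [hSlin, hSop, LinearMap.restrict_coe_apply] using this
  have hune : ∀ j : Fin q, ((u j : V)) ≠ 0 := by
    intro j h
    have h1 := huon.1 j
    have h2 : u j = 0 := Subtype.ext h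
    rw [h2] at h1
    simp at h1
  have hnotboth : ∀ j : Fin q, ¬(lr j = 1 ∧ ls j = 1) := by
    intro j ⟨h1, h2⟩
    have hmem : ((u j : V)) ∈ W := by
      rw [memW]
      constructor
      · rw [hurcoe j, h1, one_smul]
      · rw [huscoe j, h2, one_smul]
    have := inner_right_of_mem_orthogonal (𝕜 := ℂ) hmem (u j).2
    rw [inner_self_eq_zero] at this
    exact hune j this
  -- permutation of Fin p putting eigenvalue-1 indices first
  set s : Finset (Fin p) := Finset.univ.filter (fun i => a i = 1) with hs
  set k := s.card with hk
  have hksp : k ≤ p := by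
    have := Finset.card_filter_le Finset.univ (fun i => a i = 1)
    simpa [hk, hs] using this
  have hsc : sᶜ.card = p - k := by
    rw [Finset.card_compl]
    simp [hk]
  have hpk : p = k + (p - k) := by omega
  set gperm : Fin p ≃ Fin p :=
    (finCongr hpk).trans <|
      finSumFinEquiv.symm.trans <|
        (Equiv.sumCongr (s.orderIsoOfFin rfl).toEquiv (sᶜ.orderIsoOfFin hsc).toEquiv).trans <|
          (Equiv.sumCongr (Equiv.refl s) (Equiv.subtypeEquivRight (fun x => Finset.mem_compl))).trans
            (Equiv.sumCompl (fun x => x ∈ s)) with hgperm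
  have hg1 : ∀ i : Fin p, (i : ℕ) < k → gperm i ∈ s := by
    intro i hi
    have h1 : (finCongr hpk) i = Fin.castAdd (p - k) ⟨(i : ℕ), hi⟩ := Fin.ext rfl
    simp only [hgperm, Equiv.trans_apply, h1, finSumFinEquiv_symm_apply_castAdd,
      Equiv.sumCongr_apply, Sum.map_inl, Equiv.refl_apply, Equiv.sumCompl_apply_inl]
    exact Finset.coe_mem _
  have hg2 : ∀ i : Fin p, k ≤ (i : ℕ) → gperm i ∈ sᶜ := by
    intro i hi
    have hi2 : (i : ℕ) - k < p - k := by omega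
    have h1 : (finCongr hpk) i = Fin.natAdd k ⟨(i : ℕ) - k, hi2⟩ := by
      apply Fin.ext
      simp [Fin.natAdd]
      omega
    simp only [hgperm, Equiv.trans_apply, h1, finSumFinEquiv_symm_apply_natAdd,
      Equiv.sumCongr_apply, Sum.map_inr, Equiv.sumCompl_apply_inr,
      Equiv.subtypeEquivRight_apply]
    exact Finset.coe_mem _
  -- global family
  set gn : Fin n ≃ (Fin p ⊕ Fin q) := (finCongr hpq.symm).trans finSumFinEquiv.symm with hgn
  set F : (Fin p ⊕ Fin q) → V := Sum.elim (fun i => ((w (gperm i) : V))) (fun j => ((u j : V))) with hF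
  set vv : Fin n → V := fun i => F (gn i) with hvv
  have honv : Orthonormal ℂ vv := by
    constructor
    · intro i
      rcases h : gn i with i' | j'
      · simp only [hvv, h, hF, Sum.elim_inl]
        exact hwon.1 (gperm i')
      · simp only [hvv, h, hF, Sum.elim_inr]
        exact huon.1 j'
    · intro i j hij
      have hginj : gn i ≠ gn j := fun h => hij (gn.injective h)
      rcases hgi : gn i with i' | i' <;> rcases hgj : gn j with j' | j' <;>
        simp only [hvv, hgi, hgj, hF, Sum.elim_inl, Sum.elim_inr]
      · have hne : gperm i' ≠ gperm j' := by
          intro h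
          rw [hgi, hgj] at hginj
          exact hginj (by rw [gperm.injective h])
        exact hwon.2 hne
      · exact inner_right_of_mem_orthogonal (𝕜 := ℂ) (w (gperm i')).2 (u j').2
      · exact inner_left_of_mem_orthogonal (𝕜 := ℂ) (w (gperm j')).2 (u i').2
      · have hne : i' ≠ j' := by
          intro h
          rw [hgi, hgj] at hginj
          exact hginj (by rw [h])
        exact huon.2 hne
  have hsp : ⊤ ≤ Submodule.span ℂ (Set.range vv) :=
    (honv.linearIndependent.span_eq_top_of_card_eq_finrank' (by simp [hn])).ge
  set b : OrthonormalBasis (Fin n) ℂ V := OrthonormalBasis.mk honv hsp with hb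
  have hbcoe : ∀ i, b i = vv i := by
    intro i
    rw [hb, OrthonormalBasis.coe_mk]
  have hbW : ∀ (i : Fin n) (hip : (i : ℕ) < p),
      gn i = Sum.inl (⟨(i : ℕ), hip⟩ : Fin p) := by
    intro i hip
    have h1 : (finCongr hpq.symm) i = Fin.castAdd q ⟨(i : ℕ), hip⟩ := Fin.ext rfl
    rw [hgn, Equiv.trans_apply, h1, finSumFinEquiv_symm_apply_castAdd]
  have hbU : ∀ (i : Fin n) (hpi : p ≤ (i : ℕ)),
      gn i = Sum.inr (⟨(i : ℕ) - p, by omega⟩ : Fin q) := by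
    intro i hpi
    have hq2 : (i : ℕ) - p < q := by omega
    have h1 : (finCongr hpq.symm) i = Fin.natAdd p ⟨(i : ℕ) - p, hq2⟩ := by
      apply Fin.ext
      simp [Fin.natAdd]
      omega
    rw [hgn, Equiv.trans_apply, h1, finSumFinEquiv_symm_apply_natAdd]
  refine ⟨b, k, p, hksp, by omega, ?_, ?_, ?_⟩
  · -- singular part
    intro i hik
    have hip : (i : ℕ) < p := lt_of_lt_of_le hik hksp
    have hbi : b i = ((w (gperm ⟨(i : ℕ), hip⟩)) : V) := by
      rw [hbcoe, hvv]
      simp only [hbW i hip, hF, Sum.elim_inl]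
    set j := gperm ⟨(i : ℕ), hip⟩ with hj
    have haj : a j = 1 := by
      have := hg1 ⟨(i : ℕ), hip⟩ hik
      rw [hs, Finset.mem_filter] at this
      exact this.2
    have hmem := (memW _).mp (w j).2
    refine ⟨?_, ?_, ?_⟩
    · rw [hbi, hwcoe j, haj, one_smul]
    · rw [hbi, hmem.1]
    · rw [hbi, hmem.2]
  · -- almost-singular part
    intro i hki hil
    have hip : (i : ℕ) < p := hil
    have hbi : b i = ((w (gperm ⟨(i : ℕ), hip⟩)) : V) := by
      rw [hbcoe, hvv]
      simp only [hbW i hip, hF, Sum.elim_inl]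
    set j := gperm ⟨(i : ℕ), hip⟩ with hj
    have haj : a j ≠ 1 := by
      have h1 := hg2 ⟨(i : ℕ), hip⟩ hki
      rw [Finset.mem_compl, hs, Finset.mem_filter] at h1
      intro h
      exact h1 ⟨Finset.mem_univ _, h⟩
    have hmem := (memW _).mp (w j).2
    exact ⟨by rw [hbi, hmem.1], by rw [hbi, hmem.2],
      a j, haj, ham j, by rw [hbi, hwcoe j]⟩
  · -- regular part
    intro i hpi
    have hq2 : (i : ℕ) - p < q := by omega
    have hbi : b i = ((u ⟨(i : ℕ) - p, hq2⟩) : V) := by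
      rw [hbcoe, hvv]
      simp only [hbU i hpi, hF, Sum.elim_inr]
    set j : Fin q := ⟨(i : ℕ) - p, hq2⟩ with hj
    exact ⟨lr j, ls j, hlr1 j, hls1 j, hnotboth j,
      by rw [hbi, hurcoe j], by rw [hbi, huscoe j]⟩
end

section
/- For every s ∈ ℂ with Re(s) > 0 and every t ∈ (0, π), one has ∫₀^∞ e^{−sx} · sinh(x) / (cosh(x) − cos(t)) dx = (1 / sin t) · Σ_{k=1}^{∞} sin(kt) · ( 1/(s − 1 + k) − 1/(s + 1 + k) ); in particular the integral converges and the series on the right converges. -/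
open MeasureTheory Set Filter Topology
lemma aux_integrableOn_cexp (a : ℂ) (ha : 0 < a.re) :
    IntegrableOn (fun x : ℝ => Complex.exp (-a * x)) (Ioi 0) := by
  have hm : AEStronglyMeasurable (fun x : ℝ => Complex.exp (-a * x))
      (volume.restrict (Ioi 0)) := by
    apply Continuous.aestronglyMeasurable
    exact Complex.continuous_exp.comp (continuous_const.mul Complex.continuous_ofReal)
  refine Integrable.mono' (exp_neg_integrableOn_Ioi 0 ha) hm ?_
  refine ae_of_all _ fun x => ?_
  simp [Complex.norm_exp, Complex.mul_re, le_refl]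

lemma aux_integral_cexp (a : ℂ) (ha : 0 < a.re) :
    ∫ x in Ioi (0:ℝ), Complex.exp (-a * x) = 1 / a := by
  have ha0 : a ≠ 0 := fun h => by simp [h] at ha
  have hderiv : ∀ x ∈ Ioi (0:ℝ), HasDerivAt (fun x : ℝ => -a⁻¹ * Complex.exp (-a * x))
      (Complex.exp (-a * x)) x := by
    intro x _
    have h0 : HasDerivAt (fun z : ℂ => -a * z) (-a) (x:ℂ) := by
      simpa using (hasDerivAt_id (x:ℂ)).const_mul (-a)
    have h1 := (h0.cexp).const_mul (-a⁻¹)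
    have h2 := h1.comp_ofReal
    convert h2 using 1
    field_simp
  have htend : Tendsto (fun x : ℝ => -a⁻¹ * Complex.exp (-a * x)) atTop (𝓝 0) := by
    rw [tendsto_zero_iff_norm_tendsto_zero]
    have : (fun x : ℝ => ‖-a⁻¹ * Complex.exp (-a * x)‖)
        = fun x : ℝ => ‖a⁻¹‖ * Real.exp (-a.re * x) := by
      funext x
      simp [Complex.norm_exp, Complex.mul_re]
    rw [this]
    rw [show (0:ℝ) = ‖a⁻¹‖ * 0 by ring]
    exact (Real.tendsto_exp_atBot.comp
      (tendsto_id.const_mul_atTop_of_neg (neg_neg_iff_pos.mpr ha))).const_mul _ |>.congr (fun _ => rfl)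
  have hcont : ContinuousWithinAt (fun x : ℝ => -a⁻¹ * Complex.exp (-a * x)) (Ici 0) 0 := by
    apply Continuous.continuousWithinAt
    exact continuous_const.mul (Complex.continuous_exp.comp
      (continuous_const.mul Complex.continuous_ofReal))
  have := integral_Ioi_of_hasDerivAt_of_tendsto hcont hderiv (aux_integrableOn_cexp a ha) htend
  rw [this]
  simp [one_div]

lemma aux_integral_rexp (b : ℝ) (hb : 0 < b) :
    ∫ x in Ioi (0:ℝ), Real.exp (-b * x) = 1 / b := by
  have h := aux_integral_cexp (b:ℂ) (by simpa using hb)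
  have h3 : ∀ x:ℝ, Real.exp (-b*x) = (Complex.exp (-(b:ℂ)*x)).re := by
    intro x
    rw [show (-(b:ℂ)*x) = ((-b*x : ℝ):ℂ) by push_cast; ring, ← Complex.ofReal_exp,
      Complex.ofReal_re]
  simp_rw [h3]
  simp_rw [← RCLike.re_to_complex]
  rw [integral_re (aux_integrableOn_cexp (b:ℂ) (by simpa using hb)), h]
  rw [RCLike.re_to_complex]
  rw [show (1/(b:ℂ)) = ((1/b : ℝ):ℂ) by push_cast; ring, Complex.ofReal_re]

lemma aux_sin_eq (θ : ℝ) : ((Real.sin θ : ℝ) : ℂ) =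
    ((Complex.exp ((θ:ℂ)*Complex.I))⁻¹ - Complex.exp ((θ:ℂ)*Complex.I)) * Complex.I / 2 := by
  have h1 : Complex.exp ((θ:ℂ)*Complex.I) = (Real.cos θ : ℂ) + (Real.sin θ : ℂ) * Complex.I := by
    rw [Complex.exp_mul_I, ← Complex.ofReal_cos, ← Complex.ofReal_sin]
  have h2 : (Complex.exp ((θ:ℂ)*Complex.I))⁻¹
      = (Real.cos θ : ℂ) - (Real.sin θ : ℂ) * Complex.I := by
    rw [← Complex.exp_neg, show -((θ:ℂ)*Complex.I) = ((-θ:ℝ):ℂ)*Complex.I by push_cast; ring,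
      Complex.exp_mul_I, ← Complex.ofReal_cos, ← Complex.ofReal_sin]
    push_cast [Real.cos_neg, Real.sin_neg]
    ring
  rw [h2, h1]
  linear_combination (Real.sin θ : ℂ) * Complex.I_sq

lemma aux_cos_eq (θ : ℝ) : ((Real.cos θ : ℝ) : ℂ) =
    (Complex.exp ((θ:ℂ)*Complex.I) + (Complex.exp ((θ:ℂ)*Complex.I))⁻¹) / 2 := by
  have h1 : Complex.exp ((θ:ℂ)*Complex.I) = (Real.cos θ : ℂ) + (Real.sin θ : ℂ) * Complex.I := by
    rw [Complex.exp_mul_I, ← Complex.ofReal_cos, ← Complex.ofReal_sin]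
  have h2 : (Complex.exp ((θ:ℂ)*Complex.I))⁻¹
      = (Real.cos θ : ℂ) - (Real.sin θ : ℂ) * Complex.I := by
    rw [← Complex.exp_neg, show -((θ:ℂ)*Complex.I) = ((-θ:ℝ):ℂ)*Complex.I by push_cast; ring,
      Complex.exp_mul_I, ← Complex.ofReal_cos, ← Complex.ofReal_sin]
    push_cast [Real.cos_neg, Real.sin_neg]
    ring
  rw [h2, h1]; ring

lemma aux_hasSum (t : ℝ) (ht : t ∈ Set.Ioo (0:ℝ) Real.pi) {x : ℝ} (hx : 0 < x) :
    HasSum (fun k : ℕ => ((Real.sin (((k:ℝ)+1)*t) : ℝ) : ℂ) *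
        (((Real.exp (-(k:ℝ)*x) : ℝ) : ℂ) - ((Real.exp (-((k:ℝ)+2)*x) : ℝ) : ℂ)))
      (((Real.sin t : ℝ):ℂ) * ((Real.sinh x : ℝ):ℂ) / ((Real.cosh x - Real.cos t : ℝ) : ℂ)) := by
  set r : ℝ := Real.exp (-x) with hr_def
  set R : ℂ := (r : ℂ) with hR_def
  set a : ℂ := Complex.exp ((t:ℂ)*Complex.I) with ha_def
  have hr0 : 0 < r := Real.exp_pos _
  have hr1 : r < 1 := Real.exp_lt_one_iff.mpr (by linarith)
  have ha0 : a ≠ 0 := Complex.exp_ne_zero _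
  have hR0 : R ≠ 0 := Complex.ofReal_ne_zero.mpr (ne_of_gt hr0)
  have haabs : ‖a‖ = 1 := Complex.norm_exp_ofReal_mul_I t
  have hnR : ‖R‖ = r := by
    rw [hR_def, Complex.norm_real, Real.norm_eq_abs, abs_of_pos hr0]
  have hna : ‖a‖ = 1 := by rw [haabs]
  have hn1 : ‖R * a⁻¹‖ < 1 := by
    rw [norm_mul, norm_inv, hnR, hna]
    simpa using hr1
  have hn2 : ‖R * a‖ < 1 := by
    rw [norm_mul, hnR, hna]
    simpa using hr1
  set c1 : ℂ := Complex.I/2 * a⁻¹ * (1 - R^2) with hc1_def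
  set c2 : ℂ := -(Complex.I/2) * a * (1 - R^2) with hc2_def
  have h1 : HasSum (fun k : ℕ => c1 * (R * a⁻¹)^k) (c1 * (1 - R * a⁻¹)⁻¹) :=
    (hasSum_geometric_of_norm_lt_one hn1).mul_left c1
  have h2 : HasSum (fun k : ℕ => c2 * (R * a)^k) (c2 * (1 - R * a)⁻¹) :=
    (hasSum_geometric_of_norm_lt_one hn2).mul_left c2
  have hsum := h1.add h2
  have hterm : (fun k : ℕ => ((Real.sin (((k:ℝ)+1)*t) : ℝ) : ℂ) *
        (((Real.exp (-(k:ℝ)*x) : ℝ) : ℂ) - ((Real.exp (-((k:ℝ)+2)*x) : ℝ) : ℂ)))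
      = fun k : ℕ => c1 * (R * a⁻¹)^k + c2 * (R * a)^k := by
    funext k
    have hak : Complex.exp (((((k:ℝ)+1)*t : ℝ) : ℂ) * Complex.I) = a^(k+1) := by
      rw [ha_def, ← Complex.exp_nat_mul]
      congr 1
      push_cast
      ring
    have he1 : ((Real.exp (-(k:ℝ)*x) : ℝ) : ℂ) = R^k := by
      rw [show -(k:ℝ)*x = (k:ℕ)*(-x) by push_cast; ring, Real.exp_nat_mul,
        Complex.ofReal_pow]
    have he2 : ((Real.exp (-((k:ℝ)+2)*x) : ℝ) : ℂ) = R^(k+2) := by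
      rw [show -((k:ℝ)+2)*x = ((k+2:ℕ):ℝ)*(-x) by push_cast; ring, Real.exp_nat_mul,
        Complex.ofReal_pow]
    rw [aux_sin_eq, hak, he1, he2, ← inv_pow]
    rw [hc1_def, hc2_def]
    ring
  have hRe : ((Real.exp (-x) : ℝ) : ℂ) = R := by rw [hR_def]
  have hRx : ((Real.exp x : ℝ) : ℂ) = R⁻¹ := by
    rw [hR_def, ← Complex.ofReal_inv]
    norm_cast
    rw [hr_def, Real.exp_neg, inv_inv]
  have hsinh : ((Real.sinh x : ℝ) : ℂ) = (R⁻¹ - R)/2 := by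
    rw [Real.sinh_eq, Complex.ofReal_div, Complex.ofReal_sub, hRx, hRe]
    norm_num
  have hcosh : ((Real.cosh x : ℝ) : ℂ) = (R⁻¹ + R)/2 := by
    rw [Real.cosh_eq, Complex.ofReal_div, Complex.ofReal_add, hRx, hRe]
    norm_num
  have hsint : ((Real.sin t : ℝ) : ℂ) = (a⁻¹ - a) * Complex.I / 2 := aux_sin_eq t
  have hcost : ((Real.cos t : ℝ) : ℂ) = (a + a⁻¹)/2 := aux_cos_eq t
  have hsinpos : 0 < Real.sin t := Real.sin_pos_of_pos_of_lt_pi ht.1 ht.2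
  have hc1' : Real.cos t < 1 := by
    nlinarith [Real.sin_sq_add_cos_sq t, mul_pos hsinpos hsinpos, Real.cos_le_one t,
      Real.neg_one_le_cos t]
  have hdpos : 0 < Real.cosh x - Real.cos t := by
    have := Real.one_le_cosh x
    linarith
  have hden : ((Real.cosh x - Real.cos t : ℝ) : ℂ) ≠ 0 :=
    Complex.ofReal_ne_zero.mpr (ne_of_gt hdpos)
  have h1a : (1 : ℂ) - R * a⁻¹ ≠ 0 := by
    refine sub_ne_zero.mpr fun h => ?_
    rw [← h] at hn1
    simp at hn1
  have h2a : (1 : ℂ) - R * a ≠ 0 := by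
    refine sub_ne_zero.mpr fun h => ?_
    rw [← h] at hn2
    simp at hn2
  have hu : (1 : ℂ) - R * a⁻¹ = (a - R) * a⁻¹ := by field_simp
  have haR : a - R ≠ 0 := fun h => h1a (by rw [hu, h, zero_mul])
  have hinvu : ((1 : ℂ) - R * a⁻¹)⁻¹ = a * (a - R)⁻¹ := by
    rw [hu, mul_inv, inv_inv]
    ring
  have hD : ((Real.cosh x - Real.cos t : ℝ):ℂ) = (a - R) * (1 - R * a) / (2*a*R) := by
    rw [Complex.ofReal_sub, hcosh, hcost]
    field_simp
    ring
  have hval : (((Real.sin t : ℝ):ℂ) * ((Real.sinh x : ℝ):ℂ)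
        / ((Real.cosh x - Real.cos t : ℝ) : ℂ))
      = c1 * (1 - R * a⁻¹)⁻¹ + c2 * (1 - R * a)⁻¹ := by
    rw [hsint, hsinh, hD, hinvu, hc1_def, hc2_def]
    have h2a' : (1:ℂ) - a * R ≠ 0 := by rwa [mul_comm]
    field_simp
    ring
  rw [hterm, hval]
  exact hsum

lemma aux_cancel (A B D st : ℂ) (hst : st ≠ 0) (hD : D ≠ 0) :
    A / st * (st * B / D) = A * B / D := by
  field_simp

lemma aux_cancel2 (p q X : ℂ) (hq : q ≠ 0) : q * (p / q * X) = p * X := by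
  field_simp

/-- for `Re s > 0` and `t ∈ (0, π)`,
`∫₀^∞ e^{-sx} sinh x/(cosh x - cos t) dx
  = (1/sin t) ∑_{k≥1} sin(kt)(1/(s-1+k) - 1/(s+1+k))`;
in particular the integral converges and the series converges. -/
theorem integral_eq_sine_series (s : ℂ) (hs : 0 < s.re) (t : ℝ)
    (ht : t ∈ Set.Ioo (0 : ℝ) Real.pi) :
    MeasureTheory.IntegrableOn
      (fun x : ℝ => Complex.exp (-s * (x : ℂ)) * (Real.sinh x : ℂ) /
        ((Real.cosh x - Real.cos t : ℝ) : ℂ)) (Set.Ioi 0) ∧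
    Summable (fun k : ℕ =>
      ((Real.sin (((k : ℝ) + 1) * t) : ℝ) : ℂ) *
        (1 / (s - 1 + ((k : ℂ) + 1)) - 1 / (s + 1 + ((k : ℂ) + 1)))) ∧
    ∫ x in Set.Ioi (0 : ℝ),
        Complex.exp (-s * (x : ℂ)) * (Real.sinh x : ℂ) /
          ((Real.cosh x - Real.cos t : ℝ) : ℂ)
      = (1 / ((Real.sin t : ℝ) : ℂ)) *
        ∑' k : ℕ, ((Real.sin (((k : ℝ) + 1) * t) : ℝ) : ℂ) *
          (1 / (s - 1 + ((k : ℂ) + 1)) - 1 / (s + 1 + ((k : ℂ) + 1))) := by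
  have hidx1 : ∀ k : ℕ, s - 1 + ((k : ℂ) + 1) = s + k := fun k => by ring
  have hidx2 : ∀ k : ℕ, s + 1 + ((k : ℂ) + 1) = s + k + 2 := fun k => by ring
  simp only [hidx1, hidx2]
  -- basic positivity facts
  have hsinpos : 0 < Real.sin t := Real.sin_pos_of_pos_of_lt_pi ht.1 ht.2
  have hsnz : ((Real.sin t : ℝ) : ℂ) ≠ 0 := Complex.ofReal_ne_zero.mpr (ne_of_gt hsinpos)
  have hc1' : Real.cos t < 1 := by
    nlinarith [Real.sin_sq_add_cos_sq t, mul_pos hsinpos hsinpos, Real.cos_le_one t,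
      Real.neg_one_le_cos t]
  have hdpos : ∀ x : ℝ, 0 < Real.cosh x - Real.cos t := fun x => by
    have := Real.one_le_cosh x; linarith
  have hden : ∀ x : ℝ, ((Real.cosh x - Real.cos t : ℝ) : ℂ) ≠ 0 := fun x =>
    Complex.ofReal_ne_zero.mpr (ne_of_gt (hdpos x))
  have hre1 : ∀ k : ℕ, 0 < (s + (k : ℂ)).re := fun k => by
    have : (0:ℝ) ≤ (k:ℝ) := Nat.cast_nonneg k
    simp only [Complex.add_re, Complex.natCast_re]
    linarith
  have hre2 : ∀ k : ℕ, 0 < (s + (k : ℂ) + 2).re := fun k => by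
    have := hre1 k
    simp only [Complex.add_re] at this ⊢
    norm_num
    linarith
  have hrev1 : ∀ k : ℕ, (s + (k : ℂ)).re = s.re + k := fun k => by
    simp [Complex.add_re]
  have hrev2 : ∀ k : ℕ, (s + (k : ℂ) + 2).re = s.re + k + 2 := fun k => by
    simp [Complex.add_re]
  -- the term functions
  set F : ℕ → ℝ → ℂ := fun k x =>
    (((Real.sin (((k:ℝ)+1)*t) : ℝ) : ℂ) / ((Real.sin t : ℝ) : ℂ)) *
      (Complex.exp (-(s + k) * x) - Complex.exp (-(s + k + 2) * x)) with hF_def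
  have hFint : ∀ k : ℕ, IntegrableOn (F k) (Ioi 0) := fun k =>
    ((aux_integrableOn_cexp _ (hre1 k)).sub (aux_integrableOn_cexp _ (hre2 k))).const_mul _
  have hFval : ∀ k : ℕ, ∫ x in Ioi (0:ℝ), F k x
      = (((Real.sin (((k:ℝ)+1)*t) : ℝ) : ℂ) / ((Real.sin t : ℝ) : ℂ)) *
        (1 / (s + k) - 1 / (s + k + 2)) := fun k => by
    rw [hF_def]
    simp only
    rw [integral_const_mul,
      integral_sub (aux_integrableOn_cexp _ (hre1 k)) (aux_integrableOn_cexp _ (hre2 k)),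
      aux_integral_cexp _ (hre1 k), aux_integral_cexp _ (hre2 k)]
  -- norm bound for the terms
  have hnormF : ∀ k : ℕ, ∀ x ∈ Ioi (0:ℝ), ‖F k x‖ ≤
      (1 / Real.sin t) * (Real.exp (-(s.re + k) * x) - Real.exp (-(s.re + k + 2) * x)) := by
    intro k x hx
    have hxpos : (0:ℝ) < x := hx
    have hfac : Complex.exp (-(s + k + 2) * x)
        = Complex.exp (-(s + k) * x) * ((Real.exp (-2 * x) : ℝ) : ℂ) := by
      rw [Complex.ofReal_exp, ← Complex.exp_add]
      congr 1
      push_cast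
      ring
    have hnormexp : ‖Complex.exp (-(s + k) * (x:ℂ))‖ = Real.exp (-(s.re + k) * x) := by
      rw [Complex.norm_exp]
      congr 1
      simp only [Complex.mul_re, Complex.add_re, Complex.add_im, Complex.ofReal_re,
        Complex.ofReal_im, Complex.neg_re, Complex.neg_im, Complex.natCast_re,
        Complex.natCast_im]
      ring
    have hv1 : Real.exp (-2 * x) ≤ 1 := by
      rw [Real.exp_le_one_iff]
      linarith
    have hsplit : Real.exp (-(s.re + k) * x) - Real.exp (-(s.re + k + 2) * x)
        = Real.exp (-(s.re + k) * x) * (1 - Real.exp (-2 * x)) := by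
      rw [mul_one_sub, ← Real.exp_add]
      ring_nf
    rw [hF_def]
    simp only
    rw [norm_mul, norm_div, hfac, ← mul_one_sub, norm_mul, hnormexp, hsplit]
    have hn1s : ‖(1 : ℂ) - ((Real.exp (-2 * x) : ℝ) : ℂ)‖ = 1 - Real.exp (-2 * x) := by
      rw [show (1 : ℂ) - ((Real.exp (-2 * x) : ℝ) : ℂ) = ((1 - Real.exp (-2 * x) : ℝ) : ℂ) by
        push_cast; ring, Complex.norm_real, Real.norm_eq_abs,
        abs_of_nonneg (by linarith)]
    rw [hn1s]
    have h1 : ‖((Real.sin (((k:ℝ)+1)*t) : ℝ) : ℂ)‖ / ‖((Real.sin t : ℝ) : ℂ)‖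
        ≤ 1 / Real.sin t := by
      rw [Complex.norm_real, Complex.norm_real, Real.norm_eq_abs, Real.norm_eq_abs,
        abs_of_pos hsinpos]
      gcongr
      · exact Real.abs_sin_le_one _
    have h2 : (0:ℝ) ≤ Real.exp (-(s.re + k) * x) * (1 - Real.exp (-2 * x)) := by
      have := Real.exp_pos (-(s.re + k) * x)
      nlinarith
    exact mul_le_mul_of_nonneg_right h1 h2
  -- the real comparison integrals
  have hgint : ∀ k : ℕ, IntegrableOn
      (fun x : ℝ => (1 / Real.sin t) *
        (Real.exp (-(s.re + k) * x) - Real.exp (-(s.re + k + 2) * x))) (Ioi 0) := fun k => by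
    refine Integrable.const_mul ?_ _
    refine Integrable.sub ?_ ?_
    · exact exp_neg_integrableOn_Ioi 0 (by have := hre1 k; rw [hrev1 k] at this; linarith)
    · exact exp_neg_integrableOn_Ioi 0 (by have := hre2 k; rw [hrev2 k] at this; linarith)
  have hnormint : ∀ k : ℕ, ∫ x in Ioi (0:ℝ), ‖F k x‖ ≤
      (1 / Real.sin t) * (1 / (s.re + k) - 1 / (s.re + k + 2)) := by
    intro k
    have hb1 : 0 < s.re + (k:ℝ) := by rw [← hrev1 k]; exact hre1 k
    have hb2 : 0 < s.re + (k:ℝ) + 2 := by linarith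
    calc ∫ x in Ioi (0:ℝ), ‖F k x‖
        ≤ ∫ x in Ioi (0:ℝ), (1 / Real.sin t) *
          (Real.exp (-(s.re + k) * x) - Real.exp (-(s.re + k + 2) * x)) :=
          setIntegral_mono_on ((hFint k).norm) (hgint k) measurableSet_Ioi (hnormF k)
      _ = (1 / Real.sin t) * (1 / (s.re + k) - 1 / (s.re + k + 2)) := by
          rw [integral_const_mul,
            integral_sub (exp_neg_integrableOn_Ioi 0 hb1) (exp_neg_integrableOn_Ioi 0 hb2),
            aux_integral_rexp _ hb1, aux_integral_rexp _ hb2]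
  -- summability of the norm integrals
  set c : ℝ := min s.re 1 with hc_def
  have hc0 : 0 < c := lt_min hs one_pos
  have hck : ∀ k : ℕ, c * ((k:ℝ)+1) ≤ s.re + k := by
    intro k
    have h1 : c ≤ s.re := min_le_left _ _
    have h2 : c ≤ 1 := min_le_right _ _
    have h3 : (0:ℝ) ≤ (k:ℝ) := Nat.cast_nonneg k
    nlinarith
  have hbase : Summable (fun k : ℕ => 1 / ((k:ℝ)+1)^2) := by
    have h := Real.summable_one_div_nat_pow.mpr (one_lt_two : 1 < 2)
    have := (summable_nat_add_iff (f := fun n : ℕ => 1 / (n:ℝ)^2) 1).mpr h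
    refine this.congr fun n => ?_
    push_cast
    ring_nf
  have hMsum : Summable (fun k : ℕ =>
      (1 / Real.sin t) * (2 / c^2) * (1 / ((k:ℝ)+1)^2)) := (hbase.mul_left _)
  have hBle : ∀ k : ℕ, (1 / Real.sin t) * (1 / (s.re + k) - 1 / (s.re + k + 2))
      ≤ (1 / Real.sin t) * (2 / c^2) * (1 / ((k:ℝ)+1)^2) := by
    intro k
    have hb1 : 0 < s.re + (k:ℝ) := by rw [← hrev1 k]; exact hre1 k
    have hb2 : 0 < s.re + (k:ℝ) + 2 := by linarith
    have hckk := hck k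
    have hkp : (0:ℝ) < (k:ℝ)+1 := by positivity
    have key : 1 / (s.re + k) - 1 / (s.re + k + 2) ≤ (2 / c^2) * (1 / ((k:ℝ)+1)^2) := by
      have e1 : 1 / (s.re + k) - 1 / (s.re + k + 2)
          = 2 / ((s.re + k) * (s.re + k + 2)) := by
        field_simp
        ring
      have e2 : (2 / c^2) * (1 / ((k:ℝ)+1)^2) = 2 / ((c*((k:ℝ)+1)) * (c*((k:ℝ)+1))) := by
        field_simp
      rw [e1, e2]
      have hmono : (c*((k:ℝ)+1)) * (c*((k:ℝ)+1)) ≤ (s.re+k) * (s.re+k+2) :=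
        mul_le_mul hckk (by linarith) (by positivity) (by linarith)
      have hposd : (0:ℝ) < (c*((k:ℝ)+1)) * (c*((k:ℝ)+1)) := by positivity
      gcongr
    calc (1 / Real.sin t) * (1 / (s.re + k) - 1 / (s.re + k + 2))
        ≤ (1 / Real.sin t) * ((2 / c^2) * (1 / ((k:ℝ)+1)^2)) := by
          apply mul_le_mul_of_nonneg_left key
          positivity
      _ = (1 / Real.sin t) * (2 / c^2) * (1 / ((k:ℝ)+1)^2) := by ring
  have hsumnorm : Summable (fun k : ℕ => ∫ x in Ioi (0:ℝ), ‖F k x‖) := by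
    refine Summable.of_nonneg_of_le (fun k => integral_nonneg fun x => norm_nonneg _)
      (fun k => le_trans (hnormint k) (hBle k)) hMsum
  -- the key interchange
  have hHS : HasSum (fun k : ℕ => ∫ x in Ioi (0:ℝ), F k x)
      (∫ x in Ioi (0:ℝ), ∑' k : ℕ, F k x) :=
    hasSum_integral_of_summable_integral_norm hFint hsumnorm
  -- pointwise identification of the sum
  have hptw : ∀ x ∈ Ioi (0:ℝ), ∑' k : ℕ, F k x
      = Complex.exp (-s * (x : ℂ)) * (Real.sinh x : ℂ) /
        ((Real.cosh x - Real.cos t : ℝ) : ℂ) := by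
    intro x hx
    have hxpos : (0:ℝ) < x := hx
    have h := (aux_hasSum t ht hxpos).mul_left
      (Complex.exp (-s * (x:ℂ)) / ((Real.sin t : ℝ) : ℂ))
    have heqf : (fun k : ℕ => (Complex.exp (-s * (x:ℂ)) / ((Real.sin t : ℝ) : ℂ)) *
          (((Real.sin (((k:ℝ)+1)*t) : ℝ) : ℂ) *
            (((Real.exp (-(k:ℝ)*x) : ℝ) : ℂ) - ((Real.exp (-((k:ℝ)+2)*x) : ℝ) : ℂ))))
        = fun k : ℕ => F k x := by
      funext k
      rw [hF_def]
      simp only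
      have hea : Complex.exp (-(s + k) * x)
          = Complex.exp (-s * (x:ℂ)) * ((Real.exp (-(k:ℝ)*x) : ℝ) : ℂ) := by
        rw [Complex.ofReal_exp, ← Complex.exp_add]
        congr 1
        push_cast
        ring
      have heb : Complex.exp (-(s + k + 2) * x)
          = Complex.exp (-s * (x:ℂ)) * ((Real.exp (-((k:ℝ)+2)*x) : ℝ) : ℂ) := by
        rw [Complex.ofReal_exp, ← Complex.exp_add]
        congr 1
        push_cast
        ring
      rw [hea, heb]
      ring
    rw [heqf] at h
    rw [h.tsum_eq, aux_cancel _ _ _ _ hsnz (hden x)]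
  -- conjunct 1 : integrability
  have hint1 : IntegrableOn
      (fun x : ℝ => Complex.exp (-s * (x : ℂ)) * (Real.sinh x : ℂ) /
        ((Real.cosh x - Real.cos t : ℝ) : ℂ)) (Ioi 0) := by
    set M0 : ℝ := 1 + 1/(1 - Real.cos t) with hM0_def
    refine Integrable.mono' ((exp_neg_integrableOn_Ioi 0 hs).const_mul M0) ?_ ?_
    · apply Continuous.aestronglyMeasurable
      apply Continuous.div
      · exact (Complex.continuous_exp.comp
          (continuous_const.mul Complex.continuous_ofReal)).mul
          (Complex.continuous_ofReal.comp Real.continuous_sinh)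
      · exact Complex.continuous_ofReal.comp (Real.continuous_cosh.sub continuous_const)
      · exact fun x => hden x
    · rw [ae_restrict_iff' measurableSet_Ioi]
      refine ae_of_all _ fun x hx => ?_
      have hxpos : (0:ℝ) < x := hx
      have hsinhpos : 0 < Real.sinh x := Real.sinh_pos_iff.mpr hxpos
      have hnormexp : ‖Complex.exp (-s * (x:ℂ))‖ = Real.exp (-s.re * x) := by
        rw [Complex.norm_exp]
        congr 1
        simp only [Complex.mul_re, Complex.neg_re, Complex.neg_im, Complex.ofReal_re,
          Complex.ofReal_im]
        ring
      rw [norm_div, norm_mul, hnormexp, Complex.norm_real, Complex.norm_real,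
        Real.norm_eq_abs, Real.norm_eq_abs, abs_of_pos hsinhpos, abs_of_pos (hdpos x),
        div_le_iff₀ (hdpos x)]
      have hu1 : (1/(1 - Real.cos t)) * (1 - Real.cos t) = 1 := by
        rw [one_div, inv_mul_cancel₀ (by linarith : (1 - Real.cos t) ≠ 0)]
      have hp : 0 ≤ (Real.cosh x - 1) * (1/(1 - Real.cos t)) :=
        mul_nonneg (by have := Real.one_le_cosh x; linarith)
          (le_of_lt (div_pos one_pos (by linarith)))
      have hkey : Real.sinh x ≤ M0 * (Real.cosh x - Real.cos t) := by
        have h1 : Real.sinh x ≤ Real.cosh x := le_of_lt (Real.sinh_lt_cosh x)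
        rw [hM0_def]
        nlinarith [hdpos x, Real.one_le_cosh x]
      have hE : 0 ≤ Real.exp (-s.re * x) := le_of_lt (Real.exp_pos _)
      calc Real.exp (-s.re * x) * Real.sinh x
          ≤ Real.exp (-s.re * x) * (M0 * (Real.cosh x - Real.cos t)) :=
            mul_le_mul_of_nonneg_left hkey hE
        _ = M0 * Real.exp (-s.re * x) * (Real.cosh x - Real.cos t) := by ring
  refine ⟨hint1, ?_, ?_⟩
  · -- summability
    refine (hHS.summable.mul_left ((Real.sin t : ℝ):ℂ)).congr fun k => ?_
    rw [hFval k, aux_cancel2 _ _ _ hsnz]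
  · -- the integral identity
    calc ∫ x in Ioi (0:ℝ), Complex.exp (-s * (x : ℂ)) * (Real.sinh x : ℂ) /
          ((Real.cosh x - Real.cos t : ℝ) : ℂ)
        = ∫ x in Ioi (0:ℝ), ∑' k : ℕ, F k x :=
          setIntegral_congr_fun measurableSet_Ioi fun x hx => (hptw x hx).symm
      _ = ∑' k : ℕ, ∫ x in Ioi (0:ℝ), F k x := hHS.tsum_eq.symm
      _ = ∑' k : ℕ, (1 / ((Real.sin t : ℝ):ℂ)) *
            (((Real.sin (((k:ℝ)+1)*t) : ℝ) : ℂ) * (1 / (s + k) - 1 / (s + k + 2))) :=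
          tsum_congr fun k => by rw [hFval k]; ring
      _ = (1 / ((Real.sin t : ℝ):ℂ)) * ∑' k : ℕ,
            ((Real.sin (((k:ℝ)+1)*t) : ℝ) : ℂ) * (1 / (s + k) - 1 / (s + k + 2)) :=
          tsum_mul_left
end
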